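/- arXiv:cond-mat/0308379 — 13 statements merged into one kernel-verified Lean document; each statement's English description precedes it below -/
import Mathlib

section
/- Two-sided Peierls–Bogoliubov inequality: for any Hermitian n×n complex matrices A and B, one has Tr[exp(−A)·(A−B)] / Tr[exp(−A)] ≤ ln Tr[exp(−B)] − ln Tr[exp(−A)] ≤ Tr[exp(−B)·(A−B)] / Tr[exp(−B)], where all the traces appearing are (positive, respectively real) real numbers. -/
open Matrix NormedSpace

section Helpers
open Finset

variable {n : Type*} [Fintype n] [DecidableEq n] [Nonempty n]

set_option linter.unusedSectionVars false

-- Jensen for exp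
lemma exp_sum_le {w x : n → ℝ} (h0 : ∀ i, 0 ≤ w i) (h1 : ∑ i, w i = 1) :
    Real.exp (∑ i, w i * x i) ≤ ∑ i, w i * Real.exp (x i) := by
  have := convexOn_exp.map_sum_le (t := Finset.univ) (w := w) (p := x)
    (fun i _ => h0 i) h1 (fun i _ => Set.mem_univ _)
  simpa [smul_eq_mul] using this

-- scalar key inequality
lemma scalar_key (a t E : n → ℝ) (hE : ∀ i, Real.exp (- t i) ≤ E i) :
    (∑ i, Real.exp (-a i) * (a i - t i)) / (∑ i, Real.exp (-a i)) ≤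
      Real.log (∑ i, E i) - Real.log (∑ i, Real.exp (-a i)) := by
  set Z : ℝ := ∑ i, Real.exp (-a i) with hZ
  have hZpos : 0 < Z := Finset.sum_pos (fun i _ => Real.exp_pos _) Finset.univ_nonempty
  have hw1 : ∑ i, Real.exp (-a i) / Z = 1 := by
    rw [← Finset.sum_div, div_self hZpos.ne']
  have jensen : Real.exp (∑ i, (Real.exp (-a i) / Z) * (a i - t i)) ≤
      ∑ i, (Real.exp (-a i) / Z) * Real.exp (a i - t i) :=
    exp_sum_le (fun i => by positivity) hw1
  have key : Z * Real.exp ((∑ i, Real.exp (-a i) * (a i - t i)) / Z) ≤ ∑ i, E i := by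
    have h2 : ∑ i, (Real.exp (-a i) / Z) * Real.exp (a i - t i) = (∑ i, Real.exp (- t i)) / Z := by
      rw [eq_div_iff hZpos.ne', Finset.sum_mul]
      refine Finset.sum_congr rfl fun i _ => ?_
      rw [div_mul_eq_mul_div, div_mul_eq_mul_div, mul_div_assoc, div_self hZpos.ne', mul_one,
        ← Real.exp_add]
      ring_nf
    have h3 : (∑ i, (Real.exp (-a i) / Z) * (a i - t i)) =
        (∑ i, Real.exp (-a i) * (a i - t i)) / Z := by
      rw [eq_div_iff hZpos.ne', Finset.sum_mul]
      exact Finset.sum_congr rfl fun i _ => by field_simp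
    rw [h3, h2] at jensen
    have h4 : ∑ i, Real.exp (- t i) ≤ ∑ i, E i :=
      Finset.sum_le_sum fun i _ => hE i
    calc Z * Real.exp ((∑ i, Real.exp (-a i) * (a i - t i)) / Z)
        ≤ Z * ((∑ i, Real.exp (- t i)) / Z) := by
          exact mul_le_mul_of_nonneg_left jensen hZpos.le
      _ = ∑ i, Real.exp (- t i) := by field_simp
      _ ≤ ∑ i, E i := h4
  have hEpos : 0 < ∑ i, E i :=
    lt_of_lt_of_le (by positivity) key
  have := Real.log_le_log (by positivity) key
  rw [Real.log_mul hZpos.ne' (Real.exp_pos _).ne', Real.log_exp] at this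
  linarith [this]

set_option linter.unusedSectionVars false

lemma exp_neg_hermitian (A : Matrix n n ℂ) (hA : A.IsHermitian) :
    exp (-A) = (hA.eigenvectorUnitary : Matrix n n ℂ) *
      diagonal (fun i => (Real.exp (-hA.eigenvalues i) : ℂ)) *
      star (hA.eigenvectorUnitary : Matrix n n ℂ) := by
  have h1 : (hA.eigenvectorUnitary : Matrix n n ℂ) *
      star (hA.eigenvectorUnitary : Matrix n n ℂ) = 1 := by
    rw [← Unitary.coe_star]; exact Unitary.coe_mul_star_self _
  have h2 : star (hA.eigenvectorUnitary : Matrix n n ℂ) *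
      (hA.eigenvectorUnitary : Matrix n n ℂ) = 1 := by
    rw [← Unitary.coe_star]; exact Unitary.coe_star_mul_self _
  have hUstar : (hA.eigenvectorUnitary : Matrix n n ℂ)⁻¹ =
      star (hA.eigenvectorUnitary : Matrix n n ℂ) := Matrix.inv_eq_left_inv h2
  have hUnit : IsUnit (hA.eigenvectorUnitary : Matrix n n ℂ) := ⟨⟨_, _, h1, h2⟩, rfl⟩
  have hAeq : -A = (hA.eigenvectorUnitary : Matrix n n ℂ) *
      (-(diagonal (RCLike.ofReal ∘ hA.eigenvalues))) *
      (hA.eigenvectorUnitary : Matrix n n ℂ)⁻¹ := by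
    rw [hUstar, mul_neg, neg_mul]
    conv_lhs => rw [hA.spectral_theorem, Unitary.conjStarAlgAut_apply]
  rw [hAeq, Matrix.exp_conj _ _ hUnit, hUstar]
  congr 2
  have : -(diagonal (RCLike.ofReal ∘ hA.eigenvalues) : Matrix n n ℂ) =
      diagonal (fun i => ((-hA.eigenvalues i : ℝ) : ℂ)) := by
    rw [Matrix.diagonal_neg]
    congr 1
    funext i
    simp [Function.comp]
  rw [this, Matrix.exp_diagonal, Pi.exp_def]
  refine congrArg diagonal (funext fun i => ?_)
  rw [← Complex.exp_eq_exp_ℂ]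
  norm_cast

lemma trace_exp_neg_mul (A C : Matrix n n ℂ) (hA : A.IsHermitian) :
    trace (exp (-A) * C) =
      ∑ i, (Real.exp (-hA.eigenvalues i) : ℂ) *
        ((star (hA.eigenvectorUnitary : Matrix n n ℂ) * C *
          (hA.eigenvectorUnitary : Matrix n n ℂ)) i i) := by
  rw [exp_neg_hermitian A hA]
  set U := (hA.eigenvectorUnitary : Matrix n n ℂ)
  set D := diagonal (fun i => (Real.exp (-hA.eigenvalues i) : ℂ))
  calc trace (U * D * star U * C)
      = trace ((U * D) * (star U * C)) := by rw [Matrix.mul_assoc (U * D)]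
    _ = trace ((star U * C) * (U * D)) := trace_mul_comm _ _
    _ = trace ((star U * C * U) * D) := by rw [Matrix.mul_assoc (star U * C)]
    _ = trace (D * (star U * C * U)) := trace_mul_comm _ _
    _ = ∑ i, (Real.exp (-hA.eigenvalues i) : ℂ) * ((star U * C * U) i i) := by
        simp [Matrix.trace, Matrix.diag, Matrix.diagonal_mul, D]

lemma entry_formula (W : Matrix n n ℂ) (d : n → ℝ) (i : n) :
    ((star W) * diagonal (fun j => (d j : ℂ)) * W) i i
      = ((∑ j, d j * Complex.normSq (W j i) : ℝ) : ℂ) := by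
  push_cast
  rw [Matrix.mul_apply]
  refine Finset.sum_congr rfl fun j _ => ?_
  rw [Matrix.mul_apply, Finset.sum_eq_single j]
  · simp [Matrix.star_apply, Matrix.diagonal_apply_eq, Complex.normSq_eq_conj_mul_self]
    ring
  · intro k _ hk
    simp [Matrix.diagonal_apply_ne _ hk]
  · simp

lemma trace_exp_neg_eq (A : Matrix n n ℂ) (hA : A.IsHermitian) :
    trace (exp (-A)) = ((∑ i, Real.exp (-hA.eigenvalues i) : ℝ) : ℂ) := by
  have h2 : star (hA.eigenvectorUnitary : Matrix n n ℂ) *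
      (hA.eigenvectorUnitary : Matrix n n ℂ) = 1 := by
    rw [← Unitary.coe_star]; exact Unitary.coe_star_mul_self _
  have := trace_exp_neg_mul A 1 hA
  rw [mul_one] at this
  rw [this]
  push_cast
  refine Finset.sum_congr rfl fun i _ => ?_
  rw [mul_one, h2, Matrix.one_apply_eq, mul_one]

lemma one_sided (A B : Matrix n n ℂ) (hA : A.IsHermitian) (hB : B.IsHermitian) :
    (trace (exp (-A) * (A - B))).re / (trace (exp (-A))).re ≤
      Real.log (trace (exp (-B))).re - Real.log (trace (exp (-A))).re := by
  set U : Matrix n n ℂ := (hA.eigenvectorUnitary : Matrix n n ℂ) with hUdef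
  set V : Matrix n n ℂ := (hB.eigenvectorUnitary : Matrix n n ℂ) with hVdef
  set W : Matrix n n ℂ := star V * U with hWdef
  set a : n → ℝ := hA.eigenvalues with hadef
  set b : n → ℝ := hB.eigenvalues with hbdef
  set q : n → n → ℝ := fun j i => Complex.normSq (W j i) with hqdef
  set t : n → ℝ := fun i => ∑ j, b j * q j i with htdef
  set E : n → ℝ := fun i => ∑ j, Real.exp (-b j) * q j i with hEdef
  have hU1 : U * star U = 1 := by
    rw [hUdef, ← Unitary.coe_star]; exact Unitary.coe_mul_star_self _
  have hU2 : star U * U = 1 := by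
    rw [hUdef, ← Unitary.coe_star]; exact Unitary.coe_star_mul_self _
  have hV1 : V * star V = 1 := by
    rw [hVdef, ← Unitary.coe_star]; exact Unitary.coe_mul_star_self _
  have hWs : star W = star U * V := by rw [hWdef, StarMul.star_mul, star_star]
  have hWW : star W * W = 1 := by
    rw [hWs, hWdef, Matrix.mul_assoc, ← Matrix.mul_assoc V, hV1, Matrix.one_mul, hU2]
  have hq1 : ∀ i, ∑ j, q j i = 1 := by
    intro i
    have h := entry_formula W (fun _ => (1 : ℝ)) i
    have hd : diagonal (fun _ : n => ((1 : ℝ) : ℂ)) = (1 : Matrix n n ℂ) := by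
      simp
    rw [hd, Matrix.mul_one, hWW, Matrix.one_apply_eq] at h
    have h' : (∑ j, 1 * Complex.normSq (W j i) : ℝ) = 1 := by
      have := congrArg Complex.re h
      simpa using this.symm
    calc ∑ j, q j i = ∑ j, 1 * Complex.normSq (W j i) :=
          Finset.sum_congr rfl fun j _ => (one_mul _).symm
      _ = 1 := h' 
  -- conjugations
  have hUBU : star U * B * U = star W * diagonal (fun j => (b j : ℂ)) * W := by
    conv_lhs => rw [hB.spectral_theorem, Unitary.conjStarAlgAut_apply]
    rw [hWs, hWdef]
    have : (RCLike.ofReal ∘ hB.eigenvalues : n → ℂ) = fun j => (b j : ℂ) := rfl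
    rw [← this]
    simp only [Matrix.mul_assoc, hVdef]
  have hUeBU : star U * exp (-B) * U =
      star W * diagonal (fun j => (Real.exp (-b j) : ℂ)) * W := by
    rw [exp_neg_hermitian B hB, hWs, hWdef]
    simp only [Matrix.mul_assoc, hVdef, hbdef]
  have hdiagA : star U * A * U = diagonal (fun i => (a i : ℂ)) := by
    have := hA.conjStarAlgAut_star_eigenvectorUnitary
    rw [Unitary.conjStarAlgAut_apply, Unitary.coe_star, star_star, ← hUdef] at this
    rw [this]; rfl
  -- traces
  have htrB : trace (exp (-B)) = ((∑ i, E i : ℝ) : ℂ) := by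
    have hc : trace (exp (-B)) = trace (star U * exp (-B) * U) := by
      rw [trace_mul_cycle, hU1, Matrix.one_mul]
    rw [hc, hUeBU, Matrix.trace]
    have hent : ∀ i, (star W * diagonal (fun j => ((Real.exp (-b j) : ℝ) : ℂ)) * W) i i
        = ((E i : ℝ) : ℂ) := fun i => by
      rw [entry_formula W (fun j => Real.exp (-b j)) i]
    calc ∑ i, (star W * diagonal (fun j => ((Real.exp (-b j) : ℝ) : ℂ)) * W).diag i
        = ∑ i, ((E i : ℝ) : ℂ) := Finset.sum_congr rfl fun i _ => hent i
      _ = ((∑ i, E i : ℝ) : ℂ) := by push_cast; rfl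
  have htrA : trace (exp (-A)) = ((∑ i, Real.exp (-a i) : ℝ) : ℂ) :=
    trace_exp_neg_eq A hA
  have htrAB : trace (exp (-A) * (A - B)) =
      ((∑ i, Real.exp (-a i) * (a i - t i) : ℝ) : ℂ) := by
    rw [trace_exp_neg_mul A (A - B) hA, ← hUdef]
    have hsplit : star U * (A - B) * U = star U * A * U - star U * B * U := by
      rw [mul_sub, sub_mul]
    have hent : ∀ i, (star U * (A - B) * U) i i = ((a i - t i : ℝ) : ℂ) := fun i => by
      rw [hsplit, Matrix.sub_apply, hdiagA, hUBU, entry_formula W b i,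
        Matrix.diagonal_apply_eq]
      have : t i = ∑ j, b j * Complex.normSq (W j i) := rfl
      rw [Complex.ofReal_sub, this]
    calc ∑ i, ((Real.exp (-a i) : ℝ) : ℂ) * (star U * (A - B) * U) i i
        = ∑ i, ((Real.exp (-a i) * (a i - t i) : ℝ) : ℂ) :=
          Finset.sum_congr rfl fun i _ => by rw [hent i]; push_cast; ring
      _ = ((∑ i, Real.exp (-a i) * (a i - t i) : ℝ) : ℂ) := by push_cast; rfl
  -- positivity
  have hEq : ∀ i, Real.exp (-t i) ≤ E i := by
    intro i
    have hj := exp_sum_le (w := fun j => q j i) (x := fun j => -b j)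
      (fun j => Complex.normSq_nonneg _) (hq1 i)
    have h1 : (∑ j, q j i * (-b j)) = -t i := by
      have ht : t i = ∑ j, b j * q j i := rfl
      rw [ht, ← Finset.sum_neg_distrib]
      exact Finset.sum_congr rfl fun j _ => by ring
    have h2 : (∑ j, q j i * Real.exp (-b j)) = E i := by
      rw [hEdef]
      exact Finset.sum_congr rfl fun j _ => by ring
    rw [h1, h2] at hj
    exact hj
  have := scalar_key a t E hEq
  rw [htrA, htrB, htrAB, Complex.ofReal_re, Complex.ofReal_re, Complex.ofReal_re]
  exact this

lemma trace_exp_neg_mul_im (A C : Matrix n n ℂ) (hA : A.IsHermitian) (hC : C.IsHermitian) :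
    (trace (exp (-A) * C)).im = 0 := by
  rw [trace_exp_neg_mul A C hA, Complex.im_sum]
  have hM : (star (hA.eigenvectorUnitary : Matrix n n ℂ) * C *
      (hA.eigenvectorUnitary : Matrix n n ℂ)).IsHermitian := by
    have : (star (hA.eigenvectorUnitary : Matrix n n ℂ) * C *
        (hA.eigenvectorUnitary : Matrix n n ℂ))ᴴ = star (hA.eigenvectorUnitary : Matrix n n ℂ) * C *
        (hA.eigenvectorUnitary : Matrix n n ℂ) := by
      simp [Matrix.conjTranspose_mul, Matrix.mul_assoc, hC.eq, Matrix.star_eq_conjTranspose]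
    exact this
  refine Finset.sum_eq_zero fun i _ => ?_
  have h0 : ((star (hA.eigenvectorUnitary : Matrix n n ℂ) * C *
      (hA.eigenvectorUnitary : Matrix n n ℂ)) i i).im = 0 := by
    rw [← hM.coe_re_apply_self i]
    simp
  rw [Complex.mul_im, h0, Complex.ofReal_im]
  ring


end Helpers

/-- Two-sided Peierls–Bogoliubov inequality for Hermitian matrices. -/
theorem peierls_bogoliubov_two_sided
    {n : Type*} [Fintype n] [DecidableEq n] [Nonempty n]
    (A B : Matrix n n ℂ) (hA : Aᴴ = A) (hB : Bᴴ = B) :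
    0 < (trace (exp (-A))).re ∧
    0 < (trace (exp (-B))).re ∧
    (trace (exp (-A))).im = 0 ∧
    (trace (exp (-B))).im = 0 ∧
    (trace (exp (-A) * (A - B))).im = 0 ∧
    (trace (exp (-B) * (A - B))).im = 0 ∧
    (trace (exp (-A) * (A - B))).re / (trace (exp (-A))).re ≤
      Real.log (trace (exp (-B))).re - Real.log (trace (exp (-A))).re ∧
    Real.log (trace (exp (-B))).re - Real.log (trace (exp (-A))).re ≤
      (trace (exp (-B) * (A - B))).re / (trace (exp (-B))).re := by
  have hA' : A.IsHermitian := hA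
  have hB' : B.IsHermitian := hB
  have hAB : (A - B).IsHermitian := hA'.sub hB'
  have htrA := trace_exp_neg_eq A hA'
  have htrB := trace_exp_neg_eq B hB'
  have hposA : 0 < (trace (exp (-A))).re := by
    rw [htrA, Complex.ofReal_re]
    exact Finset.sum_pos (fun i _ => Real.exp_pos _) Finset.univ_nonempty
  have hposB : 0 < (trace (exp (-B))).re := by
    rw [htrB, Complex.ofReal_re]
    exact Finset.sum_pos (fun i _ => Real.exp_pos _) Finset.univ_nonempty
  have himA : (trace (exp (-A))).im = 0 := by rw [htrA, Complex.ofReal_im]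
  have himB : (trace (exp (-B))).im = 0 := by rw [htrB, Complex.ofReal_im]
  have him1 : (trace (exp (-A) * (A - B))).im = 0 :=
    trace_exp_neg_mul_im A (A - B) hA' hAB
  have him2 : (trace (exp (-B) * (A - B))).im = 0 :=
    trace_exp_neg_mul_im B (A - B) hB' hAB
  have hineq1 := one_sided A B hA' hB'
  have hineq2 : Real.log (trace (exp (-B))).re - Real.log (trace (exp (-A))).re ≤
      (trace (exp (-B) * (A - B))).re / (trace (exp (-B))).re := by
    have h := one_sided B A hB' hA'
    have hneg : trace (exp (-B) * (B - A)) = -trace (exp (-B) * (A - B)) := by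
      rw [show B - A = -(A - B) by rw [neg_sub], mul_neg, trace_neg]
    rw [hneg, Complex.neg_re, neg_div] at h
    linarith
  exact ⟨hposA, hposB, himA, himB, him1, him2, hineq1, hineq2⟩
end

section
/- Strict Peierls–Bogoliubov inequality: for Hermitian n×n complex matrices A and B such that A − B is not a real scalar multiple of the identity matrix, both inequalities are strict: Tr[exp(−A)·(A−B)] / Tr[exp(−A)] < ln Tr[exp(−B)] − ln Tr[exp(−A)] < Tr[exp(−B)·(A−B)] / Tr[exp(−B)]. -/
open Matrix NormedSpace

open Finset

set_option linter.unusedSectionVars false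
set_option linter.unusedVariables false
set_option linter.unusedTactic false

lemma jensen_exp_le {ι : Type*} (t : Finset ι) (w x : ι → ℝ)
    (h0 : ∀ i ∈ t, 0 ≤ w i) (h1 : ∑ i ∈ t, w i = 1) :
    Real.exp (∑ i ∈ t, w i * x i) ≤ ∑ i ∈ t, w i * Real.exp (x i) := by
  simpa [smul_eq_mul] using
    convexOn_exp.map_sum_le h0 h1 (fun i _ => Set.mem_univ _)

lemma jensen_exp_lt {ι : Type*} [DecidableEq ι] (t : Finset ι) (w x : ι → ℝ)
    (h0 : ∀ i ∈ t, 0 ≤ w i) (h1 : ∑ i ∈ t, w i = 1)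
    (hne : ∃ j ∈ t, ∃ k ∈ t, w j ≠ 0 ∧ w k ≠ 0 ∧ x j ≠ x k) :
    Real.exp (∑ i ∈ t, w i * x i) < ∑ i ∈ t, w i * Real.exp (x i) := by
  classical
  set t' := t.filter (fun i => w i ≠ 0) with ht'
  have hsub : t' ⊆ t := filter_subset _ _
  have e1 : ∑ i ∈ t', w i * x i = ∑ i ∈ t, w i * x i := by
    apply Finset.sum_filter_of_ne
    intro i _ h hw
    exact h (by simp [hw])
  have e2 : ∑ i ∈ t', w i * Real.exp (x i) = ∑ i ∈ t, w i * Real.exp (x i) := by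
    apply Finset.sum_filter_of_ne
    intro i _ h hw
    exact h (by simp [hw])
  have e3 : ∑ i ∈ t', w i = 1 := by
    rw [← h1]
    apply Finset.sum_filter_of_ne
    intro i _ h hw
    exact h hw
  obtain ⟨j, hj, k, hk, hwj, hwk, hx⟩ := hne
  have := strictConvexOn_exp.map_sum_lt (t := t') (w := w) (p := x)
    (fun i hi => lt_of_le_of_ne (h0 i (hsub hi)) (Ne.symm (mem_filter.mp hi).2))
    e3 (fun i _ => Set.mem_univ _)
    ⟨j, by simp [ht', hj, hwj], k, by simp [ht', hk, hwk], hx⟩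
  rw [← e1, ← e2]
  simpa [smul_eq_mul] using this


section logsum
variable {n : Type*} [Fintype n] [DecidableEq n] [Nonempty n] (d c : n → ℝ)

lemma Spos : (0:ℝ) < ∑ i, Real.exp (d i) :=
  Finset.sum_pos (fun i _ => Real.exp_pos _) univ_nonempty

lemma wfacts : (∀ i ∈ univ, 0 ≤ (fun i => Real.exp (d i) / ∑ j, Real.exp (d j)) i) ∧
    ∑ i, Real.exp (d i) / ∑ j, Real.exp (d j) = 1 := by
  constructor
  · intro i _
    positivity
  · rw [← Finset.sum_div, div_self (Spos d).ne']

lemma key_sum_eq :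
    ∑ i, (Real.exp (d i) / ∑ j, Real.exp (d j)) * Real.exp (c i)
      = (∑ i, Real.exp (d i + c i)) / ∑ j, Real.exp (d j) := by
  rw [Finset.sum_div]
  refine Finset.sum_congr rfl fun i _ => ?_
  rw [Real.exp_add, div_mul_eq_mul_div]

lemma logsum_le :
    (∑ i, Real.exp (d i) * c i) / (∑ i, Real.exp (d i)) ≤
      Real.log (∑ i, Real.exp (d i + c i)) - Real.log (∑ i, Real.exp (d i)) := by
  have hS := Spos d
  have h := jensen_exp_le univ (fun i => Real.exp (d i) / ∑ j, Real.exp (d j)) c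
    (wfacts d).1 (wfacts d).2
  rw [key_sum_eq] at h
  have hpos : (0:ℝ) < ∑ i, Real.exp (d i + c i) :=
    Finset.sum_pos (fun i _ => Real.exp_pos _) univ_nonempty
  have := Real.log_le_log (Real.exp_pos _) h
  rw [Real.log_exp, Real.log_div hpos.ne' hS.ne'] at this
  calc (∑ i, Real.exp (d i) * c i) / (∑ i, Real.exp (d i))
      = ∑ i, (Real.exp (d i) / ∑ j, Real.exp (d j)) * c i := by
        rw [Finset.sum_div]
        exact Finset.sum_congr rfl fun i _ => by ring
    _ ≤ _ := this

lemma logsum_lt (hne : ∃ i j : n, c i ≠ c j) :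
    (∑ i, Real.exp (d i) * c i) / (∑ i, Real.exp (d i)) <
      Real.log (∑ i, Real.exp (d i + c i)) - Real.log (∑ i, Real.exp (d i)) := by
  have hS := Spos d
  obtain ⟨j, k, hjk⟩ := hne
  have h := jensen_exp_lt univ (fun i => Real.exp (d i) / ∑ j, Real.exp (d j)) c
    (wfacts d).1 (wfacts d).2
    ⟨j, mem_univ _, k, mem_univ _, by positivity, by positivity, hjk⟩
  rw [key_sum_eq] at h
  have hpos : (0:ℝ) < ∑ i, Real.exp (d i + c i) :=
    Finset.sum_pos (fun i _ => Real.exp_pos _) univ_nonempty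
  have := Real.log_lt_log (Real.exp_pos _) h
  rw [Real.log_exp, Real.log_div hpos.ne' hS.ne'] at this
  calc (∑ i, Real.exp (d i) * c i) / (∑ i, Real.exp (d i))
      = ∑ i, (Real.exp (d i) / ∑ j, Real.exp (d j)) * c i := by
        rw [Finset.sum_div]
        exact Finset.sum_congr rfl fun i _ => by ring
    _ < _ := this
end logsum


section peierls
variable {n : Type*} [Fintype n] [DecidableEq n]

lemma exp_unitary_conj (U : Matrix n n ℂ) (h1 : U * star U = 1) (h2 : star U * U = 1)
    (X : Matrix n n ℂ) : exp (U * X * star U) = U * exp X * star U :=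
  Matrix.exp_units_conj (⟨U, star U, h1, h2⟩ : (Matrix n n ℂ)ˣ) X

lemma conj_entry (V : Matrix n n ℂ) (e : n → ℂ) (i k : n) :
    (V * diagonal e * Vᴴ) i k = ∑ j, V i j * e j * star (V k j) := by
  simp only [Matrix.mul_apply, Matrix.conjTranspose_apply, Matrix.star_apply]
  refine Finset.sum_congr rfl fun j _ => ?_
  rw [Finset.sum_eq_single j (by intro b _ hb; simp [Matrix.diagonal_apply_ne _ hb])
    (by intro h; exact absurd (mem_univ j) h)]
  simp

lemma peierls_main (M : Matrix n n ℂ) (hM : M.IsHermitian) (i : n) :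
    Real.exp ((M i i).re) ≤ ((exp M) i i).re ∧
      (∀ k, k ≠ i → M i k ≠ 0 → Real.exp ((M i i).re) < ((exp M) i i).re) := by
  set V : Matrix n n ℂ := (hM.eigenvectorUnitary : Matrix n n ℂ) with hV
  set μ : n → ℝ := hM.eigenvalues with hμ
  have h1 : V * star V = 1 := Matrix.mem_unitaryGroup_iff.mp hM.eigenvectorUnitary.2
  have h2 : star V * V = 1 := Matrix.mem_unitaryGroup_iff'.mp hM.eigenvectorUnitary.2
  have hspec : M = V * diagonal (fun j => (μ j : ℂ)) * Vᴴ := by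
    simpa [Function.comp_def, Matrix.star_eq_conjTranspose] using hM.spectral_theorem
  have hexp : exp M = V * diagonal (fun j => (Real.exp (μ j) : ℂ)) * Vᴴ := by
    conv_lhs => rw [hspec]
    rw [show Vᴴ = star V from rfl, exp_unitary_conj V h1 h2, Matrix.exp_diagonal]
    congr 2
    funext j
    simp [Pi.exp_def, ← Complex.exp_eq_exp_ℂ, Complex.ofReal_exp]
  set w : n → ℝ := fun j => Complex.normSq (V i j) with hw
  have hterm : ∀ (e : n → ℝ) j, (V i j * (e j : ℂ) * star (V i j)).re = w j * e j := by
    intro e j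
    have : V i j * (e j : ℂ) * star (V i j) = ((Complex.normSq (V i j) * e j : ℝ) : ℂ) := by
      push_cast
      rw [← Complex.mul_conj]
      ring_nf
      rfl
    rw [this, Complex.ofReal_re, mul_comm]
  have hsum1 : ∑ j, w j = 1 := by
    have := congrArg (fun X => (X i i).re) h1
    simp only [Matrix.mul_apply, Matrix.one_apply_eq, Complex.one_re] at this
    rw [← this, Complex.re_sum]
    refine Finset.sum_congr rfl fun j _ => ?_
    have := hterm (fun _ => (1:ℝ)) j
    simpa [Matrix.star_apply, Matrix.conjTranspose_apply] using this.symm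
  have hMii : (M i i).re = ∑ j, w j * μ j := by
    conv_lhs => rw [hspec]
    rw [conj_entry, Complex.re_sum]
    exact Finset.sum_congr rfl fun j _ => hterm μ j
  have hEii : ((exp M) i i).re = ∑ j, w j * Real.exp (μ j) := by
    rw [hexp, conj_entry, Complex.re_sum]
    exact Finset.sum_congr rfl fun j _ => hterm (fun j => Real.exp (μ j)) j
  have h0 : ∀ j ∈ Finset.univ (α := n), 0 ≤ w j := fun j _ => Complex.normSq_nonneg _
  constructor
  · rw [hMii, hEii]
    exact jensen_exp_le univ w μ h0 hsum1
  · intro k hk hMik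
    rw [hMii, hEii]
    apply jensen_exp_lt univ w μ h0 hsum1
    by_contra hcon
    push_neg at hcon
    -- hcon : ∀ j ∈ univ, ∀ j' ∈ univ, w j ≠ 0 → w j' ≠ 0 → μ j = μ j'
    obtain ⟨j0, hj0⟩ : ∃ j, w j ≠ 0 := by
      by_contra hall
      push_neg at hall
      rw [Finset.sum_congr rfl (fun j _ => hall j)] at hsum1
      simp at hsum1
    apply hMik
    have : M i k = ((μ j0 : ℂ)) * ((V * star V) i k) := by
      conv_lhs => rw [hspec]
      rw [conj_entry, Matrix.mul_apply, Finset.mul_sum]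
      refine Finset.sum_congr rfl fun j _ => ?_
      by_cases hvj : V i j = 0
      · simp [hvj]
      · have : μ j = μ j0 := hcon j (mem_univ _) j0 (mem_univ _)
          (by simpa [hw, Complex.normSq_eq_zero] using hvj) hj0
        rw [this]
        simp [Matrix.star_apply, Matrix.conjTranspose_apply]
        ring
    rw [this, h1, Matrix.one_apply_ne (fun h => hk h.symm)]
    simp
end peierls


lemma keyDiag {n : Type*} [Fintype n] [DecidableEq n] [Nonempty n]
    (d : n → ℝ) (C : Matrix n n ℂ) (hC : C.IsHermitian)
    (hC' : ∀ c : ℝ, C ≠ (c : ℂ) • (1 : Matrix n n ℂ)) :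
    (trace (exp (diagonal (fun i => (d i : ℂ))) * C)).re /
        (trace (exp (diagonal (fun i => (d i : ℂ))))).re <
      Real.log (trace (exp (diagonal (fun i => (d i : ℂ)) + C))).re -
        Real.log (trace (exp (diagonal (fun i => (d i : ℂ))))).re := by
  set D : Matrix n n ℂ := diagonal (fun i => (d i : ℂ)) with hD
  have hexpD : exp D = diagonal (fun i => (Real.exp (d i) : ℂ)) := by
    rw [hD, Matrix.exp_diagonal]
    congr 1
    funext j
    simp [Pi.exp_def, ← Complex.exp_eq_exp_ℂ, Complex.ofReal_exp]
  have hS : (trace (exp D)).re = ∑ i, Real.exp (d i) := by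
    rw [hexpD, Matrix.trace_diagonal, Complex.re_sum]
    exact Finset.sum_congr rfl fun i _ => Complex.ofReal_re _
  set c : n → ℝ := fun i => (C i i).re with hc
  have hCdiag : ∀ i, C i i = (c i : ℂ) := by
    intro i
    have h := congrFun (congrFun hC i) i
    rw [Matrix.conjTranspose_apply] at h
    exact (Complex.conj_eq_iff_re.mp h).symm
  have hnum : (trace (exp D * C)).re = ∑ i, Real.exp (d i) * c i := by
    rw [hexpD, Matrix.trace, Complex.re_sum]
    refine Finset.sum_congr rfl fun i _ => ?_
    rw [Matrix.diag_apply, Matrix.diagonal_mul, hCdiag, ← Complex.ofReal_mul,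
      Complex.ofReal_re]
  have hMherm : (D + C).IsHermitian := by
    have : Dᴴ = D := by
      rw [hD, Matrix.diagonal_conjTranspose,
        show (star fun i => ((d i : ℂ))) = fun i => ((d i : ℂ)) from
          funext fun i => Complex.conj_ofReal _]
    exact Matrix.IsHermitian.add this hC
  have hMdiag : ∀ i, ((D + C) i i).re = d i + c i := by
    intro i
    simp [hD, Matrix.add_apply, Matrix.diagonal_apply_eq, hc]
  have hTr : (trace (exp (D + C))).re = ∑ i, ((exp (D + C)) i i).re := by
    rw [Matrix.trace, Complex.re_sum]
    rfl
  have hple : ∀ i, Real.exp (d i + c i) ≤ ((exp (D + C)) i i).re := by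
    intro i
    have h := (peierls_main _ hMherm i).1
    rwa [hMdiag] at h
  have hT_lb : ∑ i, Real.exp (d i + c i) ≤ (trace (exp (D + C))).re := by
    rw [hTr]
    exact Finset.sum_le_sum fun i _ => hple i
  have hsumpos : (0:ℝ) < ∑ i, Real.exp (d i + c i) :=
    Finset.sum_pos (fun i _ => Real.exp_pos _) univ_nonempty
  rw [hS, hnum]
  by_cases hcc : ∀ i j : n, c i = c j
  · -- constant diagonal, use strict Peierls
    set cc : ℝ := c (Classical.arbitrary n) with hcc0
    obtain ⟨i, k, hik⟩ : ∃ i k, C i k ≠ ((cc : ℂ) • (1 : Matrix n n ℂ)) i k := by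
      by_contra h
      push_neg at h
      exact hC' cc (by ext i k; exact h i k)
    have hne : i ≠ k := by
      intro h
      subst h
      apply hik
      rw [hCdiag i, Matrix.smul_apply, Matrix.one_apply_eq, smul_eq_mul, mul_one, hcc0,
        hcc i (Classical.arbitrary n)]
    have hC0 : C i k ≠ 0 := by
      intro h
      apply hik
      rw [h, Matrix.smul_apply, Matrix.one_apply_ne hne, smul_zero]
    have hM0 : (D + C) i k ≠ 0 := by
      rw [Matrix.add_apply, hD, Matrix.diagonal_apply_ne _ hne, zero_add]
      exact hC0
    have hstrict : Real.exp (d i + c i) < ((exp (D + C)) i i).re := by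
      have h := (peierls_main _ hMherm i).2 k (Ne.symm hne) hM0
      rwa [hMdiag] at h
    have hTlt : ∑ j, Real.exp (d j + c j) < (trace (exp (D + C))).re := by
      rw [hTr]
      exact Finset.sum_lt_sum (fun j _ => hple j) ⟨i, mem_univ _, hstrict⟩
    calc (∑ i, Real.exp (d i) * c i) / (∑ i, Real.exp (d i))
        ≤ Real.log (∑ i, Real.exp (d i + c i)) - Real.log (∑ i, Real.exp (d i)) :=
          logsum_le d c
      _ < _ := by
          have := Real.log_lt_log hsumpos hTlt
          linarith
  · push_neg at hcc
    calc (∑ i, Real.exp (d i) * c i) / (∑ i, Real.exp (d i))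
        < Real.log (∑ i, Real.exp (d i + c i)) - Real.log (∑ i, Real.exp (d i)) :=
          logsum_lt d c hcc
      _ ≤ _ := by
          have := Real.log_le_log hsumpos hT_lb
          linarith


lemma trace_conj_mul {n : Type*} [Fintype n] [DecidableEq n]
    (V E C : Matrix n n ℂ) :
    trace (V * E * star V * C) = trace (E * (star V * C * V)) := by
  rw [Matrix.trace_mul_cycle (V * E) (star V) C, ← Matrix.mul_assoc,
    Matrix.trace_mul_cycle (C * V) E (star V), ← Matrix.mul_assoc,
    Matrix.trace_mul_comm]

lemma key {n : Type*} [Fintype n] [DecidableEq n] [Nonempty n]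
    (A C : Matrix n n ℂ) (hA : A.IsHermitian) (hC : C.IsHermitian)
    (hC' : ∀ c : ℝ, C ≠ (c : ℂ) • (1 : Matrix n n ℂ)) :
    (trace (exp A * C)).re / (trace (exp A)).re <
      Real.log (trace (exp (A + C))).re - Real.log (trace (exp A)).re := by
  set V : Matrix n n ℂ := (hA.eigenvectorUnitary : Matrix n n ℂ) with hV
  have h1 : V * star V = 1 := Matrix.mem_unitaryGroup_iff.mp hA.eigenvectorUnitary.2
  have h2 : star V * V = 1 := Matrix.mem_unitaryGroup_iff'.mp hA.eigenvectorUnitary.2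
  set d : n → ℝ := hA.eigenvalues with hd
  set D : Matrix n n ℂ := diagonal (fun i => (d i : ℂ)) with hD
  have hspec : A = V * D * star V := by
    simpa [hD, Function.comp_def, Matrix.star_eq_conjTranspose] using hA.spectral_theorem
  set C' : Matrix n n ℂ := star V * C * V with hC'def
  have f1 : exp A = V * exp D * star V := by
    conv_lhs => rw [hspec]
    exact exp_unitary_conj V h1 h2 D
  have f2 : trace (exp A) = trace (exp D) := by
    rw [f1, Matrix.trace_mul_cycle, h2, Matrix.one_mul]
  have f3 : trace (exp A * C) = trace (exp D * C') := by
    rw [f1, trace_conj_mul]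
  have f4 : A + C = V * (D + C') * star V := by
    rw [Matrix.mul_add, Matrix.add_mul, ← hspec, hC'def]
    congr 1
    rw [← Matrix.mul_assoc, ← Matrix.mul_assoc, h1, Matrix.one_mul, Matrix.mul_assoc, h1,
      Matrix.mul_one]
  have f5 : trace (exp (A + C)) = trace (exp (D + C')) := by
    rw [f4, exp_unitary_conj V h1 h2, Matrix.trace_mul_cycle, h2, Matrix.one_mul]
  have f6 : C'.IsHermitian := by
    show C'ᴴ = C'
    rw [hC'def, Matrix.conjTranspose_mul, Matrix.conjTranspose_mul,
      show (star V)ᴴ = V from conjTranspose_conjTranspose V, hC.eq, Matrix.mul_assoc,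
      Matrix.star_eq_conjTranspose]
  have f7 : ∀ c : ℝ, C' ≠ (c : ℂ) • (1 : Matrix n n ℂ) := by
    intro c h
    apply hC' c
    have : C = V * C' * star V := by
      rw [hC'def, ← Matrix.mul_assoc, ← Matrix.mul_assoc, h1, Matrix.one_mul,
        Matrix.mul_assoc, h1, Matrix.mul_one]
    rw [this, h, Matrix.mul_smul, Matrix.mul_one, Matrix.smul_mul, h1]
  rw [f2, f3, f5]
  exact keyDiag d C' f6 f7

/-- Strict Peierls–Bogoliubov inequality: if `A - B` is not a real multiple of the
identity, both inequalities are strict. -/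
theorem peierls_bogoliubov_strict
    {n : Type*} [Fintype n] [DecidableEq n] [Nonempty n]
    (A B : Matrix n n ℂ) (hA : Aᴴ = A) (hB : Bᴴ = B)
    (hAB : ∀ c : ℝ, A - B ≠ (c : ℂ) • (1 : Matrix n n ℂ)) :
    (trace (exp (-A) * (A - B))).re / (trace (exp (-A))).re <
      Real.log (trace (exp (-B))).re - Real.log (trace (exp (-A))).re ∧
    Real.log (trace (exp (-B))).re - Real.log (trace (exp (-A))).re <
      (trace (exp (-B) * (A - B))).re / (trace (exp (-B))).re := by
  have hA' : (-A).IsHermitian := by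
    show (-A)ᴴ = -A
    rw [Matrix.conjTranspose_neg, hA]
  have hB' : (-B).IsHermitian := by
    show (-B)ᴴ = -B
    rw [Matrix.conjTranspose_neg, hB]
  have hAB' : (A - B).IsHermitian := by
    show (A - B)ᴴ = A - B
    rw [Matrix.conjTranspose_sub, hA, hB]
  have hBA' : (B - A).IsHermitian := by
    show (B - A)ᴴ = B - A
    rw [Matrix.conjTranspose_sub, hA, hB]
  have hBA : ∀ c : ℝ, B - A ≠ (c : ℂ) • (1 : Matrix n n ℂ) := by
    intro c h
    apply hAB (-c)
    rw [show A - B = -(B - A) from (neg_sub B A).symm, h, Complex.ofReal_neg, neg_smul]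
  constructor
  · have h := key (-A) (A - B) hA' hAB' hAB
    rwa [show -A + (A - B) = -B by abel] at h
  · have h := key (-B) (B - A) hB' hBA' hBA
    rw [show -B + (B - A) = -A by abel] at h
    have e1 : (trace (exp (-B) * (B - A))).re = -(trace (exp (-B) * (A - B))).re := by
      rw [show B - A = -(A - B) from (neg_sub A B).symm, Matrix.mul_neg, Matrix.trace_neg,
        Complex.neg_re]
    rw [e1, neg_div] at h
    linarith
end

section
/- Entropy inequality for normalized entropy operators: let R and S be Hermitian n×n complex matrices with Tr[exp(−R)] = 1 and Tr[exp(−S)] = 1. Then the real number Tr[exp(−R)·S] satisfies Tr[exp(−R)·S] ≥ Tr[exp(−R)·R], with equality if and only if R = S. (Here exp(−R) is a density matrix, Tr[exp(−R)·R] is its Gibbs entropy, and Tr[exp(−R)·S] is the average of the entropy operator S in the state exp(−R).) -/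
open Matrix NormedSpace

private lemma aux_key (r s : ℝ) :
    0 ≤ Real.exp (-r) * (s - r) - Real.exp (-r) + Real.exp (-s) := by
  have h := Real.add_one_le_exp (r - s)
  have h2 : Real.exp (-s) = Real.exp (-r) * Real.exp (r - s) := by
    rw [← Real.exp_add]; ring_nf
  nlinarith [Real.exp_pos (-r)]

private lemma aux_eq (r s : ℝ)
    (h : Real.exp (-r) * (s - r) - Real.exp (-r) + Real.exp (-s) = 0) : r = s := by
  by_contra hne
  have h1 := Real.add_one_lt_exp (x := r - s) (by intro hc; apply hne; linarith)
  have h2 : Real.exp (-s) = Real.exp (-r) * Real.exp (r - s) := by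
    rw [← Real.exp_add]; ring_nf
  nlinarith [Real.exp_pos (-r)]

private lemma aux_trace_formula {n : Type*} [Fintype n] [DecidableEq n]
    (U V : Matrix n n ℂ) (d e : n → ℂ) :
    trace ((U * diagonal d * Uᴴ) * (V * diagonal e * Vᴴ)) =
      ∑ i, ∑ j, d i * e j * (Complex.normSq ((Uᴴ * V) i j) : ℂ) := by
  have h1 : (U * diagonal d * Uᴴ) * (V * diagonal e * Vᴴ)
      = U * (diagonal d * Uᴴ * V * diagonal e * Vᴴ) := by
    simp only [mul_assoc]
  rw [h1, trace_mul_comm]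
  have h2 : diagonal d * Uᴴ * V * diagonal e * Vᴴ * U
      = diagonal d * (Uᴴ * V) * diagonal e * (Uᴴ * V)ᴴ := by
    simp only [conjTranspose_mul, conjTranspose_conjTranspose, mul_assoc]
  rw [h2]
  generalize (Uᴴ * V) = W
  have h3 : diagonal d * W * diagonal e = Matrix.of (fun i j => d i * W i j * e j) := by
    ext i j
    simp [diagonal_mul, mul_diagonal]
  rw [h3]
  simp only [Matrix.trace, diag_apply, mul_apply, conjTranspose_apply, of_apply]
  refine Finset.sum_congr rfl fun i _ => Finset.sum_congr rfl fun j _ => ?_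
  rw [← Complex.mul_conj (W i j)]
  simp only [Complex.star_def]
  ring

private lemma aux_exp_conj {n : Type*} [Fintype n] [DecidableEq n]
    (U : Matrix n n ℂ) (hU : U * Uᴴ = 1) (hU' : Uᴴ * U = 1) (v : n → ℝ) :
    exp (U * diagonal (fun i => (v i : ℂ)) * Uᴴ)
      = U * diagonal (fun i => (Real.exp (v i) : ℂ)) * Uᴴ := by
  have hinv : U⁻¹ = Uᴴ := inv_eq_right_inv hU
  have hunit : IsUnit U := ⟨⟨U, Uᴴ, hU, hU'⟩, rfl⟩
  rw [← hinv, Matrix.exp_conj U _ hunit, Matrix.exp_diagonal]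
  have : exp (fun i => ((v i : ℂ))) = fun i => (Real.exp (v i) : ℂ) := by
    rw [Pi.exp_def]
    funext i
    rw [← Complex.exp_eq_exp_ℂ, ← Complex.ofReal_exp]
  rw [this]

/-- Entropy inequality for normalized entropy operators: the average of the entropy
operator `S` in the state `exp (-R)` is at least the Gibbs entropy of `exp (-R)`,
with equality iff `R = S`. -/
theorem entropy_inequality_normalized
    {n : Type*} [Fintype n] [DecidableEq n] [Nonempty n]
    (R S : Matrix n n ℂ) (hR : Rᴴ = R) (hS : Sᴴ = S)
    (hRnorm : trace (exp (-R)) = 1) (hSnorm : trace (exp (-S)) = 1) :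
    (trace (exp (-R) * S)).im = 0 ∧
    (trace (exp (-R) * R)).re ≤ (trace (exp (-R) * S)).re ∧
    ((trace (exp (-R) * S)).re = (trace (exp (-R) * R)).re ↔ R = S) := by
  have hR' : R.IsHermitian := hR
  have hS' : S.IsHermitian := hS
  set r : n → ℝ := hR'.eigenvalues with hrdef
  set s : n → ℝ := hS'.eigenvalues with hsdef
  set U : Matrix n n ℂ := (hR'.eigenvectorUnitary : Matrix n n ℂ) with hUdef
  set V : Matrix n n ℂ := (hS'.eigenvectorUnitary : Matrix n n ℂ) with hVdef
  have hU1 : U * Uᴴ = 1 := by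
    have h := hR'.eigenvectorUnitary.2
    rw [Matrix.mem_unitaryGroup_iff] at h
    simpa [Matrix.star_eq_conjTranspose] using h
  have hU2 : Uᴴ * U = 1 := by
    have h := hR'.eigenvectorUnitary.2
    rw [Matrix.mem_unitaryGroup_iff'] at h
    simpa [Matrix.star_eq_conjTranspose] using h
  have hV1 : V * Vᴴ = 1 := by
    have h := hS'.eigenvectorUnitary.2
    rw [Matrix.mem_unitaryGroup_iff] at h
    simpa [Matrix.star_eq_conjTranspose] using h
  have hV2 : Vᴴ * V = 1 := by
    have h := hS'.eigenvectorUnitary.2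
    rw [Matrix.mem_unitaryGroup_iff'] at h
    simpa [Matrix.star_eq_conjTranspose] using h
  have hRspec : R = U * diagonal (fun i => (r i : ℂ)) * Uᴴ := hR'.spectral_theorem
  have hSspec : S = V * diagonal (fun j => (s j : ℂ)) * Vᴴ := hS'.spectral_theorem
  have hnegR : -R = U * diagonal (fun i => ((-r i : ℝ) : ℂ)) * Uᴴ := by
    rw [hRspec]
    have h : (fun i => ((-r i : ℝ) : ℂ)) = fun i => -((r i : ℝ) : ℂ) := by
      funext i; push_cast; ring
    rw [h, ← diagonal_neg, Matrix.mul_neg, Matrix.neg_mul]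
  have hnegS : -S = V * diagonal (fun j => ((-s j : ℝ) : ℂ)) * Vᴴ := by
    rw [hSspec]
    have h : (fun j => ((-s j : ℝ) : ℂ)) = fun j => -((s j : ℝ) : ℂ) := by
      funext j; push_cast; ring
    rw [h, ← diagonal_neg, Matrix.mul_neg, Matrix.neg_mul]
  have hexpR : exp (-R) = U * diagonal (fun i => (Real.exp (-r i) : ℂ)) * Uᴴ := by
    rw [hnegR, aux_exp_conj U hU1 hU2]
  have hexpS : exp (-S) = V * diagonal (fun j => (Real.exp (-s j) : ℂ)) * Vᴴ := by
    rw [hnegS, aux_exp_conj V hV1 hV2]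
  set W : Matrix n n ℂ := Uᴴ * V with hWdef
  set p : n → n → ℝ := fun i j => Complex.normSq (W i j) with hpdef
  have hW1 : W * Wᴴ = 1 := by
    rw [hWdef, conjTranspose_mul, conjTranspose_conjTranspose]
    calc Uᴴ * V * (Vᴴ * U) = Uᴴ * (V * Vᴴ) * U := by simp only [mul_assoc]
      _ = 1 := by rw [hV1, mul_one, hU2]
  have hW2 : Wᴴ * W = 1 := by
    rw [hWdef, conjTranspose_mul, conjTranspose_conjTranspose]
    calc Vᴴ * U * (Uᴴ * V) = Vᴴ * (U * Uᴴ) * V := by simp only [mul_assoc]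
      _ = 1 := by rw [hU1, mul_one, hV2]
  have hrow : ∀ i, ∑ j, p i j = 1 := by
    intro i
    have h : (W * Wᴴ) i i = (1 : Matrix n n ℂ) i i := by rw [hW1]
    rw [mul_apply, one_apply_eq] at h
    have h2 : ∑ j, ((p i j : ℝ) : ℂ) = 1 := by
      rw [← h]
      refine Finset.sum_congr rfl fun j _ => ?_
      rw [conjTranspose_apply, hpdef]
      rw [← Complex.mul_conj (W i j)]
      simp [Complex.star_def]
    exact_mod_cast h2
  have hcol : ∀ j, ∑ i, p i j = 1 := by
    intro j
    have h : (Wᴴ * W) j j = (1 : Matrix n n ℂ) j j := by rw [hW2]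
    rw [mul_apply, one_apply_eq] at h
    have h2 : ∑ i, ((p i j : ℝ) : ℂ) = 1 := by
      rw [← h]
      refine Finset.sum_congr rfl fun i _ => ?_
      rw [conjTranspose_apply, hpdef]
      show ((Complex.normSq (W i j) : ℝ) : ℂ) = star (W i j) * W i j
      rw [Complex.normSq_eq_conj_mul_self]
      rfl
    exact_mod_cast h2
  -- trace identities
  have hT1 : trace (exp (-R) * S)
      = ((∑ i, ∑ j, Real.exp (-r i) * s j * p i j : ℝ) : ℂ) := by
    rw [hexpR, hSspec, aux_trace_formula]
    push_cast
    rfl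
  have hT2 : trace (exp (-R) * R) = ((∑ i, Real.exp (-r i) * r i : ℝ) : ℂ) := by
    rw [hexpR]
    rw [hRspec]
    rw [aux_trace_formula, hU2]
    push_cast
    simp [one_apply, apply_ite]
  have hT3 : ∑ i, Real.exp (-r i) = 1 := by
    rw [hexpR, trace_mul_comm, ← mul_assoc, hU2, one_mul, trace_diagonal] at hRnorm
    exact_mod_cast hRnorm
  have hT4 : ∑ j, Real.exp (-s j) = 1 := by
    rw [hexpS, trace_mul_comm, ← mul_assoc, hV2, one_mul, trace_diagonal] at hSnorm
    exact_mod_cast hSnorm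
  -- real arithmetic
  have hrowsum : ∀ (f : n → ℝ), ∑ i, ∑ j, p i j * f i = ∑ i, f i := by
    intro f
    refine Finset.sum_congr rfl fun i _ => ?_
    rw [← Finset.sum_mul, hrow i, one_mul]
  have hcolsum : ∑ i, ∑ j, p i j * Real.exp (-s j) = 1 := by
    rw [Finset.sum_comm]
    calc ∑ j, ∑ i, p i j * Real.exp (-s j)
        = ∑ j, Real.exp (-s j) := by
          refine Finset.sum_congr rfl fun j _ => ?_
          rw [← Finset.sum_mul, hcol j, one_mul]
      _ = 1 := hT4
  have hF : ∀ i j, 0 ≤ p i j *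
      (Real.exp (-r i) * (s j - r i) - Real.exp (-r i) + Real.exp (-s j)) :=
    fun i j => mul_nonneg (Complex.normSq_nonneg _) (aux_key (r i) (s j))
  have hsum : ∑ i, ∑ j, p i j *
        (Real.exp (-r i) * (s j - r i) - Real.exp (-r i) + Real.exp (-s j))
      = (∑ i, ∑ j, Real.exp (-r i) * s j * p i j) - (∑ i, Real.exp (-r i) * r i) := by
    have h1 : ∑ i, ∑ j, p i j * (Real.exp (-r i) * r i) = ∑ i, Real.exp (-r i) * r i :=
      hrowsum _
    have h2 : ∑ i, ∑ j, p i j * Real.exp (-r i) = 1 := by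
      rw [hrowsum]; exact hT3
    calc ∑ i, ∑ j, p i j *
          (Real.exp (-r i) * (s j - r i) - Real.exp (-r i) + Real.exp (-s j))
        = ∑ i, ∑ j, (Real.exp (-r i) * s j * p i j - p i j * (Real.exp (-r i) * r i)
            - p i j * Real.exp (-r i) + p i j * Real.exp (-s j)) := by
          refine Finset.sum_congr rfl fun i _ => Finset.sum_congr rfl fun j _ => ?_
          ring
      _ = (∑ i, ∑ j, Real.exp (-r i) * s j * p i j)
          - (∑ i, ∑ j, p i j * (Real.exp (-r i) * r i))
          - (∑ i, ∑ j, p i j * Real.exp (-r i))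
          + (∑ i, ∑ j, p i j * Real.exp (-s j)) := by
          simp [Finset.sum_add_distrib, Finset.sum_sub_distrib]
      _ = (∑ i, ∑ j, Real.exp (-r i) * s j * p i j) - (∑ i, Real.exp (-r i) * r i) := by
          rw [h1, h2, hcolsum]; ring
  have hsum_nonneg : 0 ≤ ∑ i, ∑ j, p i j *
      (Real.exp (-r i) * (s j - r i) - Real.exp (-r i) + Real.exp (-s j)) :=
    Finset.sum_nonneg fun i _ => Finset.sum_nonneg fun j _ => hF i j
  refine ⟨?_, ?_, ?_⟩
  · rw [hT1]; exact Complex.ofReal_im _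
  · rw [hT1, hT2, Complex.ofReal_re, Complex.ofReal_re]
    linarith [hsum_nonneg, hsum]
  · constructor
    · intro heq
      rw [hT1, hT2, Complex.ofReal_re, Complex.ofReal_re] at heq
      -- every term vanishes
      have h0 : ∑ i, ∑ j, p i j *
          (Real.exp (-r i) * (s j - r i) - Real.exp (-r i) + Real.exp (-s j)) = 0 := by
        rw [hsum]; linarith
      have hall : ∀ i j, p i j *
          (Real.exp (-r i) * (s j - r i) - Real.exp (-r i) + Real.exp (-s j)) = 0 := by
        intro i j
        have h1 := (Finset.sum_eq_zero_iff_of_nonneg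
          (fun i _ => Finset.sum_nonneg fun j _ => hF i j)).mp h0 i (Finset.mem_univ i)
        exact (Finset.sum_eq_zero_iff_of_nonneg (fun j _ => hF i j)).mp h1 j
          (Finset.mem_univ j)
      have hrs : ∀ i j, W i j ≠ 0 → r i = s j := by
        intro i j hw
        have hp : p i j ≠ 0 := by
          rw [hpdef]
          simpa [Complex.normSq_eq_zero] using hw
        rcases mul_eq_zero.mp (hall i j) with h | h
        · exact absurd h hp
        · exact aux_eq (r i) (s j) h
      have hDW : diagonal (fun i => ((r i : ℝ) : ℂ)) * W
          = W * diagonal (fun j => ((s j : ℝ) : ℂ)) := by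
        ext i j
        rw [diagonal_mul, mul_diagonal]
        by_cases hw : W i j = 0
        · rw [hw]; ring
        · rw [hrs i j hw]; ring
      have hVW : V = U * W := by
        rw [hWdef, ← mul_assoc, hU1, one_mul]
      have hSR : S = R := by
        rw [hSspec, hVW, conjTranspose_mul]
        calc U * W * diagonal (fun j => ((s j : ℝ) : ℂ)) * (Wᴴ * Uᴴ)
            = U * ((W * diagonal (fun j => ((s j : ℝ) : ℂ))) * Wᴴ) * Uᴴ := by
              simp only [mul_assoc]
          _ = U * ((diagonal (fun i => ((r i : ℝ) : ℂ)) * W) * Wᴴ) * Uᴴ := by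
              rw [hDW]
          _ = U * (diagonal (fun i => ((r i : ℝ) : ℂ)) * (W * Wᴴ)) * Uᴴ := by
              simp only [mul_assoc]
          _ = U * diagonal (fun i => ((r i : ℝ) : ℂ)) * Uᴴ := by
              rw [hW1, mul_one]
          _ = R := hRspec.symm
      exact hSR.symm
    · intro h
      rw [h]
end

section
/- Maximum entropy property of the quasi-equilibrium statistical operator: let ι be a finite type, let Pᵢ (i ∈ ι) be Hermitian n×n complex matrices and Fᵢ real numbers; set Φ = ln (Tr[exp(−∑ᵢ Fᵢ • Pᵢ)]) (a real number), S_q = Φ • 1 + ∑ᵢ Fᵢ • Pᵢ, and ρ_q = exp(−S_q), so that Tr[ρ_q] = 1. If R is a Hermitian n×n matrix with Tr[exp(−R)] = 1 and Tr[exp(−R)·Pᵢ] = Tr[ρ_q·Pᵢ] for every i ∈ ι, then the Gibbs entropy of exp(−R) is at most the quasi-equilibrium entropy: Tr[exp(−R)·R] ≤ Φ + ∑ᵢ Fᵢ · Tr[ρ_q·Pᵢ], with equality if and only if R = S_q. -/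
open Matrix NormedSpace

namespace MaxEntAux

variable {n : Type*} [Fintype n] [DecidableEq n]

theorem spectral_theorem' {A : Matrix n n ℂ} (hA : A.IsHermitian) :
    A = (hA.eigenvectorUnitary : Matrix n n ℂ) * diagonal (RCLike.ofReal ∘ hA.eigenvalues) *
      star (hA.eigenvectorUnitary : Matrix n n ℂ) := hA.spectral_theorem

theorem exp_neg_spectral {A : Matrix n n ℂ} (hA : A.IsHermitian) :
    exp (-A) = (hA.eigenvectorUnitary : Matrix n n ℂ) *
      diagonal (fun i => (Real.exp (-(hA.eigenvalues i)) : ℂ)) *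
      star (hA.eigenvectorUnitary : Matrix n n ℂ) := by
  set U : Matrix n n ℂ := (hA.eigenvectorUnitary : Matrix n n ℂ) with hU
  have hUU : U * star U = 1 := mem_unitaryGroup_iff.mp hA.eigenvectorUnitary.2
  have hUU' : star U * U = 1 := mem_unitaryGroup_iff'.mp hA.eigenvectorUnitary.2
  have hUnit : IsUnit U := ⟨⟨U, star U, hUU, hUU'⟩, rfl⟩
  have hinv : U⁻¹ = star U := inv_eq_right_inv hUU
  have h1 : -A = U * diagonal (fun i => (-(hA.eigenvalues i) : ℂ)) * U⁻¹ := by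
    rw [hinv]
    conv_lhs => rw [spectral_theorem' hA]
    rw [← Matrix.neg_mul, ← Matrix.mul_neg]
    congr 2
    rw [← diagonal_neg]
    congr 1
  rw [h1, Matrix.exp_conj U _ hUnit, hinv, Matrix.exp_diagonal]
  have hfun : (exp fun i => (-(hA.eigenvalues i) : ℂ)) =
      fun i => (Real.exp (-(hA.eigenvalues i)) : ℂ) := by
    funext i
    rw [Pi.coe_exp, ← Complex.exp_eq_exp_ℂ, Complex.ofReal_exp]
    push_cast
    rfl
  rw [hfun]

theorem trace_conj_unitary {A : Matrix n n ℂ} (hA : A.IsHermitian) (M : Matrix n n ℂ) :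
    trace ((hA.eigenvectorUnitary : Matrix n n ℂ) * M *
      star (hA.eigenvectorUnitary : Matrix n n ℂ)) = trace M := by
  rw [trace_mul_cycle, Unitary.coe_star_mul_self, one_mul]

theorem trace_exp_neg {A : Matrix n n ℂ} (hA : A.IsHermitian) :
    trace (exp (-A)) = ((∑ i, Real.exp (-(hA.eigenvalues i)) : ℝ) : ℂ) := by
  rw [exp_neg_spectral hA, trace_conj_unitary hA, trace_diagonal, Complex.ofReal_sum]

theorem norm_sq_ofReal (z : ℂ) : ((‖z‖ ^ 2 : ℝ) : ℂ) = z * (starRingEnd ℂ) z := by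
  rw [Complex.mul_conj]
  norm_cast
  rw [Complex.normSq_eq_norm_sq]

/-- central trace formula -/
theorem trace_expNeg_mul {A B : Matrix n n ℂ} (hA : A.IsHermitian) (hB : B.IsHermitian) :
    trace (exp (-A) * B) =
      ((∑ i, ∑ j, ‖(star (hA.eigenvectorUnitary : Matrix n n ℂ) *
          (hB.eigenvectorUnitary : Matrix n n ℂ)) i j‖ ^ 2 *
          (Real.exp (-(hA.eigenvalues i)) * hB.eigenvalues j) : ℝ) : ℂ) := by
  set U : Matrix n n ℂ := (hA.eigenvectorUnitary : Matrix n n ℂ)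
  set V : Matrix n n ℂ := (hB.eigenvectorUnitary : Matrix n n ℂ)
  set W : Matrix n n ℂ := star U * V with hW
  set d : n → ℂ := fun i => (Real.exp (-(hA.eigenvalues i)) : ℂ)
  set e : n → ℂ := RCLike.ofReal ∘ hB.eigenvalues with he
  have hUU : U * star U = 1 := mem_unitaryGroup_iff.mp hA.eigenvectorUnitary.2
  have hWs : star W = star V * U := by rw [hW, StarMul.star_mul, star_star]
  have h1 : exp (-A) * B = U * (diagonal d * W * diagonal e * star W) * star U := by
    have key : U * (diagonal d * W * diagonal e * star W) * star U
        = (U * diagonal d * star U) * (V * diagonal e * star V) := by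
      rw [hW, hWs]
      simp only [Matrix.mul_assoc]
      rw [hUU, Matrix.mul_one]
    rw [key, exp_neg_spectral hA, ← spectral_theorem' hB]
  rw [h1, trace_conj_unitary hA]
  have h2 : ∀ i, (diagonal d * W * diagonal e * star W) i i
      = ∑ j, d i * W i j * e j * (starRingEnd ℂ) (W i j) := by
    intro i
    rw [Matrix.mul_apply]
    refine Finset.sum_congr rfl fun j _ => ?_
    rw [Matrix.mul_diagonal, Matrix.diagonal_mul, Matrix.star_apply]
    rfl
  rw [Matrix.trace, Complex.ofReal_sum]
  refine Finset.sum_congr rfl fun i _ => ?_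
  rw [Matrix.diag_apply, h2, Complex.ofReal_sum]
  refine Finset.sum_congr rfl fun j _ => ?_
  rw [Complex.ofReal_mul, norm_sq_ofReal, Complex.ofReal_mul]
  have hd : d i = ((Real.exp (-(hA.eigenvalues i)) : ℝ) : ℂ) := rfl
  have he' : e j = ((hB.eigenvalues j : ℝ) : ℂ) := rfl
  rw [hd, he']
  ring

theorem trace_expNeg_mul_self {A : Matrix n n ℂ} (hA : A.IsHermitian) :
    trace (exp (-A) * A) =
      ((∑ i, Real.exp (-(hA.eigenvalues i)) * hA.eigenvalues i : ℝ) : ℂ) := by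
  set U : Matrix n n ℂ := (hA.eigenvectorUnitary : Matrix n n ℂ)
  set d : n → ℂ := fun i => (Real.exp (-(hA.eigenvalues i)) : ℂ)
  set e : n → ℂ := RCLike.ofReal ∘ hA.eigenvalues with he
  have hUU : U * star U = 1 := mem_unitaryGroup_iff.mp hA.eigenvectorUnitary.2
  have hUU' : star U * U = 1 := mem_unitaryGroup_iff'.mp hA.eigenvectorUnitary.2
  have h1 : exp (-A) * A = U * (diagonal d * diagonal e) * star U := by
    have key : U * (diagonal d * diagonal e) * star U
        = (U * diagonal d * star U) * (U * diagonal e * star U) := by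
      have : diagonal d * diagonal e = diagonal d * (star U * U) * diagonal e := by
        rw [hUU', Matrix.mul_one]
      rw [this]
      simp only [Matrix.mul_assoc]
    rw [key, exp_neg_spectral hA, ← spectral_theorem' hA]
  rw [h1, trace_conj_unitary hA, diagonal_mul_diagonal, trace_diagonal, Complex.ofReal_sum]
  refine Finset.sum_congr rfl fun i _ => ?_
  rw [Complex.ofReal_mul]
  rfl

theorem sum_norm_sq_row {W : Matrix n n ℂ} (hW : W ∈ Matrix.unitaryGroup n ℂ) (i : n) :
    ∑ j, ‖W i j‖ ^ 2 = 1 := by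
  have h1 : W * star W = 1 := mem_unitaryGroup_iff.mp hW
  have h2 := congrFun (congrFun h1 i) i
  rw [Matrix.mul_apply] at h2
  have h3 : ((∑ j, ‖W i j‖ ^ 2 : ℝ) : ℂ) = 1 := by
    rw [Complex.ofReal_sum]
    rw [show (1 : ℂ) = (1 : Matrix n n ℂ) i i from (Matrix.one_apply_eq i).symm, ← h2]
    refine Finset.sum_congr rfl fun j _ => ?_
    rw [norm_sq_ofReal, Matrix.star_apply]
    rfl
  exact_mod_cast h3

theorem sum_norm_sq_col {W : Matrix n n ℂ} (hW : W ∈ Matrix.unitaryGroup n ℂ) (j : n) :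
    ∑ i, ‖W i j‖ ^ 2 = 1 := by
  have h1 : star W * W = 1 := mem_unitaryGroup_iff'.mp hW
  have h2 := congrFun (congrFun h1 j) j
  rw [Matrix.mul_apply] at h2
  have h3 : ((∑ i, ‖W i j‖ ^ 2 : ℝ) : ℂ) = 1 := by
    rw [Complex.ofReal_sum]
    rw [show (1 : ℂ) = (1 : Matrix n n ℂ) j j from (Matrix.one_apply_eq j).symm, ← h2]
    refine Finset.sum_congr rfl fun i _ => ?_
    rw [norm_sq_ofReal, Matrix.star_apply]
    ring_nf
    rfl
  exact_mod_cast h3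

/-- equality case: if the eigenvalues match on the support of the overlap matrix,
the two Hermitian matrices are equal. -/
theorem herm_eq_of_eigen {A B : Matrix n n ℂ} (hA : A.IsHermitian) (hB : B.IsHermitian)
    (h : ∀ i j, (star (hA.eigenvectorUnitary : Matrix n n ℂ) *
        (hB.eigenvectorUnitary : Matrix n n ℂ)) i j ≠ 0 →
      hA.eigenvalues i = hB.eigenvalues j) : A = B := by
  set U : Matrix n n ℂ := (hA.eigenvectorUnitary : Matrix n n ℂ)
  set V : Matrix n n ℂ := (hB.eigenvectorUnitary : Matrix n n ℂ)
  set W : Matrix n n ℂ := star U * V with hW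
  set dr : Matrix n n ℂ := diagonal (RCLike.ofReal ∘ hA.eigenvalues) with hdr
  set ds : Matrix n n ℂ := diagonal (RCLike.ofReal ∘ hB.eigenvalues) with hds
  have hUU : U * star U = 1 := mem_unitaryGroup_iff.mp hA.eigenvectorUnitary.2
  have hUU' : star U * U = 1 := mem_unitaryGroup_iff'.mp hA.eigenvectorUnitary.2
  have hVV : V * star V = 1 := mem_unitaryGroup_iff.mp hB.eigenvectorUnitary.2
  have hWs : star W = star V * U := by rw [hW, StarMul.star_mul, star_star]
  have hWW : W * star W = 1 := by
    have h1 : W * star W = star U * (V * (star V * U)) := by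
      rw [hW, hWs, Matrix.mul_assoc]
    rw [h1, ← Matrix.mul_assoc V, hVV, Matrix.one_mul, hUU']
  have hUW : U * W = V := by
    rw [hW, ← Matrix.mul_assoc, hUU, Matrix.one_mul]
  have hcomm : dr * W = W * ds := by
    ext i j
    rw [hdr, hds, Matrix.diagonal_mul, Matrix.mul_diagonal]
    by_cases hij : W i j = 0
    · rw [hij, mul_zero, zero_mul]
    · rw [Function.comp_apply, Function.comp_apply, h i j hij, mul_comm]
  have hB' : B = A := by
    calc B = V * ds * star V := hB.spectral_theorem
      _ = (U * W) * ds * star (U * W) := by rw [hUW]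
      _ = U * (W * ds * star W) * star U := by
          rw [StarMul.star_mul]
          simp only [Matrix.mul_assoc]
      _ = U * (dr * W * star W) * star U := by rw [← hcomm]
      _ = U * dr * star U := by
          rw [Matrix.mul_assoc dr W (star W), hWW, Matrix.mul_one]
      _ = A := hA.spectral_theorem.symm
  exact hB'.symm

theorem convex_aux (x y : ℝ) :
    0 ≤ Real.exp (-y) - Real.exp (-x) + Real.exp (-x) * (y - x) := by
  have h1 : Real.exp (-y) = Real.exp (-x) * Real.exp (x - y) := by
    rw [← Real.exp_add]; ring_nf
  nlinarith [Real.add_one_le_exp (x - y), Real.exp_pos (-x)]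

theorem convex_aux_strict {x y : ℝ} (h : x ≠ y) :
    0 < Real.exp (-y) - Real.exp (-x) + Real.exp (-x) * (y - x) := by
  have h1 : Real.exp (-y) = Real.exp (-x) * Real.exp (x - y) := by
    rw [← Real.exp_add]; ring_nf
  nlinarith [Real.add_one_lt_exp (sub_ne_zero.mpr h), Real.exp_pos (-x)]

/-- The purely real-analytic core of the maximum entropy argument. -/
theorem real_core {m : Type*} [Fintype m] (r s : m → ℝ) (p : m → m → ℝ)
    (hp : ∀ i j, 0 ≤ p i j) (hrow : ∀ i, ∑ j, p i j = 1) (hcol : ∀ j, ∑ i, p i j = 1)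
    (hr1 : ∑ i, Real.exp (-(r i)) = 1) (hs1 : ∑ j, Real.exp (-(s j)) = 1) :
    (∑ i, Real.exp (-(r i)) * r i ≤ ∑ i, ∑ j, p i j * (Real.exp (-(r i)) * s j)) ∧
    (∑ i, Real.exp (-(r i)) * r i = ∑ i, ∑ j, p i j * (Real.exp (-(r i)) * s j) →
      ∀ i j, p i j ≠ 0 → r i = s j) := by
  classical
  set g : m → m → ℝ := fun i j =>
    p i j * (Real.exp (-(s j)) - Real.exp (-(r i)) + Real.exp (-(r i)) * (s j - r i)) with hg
  have hgnn : ∀ i j, 0 ≤ g i j := fun i j => mul_nonneg (hp i j) (convex_aux (r i) (s j))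
  have e1 : ∑ i, ∑ j, p i j * Real.exp (-(s j)) = 1 := by
    rw [Finset.sum_comm]
    rw [show ∑ j, ∑ i, p i j * Real.exp (-(s j)) = ∑ j, Real.exp (-(s j)) from
      Finset.sum_congr rfl fun j _ => by rw [← Finset.sum_mul, hcol j, one_mul]]
    exact hs1
  have e2 : ∑ i, ∑ j, p i j * Real.exp (-(r i)) = 1 := by
    rw [show ∑ i, ∑ j, p i j * Real.exp (-(r i)) = ∑ i, Real.exp (-(r i)) from
      Finset.sum_congr rfl fun i _ => by rw [← Finset.sum_mul, hrow i, one_mul]]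
    exact hr1
  have e3 : ∑ i, ∑ j, p i j * (Real.exp (-(r i)) * r i) = ∑ i, Real.exp (-(r i)) * r i :=
    Finset.sum_congr rfl fun i _ => by rw [← Finset.sum_mul, hrow i, one_mul]
  have hsum : ∑ i, ∑ j, g i j
      = ∑ i, ∑ j, p i j * (Real.exp (-(r i)) * s j) - ∑ i, Real.exp (-(r i)) * r i := by
    have expand : ∀ i j, g i j = p i j * Real.exp (-(s j)) - p i j * Real.exp (-(r i))
        + (p i j * (Real.exp (-(r i)) * s j) - p i j * (Real.exp (-(r i)) * r i)) := by
      intro i j; rw [hg]; ring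
    calc ∑ i, ∑ j, g i j
        = ∑ i, ∑ j, (p i j * Real.exp (-(s j)) - p i j * Real.exp (-(r i))
          + (p i j * (Real.exp (-(r i)) * s j) - p i j * (Real.exp (-(r i)) * r i))) :=
          Finset.sum_congr rfl fun i _ => Finset.sum_congr rfl fun j _ => expand i j
      _ = _ := by
          simp only [Finset.sum_add_distrib, Finset.sum_sub_distrib]
          rw [e1, e2, e3]
          ring
  have hnn : 0 ≤ ∑ i, ∑ j, g i j :=
    Finset.sum_nonneg fun i _ => Finset.sum_nonneg fun j _ => hgnn i j
  constructor
  · linarith [hsum, hnn]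
  · intro heq i j hpij
    have hzero : ∑ i, ∑ j, g i j = 0 := by rw [hsum]; linarith
    have hinner : ∀ i ∈ Finset.univ, (∑ j, g i j) = 0 :=
      (Finset.sum_eq_zero_iff_of_nonneg
        (fun i _ => Finset.sum_nonneg fun j _ => hgnn i j)).mp hzero
    have hgij : g i j = 0 :=
      (Finset.sum_eq_zero_iff_of_nonneg (fun j _ => hgnn i j)).mp
        (hinner i (Finset.mem_univ i)) j (Finset.mem_univ j)
    by_contra hrs
    have hppos : 0 < p i j := lt_of_le_of_ne (hp i j) (Ne.symm hpij)
    have hstrict := convex_aux_strict hrs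
    have : 0 < g i j := mul_pos hppos hstrict
    rw [hgij] at this
    exact lt_irrefl 0 this

end MaxEntAux

open MaxEntAux

/-- Maximum entropy property of the quasi-equilibrium statistical operator: among all
normalized Hermitian "entropy operators" `R` reproducing the averages of the gross
variables `P i`, the quasi-equilibrium one `S_q` has maximal Gibbs entropy. -/
theorem maxEnt_quasi_equilibrium
    {n : Type*} [Fintype n] [DecidableEq n] [Nonempty n]
    {ι : Type*} [Fintype ι]
    (P : ι → Matrix n n ℂ) (F : ι → ℝ) (hP : ∀ i, (P i)ᴴ = P i)
    (Φ : ℝ) (hΦ : Φ = Real.log (trace (exp (-(∑ i, F i • P i)))).re)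
    (Sq : Matrix n n ℂ) (hSq : Sq = Φ • (1 : Matrix n n ℂ) + ∑ i, F i • P i)
    (R : Matrix n n ℂ) (hR : Rᴴ = R)
    (hRnorm : trace (exp (-R)) = 1)
    (hbal : ∀ i, trace (exp (-R) * P i) = trace (exp (-Sq) * P i)) :
    trace (exp (-Sq)) = 1 ∧
    (trace (exp (-R) * R)).re ≤ Φ + ∑ i, F i * (trace (exp (-Sq) * P i)).re ∧
    ((trace (exp (-R) * R)).re = Φ + ∑ i, F i * (trace (exp (-Sq) * P i)).re ↔
      R = Sq) := by
  classical
  have hA0 : (∑ i, F i • P i).IsHermitian := by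
    show _ = _
    rw [Matrix.conjTranspose_sum]
    exact Finset.sum_congr rfl fun i _ => by
      rw [Matrix.conjTranspose_smul, star_trivial, hP]
  have hSqH : Sq.IsHermitian := by
    show _ = _
    rw [hSq, Matrix.conjTranspose_add, Matrix.conjTranspose_smul, star_trivial,
      Matrix.conjTranspose_one]
    rw [hA0]
  have hRH : R.IsHermitian := hR
  -- normalization of the quasi-equilibrium operator
  have hTr1 : trace (exp (-Sq)) = 1 := by
    have h0 : -Sq = diagonal (fun _ : n => (-Φ : ℂ)) + -(∑ i, F i • P i) := by
      rw [hSq, neg_add]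
      congr 1
      ext i j
      by_cases hij : i = j
      · subst hij
        simp [Complex.real_smul]
      · simp [Matrix.one_apply_ne hij, Matrix.diagonal_apply_ne _ hij]
    have hcommd : Commute (diagonal (fun _ : n => (-Φ : ℂ))) (-(∑ i, F i • P i)) := by
      show _ = _
      ext i j
      rw [Matrix.diagonal_mul, Matrix.mul_diagonal, mul_comm]
    have hexp1 : exp (diagonal (fun _ : n => (-Φ : ℂ)))
        = Complex.exp (-(Φ : ℂ)) • (1 : Matrix n n ℂ) := by
      rw [Matrix.exp_diagonal]
      rw [show (exp fun _ : n => (-Φ : ℂ)) = fun _ : n => Complex.exp (-(Φ : ℂ)) from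
        funext fun _ => by rw [Pi.coe_exp, ← Complex.exp_eq_exp_ℂ]]
      ext i j
      by_cases hij : i = j
      · subst hij
        simp
      · simp [Matrix.one_apply_ne hij, Matrix.diagonal_apply_ne _ hij]
    have hsplit : exp (-Sq) = Complex.exp (-(Φ : ℂ)) • exp (-(∑ i, F i • P i)) := by
      rw [h0, Matrix.exp_add_of_commute _ _ hcommd, hexp1, smul_mul_assoc, one_mul]
    have hpos : 0 < ∑ i, Real.exp (-(hA0.eigenvalues i)) :=
      Finset.sum_pos (fun i _ => Real.exp_pos _) Finset.univ_nonempty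
    have hPhi' : Φ = Real.log (∑ i, Real.exp (-(hA0.eigenvalues i))) := by
      rw [hΦ, trace_exp_neg hA0, Complex.ofReal_re]
    rw [hsplit, Matrix.trace_smul, trace_exp_neg hA0]
    rw [show Complex.exp (-(Φ : ℂ)) = ((Real.exp (-Φ) : ℝ) : ℂ) from by
      rw [Complex.ofReal_exp, Complex.ofReal_neg]]
    rw [smul_eq_mul, ← Complex.ofReal_mul]
    norm_cast
    rw [hPhi', Real.exp_neg, Real.exp_log hpos]
    exact inv_mul_cancel₀ (ne_of_gt hpos)
  -- the balance relations give the value of `Tr[exp(-R) Sq]`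
  have hRS : trace (exp (-R) * Sq)
      = (Φ : ℂ) + ∑ i, (F i : ℂ) * trace (exp (-Sq) * P i) := by
    conv_lhs => rw [hSq]
    rw [Matrix.mul_add, Matrix.trace_add]
    congr 1
    · rw [mul_smul_comm, Matrix.mul_one, Matrix.trace_smul, hRnorm]
      simp [Complex.real_smul]
    · rw [Finset.mul_sum, Matrix.trace_sum]
      refine Finset.sum_congr rfl fun i _ => ?_
      rw [mul_smul_comm, Matrix.trace_smul, hbal i]
      simp [Complex.real_smul]
  have hRSre : (trace (exp (-R) * Sq)).re
      = Φ + ∑ i, F i * (trace (exp (-Sq) * P i)).re := by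
    rw [hRS, Complex.add_re, Complex.ofReal_re, Complex.re_sum]
    congr 1
    refine Finset.sum_congr rfl fun i _ => ?_
    rw [Complex.mul_re, Complex.ofReal_re, Complex.ofReal_im]
    ring
  -- spectral set-up
  have hWmem : star (hRH.eigenvectorUnitary : Matrix n n ℂ) *
      (hSqH.eigenvectorUnitary : Matrix n n ℂ) ∈ Matrix.unitaryGroup n ℂ :=
    mul_mem (Unitary.star_mem hRH.eigenvectorUnitary.2) hSqH.eigenvectorUnitary.2
  have hr1 : ∑ i, Real.exp (-(hRH.eigenvalues i)) = 1 := by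
    have h := trace_exp_neg hRH
    rw [hRnorm] at h
    exact_mod_cast h.symm
  have hs1 : ∑ j, Real.exp (-(hSqH.eigenvalues j)) = 1 := by
    have h := trace_exp_neg hSqH
    rw [hTr1] at h
    exact_mod_cast h.symm
  obtain ⟨hle, heqcase⟩ := real_core hRH.eigenvalues hSqH.eigenvalues
    (fun i j => ‖(star (hRH.eigenvectorUnitary : Matrix n n ℂ) *
      (hSqH.eigenvectorUnitary : Matrix n n ℂ)) i j‖ ^ 2)
    (fun i j => sq_nonneg _) (fun i => sum_norm_sq_row hWmem i)
    (fun j => sum_norm_sq_col hWmem j) hr1 hs1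
  have t3 : (trace (exp (-R) * R)).re
      = ∑ i, Real.exp (-(hRH.eigenvalues i)) * hRH.eigenvalues i := by
    rw [trace_expNeg_mul_self hRH, Complex.ofReal_re]
  have t4 : (trace (exp (-R) * Sq)).re
      = ∑ i, ∑ j, ‖(star (hRH.eigenvectorUnitary : Matrix n n ℂ) *
          (hSqH.eigenvectorUnitary : Matrix n n ℂ)) i j‖ ^ 2 *
          (Real.exp (-(hRH.eigenvalues i)) * hSqH.eigenvalues j) := by
    rw [trace_expNeg_mul hRH hSqH, Complex.ofReal_re]
  refine ⟨hTr1, ?_, ?_, ?_⟩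
  · rw [t3, ← hRSre, t4]
    exact hle
  · intro h
    have h' : ∑ i, Real.exp (-(hRH.eigenvalues i)) * hRH.eigenvalues i
        = ∑ i, ∑ j, ‖(star (hRH.eigenvectorUnitary : Matrix n n ℂ) *
            (hSqH.eigenvectorUnitary : Matrix n n ℂ)) i j‖ ^ 2 *
            (Real.exp (-(hRH.eigenvalues i)) * hSqH.eigenvalues j) := by
      rw [← t3, h, ← hRSre, t4]
    have key := heqcase h'
    exact herm_eq_of_eigen hRH hSqH fun i j hne =>
      key i j (pow_ne_zero 2 (norm_ne_zero_iff.mpr hne))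
  · intro h
    subst h
    exact hRSre
end

section
/- Derivative of the Massieu–Planck function gives the gross-variable averages: let S and P be Hermitian n×n complex matrices. Then the function g : ℝ → ℝ defined by g(x) = ln (Tr[exp(−(S + x • P))]) is differentiable on ℝ, and for every x, g'(x) = − Tr[exp(−(S + x • P))·P] / Tr[exp(−(S + x • P))] (the quotient of two real numbers). -/
open Matrix NormedSpace

set_option linter.unusedSectionVars false

namespace MassieuPlanckAux

section Aux

attribute [local instance] Matrix.linftyOpNormedRing Matrix.linftyOpNormedAlgebra

variable {n : Type*} [Fintype n] [DecidableEq n] [Nonempty n]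

noncomputable def traceCLM : Matrix n n ℂ →L[ℂ] ℂ :=
  LinearMap.toContinuousLinearMap (Matrix.traceLinearMap n ℂ ℂ)

@[simp] lemma traceCLM_apply (X : Matrix n n ℂ) : traceCLM X = X.trace := rfl

noncomputable def traceMulCLM (B : Matrix n n ℂ) : Matrix n n ℂ →L[ℂ] ℂ :=
  LinearMap.toContinuousLinearMap
    ((Matrix.traceLinearMap n ℂ ℂ).comp (LinearMap.mulRight ℂ B))

@[simp] lemma traceMulCLM_apply (B X : Matrix n n ℂ) :
    traceMulCLM B X = (X * B).trace := rfl

lemma norm_trace_le (X : Matrix n n ℂ) :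
    ‖X.trace‖ ≤ (Fintype.card n : ℝ) * ‖X‖ := by
  have h1 : ∀ i : n, ‖X i i‖ ≤ ‖X‖ := by
    intro i
    have h2 : ‖X i i‖₊ ≤ ∑ j, ‖X i j‖₊ :=
      Finset.single_le_sum (f := fun j => ‖X i j‖₊) (fun _ _ => zero_le)
        (Finset.mem_univ i)
    have h3 : (∑ j, ‖X i j‖₊) ≤ Finset.univ.sup fun i => ∑ j, ‖X i j‖₊ :=
      Finset.le_sup (f := fun i => ∑ j, ‖X i j‖₊) (Finset.mem_univ i)
    have := h2.trans h3
    rw [Matrix.linfty_opNorm_def]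
    exact_mod_cast this
  calc ‖X.trace‖ ≤ ∑ i, ‖X i i‖ := norm_sum_le _ _
    _ ≤ ∑ _i : n, ‖X‖ := Finset.sum_le_sum fun i _ => h1 i
    _ = (Fintype.card n : ℝ) * ‖X‖ := by simp [Finset.sum_const, nsmul_eq_mul]

lemma hasDerivAt_affine (M₀ B : Matrix n n ℂ) (y : ℝ) :
    HasDerivAt (fun z : ℝ => M₀ + z • B) B y := by
  have h := ((hasDerivAt_id y).smul_const B).const_add M₀
  rw [one_smul] at h
  exact h

lemma hasDerivAt_pow (M₀ B : Matrix n n ℂ) (k : ℕ) (y : ℝ) :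
    HasDerivAt (fun z : ℝ => (M₀ + z • B) ^ k)
      (∑ i ∈ Finset.range k,
        (M₀ + y • B) ^ i * B * (M₀ + y • B) ^ (k - 1 - i)) y := by
  induction k with
  | zero => simp; exact hasDerivAt_const y (1 : Matrix n n ℂ)
  | succ k ih =>
      have h := ih.mul (hasDerivAt_affine M₀ B y)
      simp only [Pi.mul_def, ← pow_succ] at h
      refine h.congr_deriv (Eq.symm ?_)
      rw [Finset.sum_range_succ, Finset.sum_mul]
      congr 1
      · refine Finset.sum_congr rfl fun i hi => ?_
        rw [Finset.mem_range] at hi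
        rw [mul_assoc, mul_assoc, ← pow_succ]
        have hk : k + 1 - 1 - i = (k - 1 - i) + 1 := by omega
        rw [hk, pow_succ, ← mul_assoc]
      · simp

lemma hasDerivAt_trace_pow (M₀ B : Matrix n n ℂ) (k : ℕ) (y : ℝ) :
    HasDerivAt (fun z : ℝ => ((M₀ + z • B) ^ k).trace)
      ((k : ℂ) * (((M₀ + y • B) ^ (k - 1)) * B).trace) y := by
  have h := ((traceCLM (n := n)).restrictScalars ℝ).hasFDerivAt.comp_hasDerivAt y
    (hasDerivAt_pow M₀ B k y)
  have hsum : ((traceCLM (n := n)).restrictScalars ℝ)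
      (∑ i ∈ Finset.range k, (M₀ + y • B) ^ i * B * (M₀ + y • B) ^ (k - 1 - i))
      = ∑ _i ∈ Finset.range k, (((M₀ + y • B) ^ (k - 1)) * B).trace := by
    rw [map_sum]
    refine Finset.sum_congr rfl fun i hi => ?_
    rw [Finset.mem_range] at hi
    show ((M₀ + y • B) ^ i * B * (M₀ + y • B) ^ (k - 1 - i)).trace = _
    rw [Matrix.trace_mul_cycle, ← pow_add]
    have hik : k - 1 - i + i = k - 1 := by omega
    rw [hik]
  have h' := h.congr_deriv hsum
  rw [Finset.sum_const, Finset.card_range, nsmul_eq_mul] at h'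
  exact h'


lemma key (M₀ B : Matrix n n ℂ) (x : ℝ) :
    HasDerivAt (fun y : ℝ => (exp (M₀ + y • B)).trace)
      ((exp (M₀ + x • B) * B).trace) x := by
  set R : ℝ := |x| + 1 with hR
  set a : ℝ := ‖M₀‖ + R * ‖B‖ with ha
  have hR0 : 0 < R := by positivity
  have ha0 : 0 ≤ a := by positivity
  set C : ℝ := (Fintype.card n : ℝ) * ‖B‖ with hC
  set g : ℕ → ℝ → ℂ := fun k y => ((k.factorial : ℂ))⁻¹ • ((M₀ + y • B) ^ k).trace with hgdef
  set g' : ℕ → ℝ → ℂ := fun k y =>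
    ((k.factorial : ℂ))⁻¹ • ((k : ℂ) * (((M₀ + y • B) ^ (k - 1)) * B).trace) with hg'def
  set u : ℕ → ℝ := fun k => C * ((k : ℝ) / k.factorial * a ^ (k - 1)) with hudef
  have hgderiv : ∀ (k : ℕ) (y : ℝ), HasDerivAt (g k) (g' k y) y := fun k y =>
    (hasDerivAt_trace_pow M₀ B k y).const_smul ((k.factorial : ℂ))⁻¹
  have hbound : ∀ (k : ℕ), ∀ y ∈ Metric.ball (0 : ℝ) R, ‖g' k y‖ ≤ u k := by
    intro k y hy
    rw [Metric.mem_ball, dist_zero_right, Real.norm_eq_abs] at hy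
    have hMy : ‖M₀ + y • B‖ ≤ a := by
      refine (norm_add_le _ _).trans ?_
      rw [ha]
      gcongr
      rw [norm_smul, Real.norm_eq_abs]
      gcongr
    have hpow : ‖(M₀ + y • B) ^ (k - 1)‖ ≤ a ^ (k - 1) :=
      (norm_pow_le _ _).trans (pow_le_pow_left₀ (norm_nonneg _) hMy _)
    have htr : ‖(((M₀ + y • B) ^ (k - 1)) * B).trace‖
        ≤ (Fintype.card n : ℝ) * (a ^ (k - 1) * ‖B‖) := by
      refine (norm_trace_le _).trans ?_
      gcongr
      exact (norm_mul_le _ _).trans (by gcongr)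
    have h1 : ‖g' k y‖
        = ((k.factorial : ℝ))⁻¹ * ((k : ℝ) * ‖(((M₀ + y • B) ^ (k - 1)) * B).trace‖) := by
      rw [hg'def]
      simp [norm_smul, norm_mul]
    rw [h1, hudef, hC]
    have hk0 : (0:ℝ) ≤ (k : ℝ) := Nat.cast_nonneg k
    have hfac : (0:ℝ) < (k.factorial : ℝ) := by exact_mod_cast k.factorial_pos
    calc ((k.factorial : ℝ))⁻¹ * ((k : ℝ) * ‖(((M₀ + y • B) ^ (k - 1)) * B).trace‖)
        ≤ ((k.factorial : ℝ))⁻¹ * ((k : ℝ) * ((Fintype.card n : ℝ) * (a ^ (k - 1) * ‖B‖))) := by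
          gcongr
      _ = (Fintype.card n : ℝ) * ‖B‖ * ((k : ℝ) / k.factorial * a ^ (k - 1)) := by
          field_simp
  have husum : Summable u := by
    refine (summable_nat_add_iff 1).mp ?_
    have heq : (fun k : ℕ => u (k + 1)) = fun k : ℕ => C * (a ^ k / k.factorial) := by
      funext k
      rw [hudef]
      simp only [Nat.add_sub_cancel]
      congr 1
      rw [Nat.factorial_succ]
      have h1 : ((k.factorial : ℝ)) ≠ 0 := by exact_mod_cast k.factorial_ne_zero
      have h2 : ((k : ℝ) + 1) ≠ 0 := by positivity
      push_cast
      field_simp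
    rw [heq]
    exact (Real.summable_pow_div_factorial a).mul_left C
  have hexp : ∀ y : ℝ, HasSum (fun k => g k y) ((exp (M₀ + y • B)).trace) := by
    intro y
    have h := (exp_series_hasSum_exp' (𝕂 := ℂ) (M₀ + y • B)).mapL (traceCLM (n := n))
    simp only [hgdef, _root_.map_smul, traceCLM_apply, Matrix.trace_smul] at h
    exact h
  have hder : HasSum (fun k => g' k x) ((exp (M₀ + x • B) * B).trace) := by
    have h := (exp_series_hasSum_exp' (𝕂 := ℂ) (M₀ + x • B)).mapL (traceMulCLM (n := n) B)
    simp only [_root_.map_smul, traceMulCLM_apply, Matrix.smul_mul, Matrix.trace_smul,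
      smul_eq_mul] at h
    have h1 : HasSum (fun k => g' (k + 1) x) ((exp (M₀ + x • B) * B).trace) := by
      convert h using 2 with k
      rw [hg'def]
      simp only [Nat.add_sub_cancel]
      have hfc : ((k.factorial : ℂ)) ≠ 0 := by exact_mod_cast k.factorial_ne_zero
      have hk1 : ((k : ℂ) + 1) ≠ 0 := Nat.cast_add_one_ne_zero k
      have hfs : (((k + 1).factorial : ℂ)) = ((k : ℂ) + 1) * (k.factorial : ℂ) := by
        rw [Nat.factorial_succ]; push_cast; ring
      rw [smul_eq_mul, hfs]
      push_cast
      field_simp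
      rfl
    have h2 := (hasSum_nat_add_iff (f := fun k => g' k x) 1).mp h1
    simpa [hg'def] using h2
  have hxmem : x ∈ Metric.ball (0 : ℝ) R := by
    rw [Metric.mem_ball, dist_zero_right, Real.norm_eq_abs, hR]
    linarith
  have hdiff := hasDerivAt_tsum_of_isPreconnected husum Metric.isOpen_ball
    (convex_ball (0:ℝ) R).isPreconnected (fun k y _ => hgderiv k y)
    hbound hxmem ((hexp x).summable) hxmem
  have hfun : (fun z : ℝ => ∑' k, g k z) = fun z => (exp (M₀ + z • B)).trace :=
    funext fun z => (hexp z).tsum_eq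
  rw [hfun, hder.tsum_eq] at hdiff
  exact hdiff

lemma trace_exp_re_pos (H : Matrix n n ℂ) (hH : H.IsHermitian) :
    0 < ((exp H).trace).re := by
  set U := Unitary.toUnits hH.eigenvectorUnitary with hU
  have hsp : H = (U : Matrix n n ℂ) * diagonal (RCLike.ofReal ∘ hH.eigenvalues)
      * ((U⁻¹ : (Matrix n n ℂ)ˣ) : Matrix n n ℂ) :=
    hH.spectral_theorem
  rw [hsp, Matrix.exp_units_conj, Matrix.trace_units_conj, Matrix.exp_diagonal,
    Matrix.trace_diagonal]
  simp only [Pi.coe_exp, Function.comp_apply, Complex.re_sum]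
  refine Finset.sum_pos (fun i _ => ?_) Finset.univ_nonempty
  have hterm : exp ((RCLike.ofReal (hH.eigenvalues i) : ℂ))
      = ((Real.exp (hH.eigenvalues i) : ℝ) : ℂ) := by
    rw [← Complex.exp_eq_exp_ℂ, Complex.ofReal_exp]
    rfl
  rw [hterm, Complex.ofReal_re]
  exact Real.exp_pos _

end Aux

end MassieuPlanckAux


/-- Derivative of the Massieu–Planck function: the derivative of
`x ↦ ln Tr exp (-(S + x • P))` is minus the average of the gross variable `P`. -/
theorem deriv_massieu_planck
    {n : Type*} [Fintype n] [DecidableEq n] [Nonempty n]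
    (S P : Matrix n n ℂ) (hS : Sᴴ = S) (hP : Pᴴ = P) :
    ∀ x : ℝ,
      HasDerivAt (fun y : ℝ => Real.log (trace (exp (-(S + y • P)))).re)
        (-(trace (exp (-(S + x • P)) * P)).re / (trace (exp (-(S + x • P)))).re)
        x := by
  intro x
  have hkey := MassieuPlanckAux.key (-S) (-P) x
  have hfun : ∀ y : ℝ, -S + y • (-P) = -(S + y • P) := fun y => by
    rw [smul_neg]; abel
  simp only [hfun] at hkey
  rw [Matrix.mul_neg, Matrix.trace_neg] at hkey
  have hre := Complex.reCLM.hasFDerivAt.comp_hasDerivAt x hkey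
  simp only [map_neg, Complex.reCLM_apply] at hre
  have hHerm : (-(S + x • P)).IsHermitian := by
    have hsmul : (x • P)ᴴ = x • Pᴴ := by
      ext i j
      simp [Matrix.conjTranspose_apply, star_smul]
    show (-(S + x • P))ᴴ = -(S + x • P)
    rw [Matrix.conjTranspose_neg, Matrix.conjTranspose_add, hS, hsmul, hP]
  have hpos := MassieuPlanckAux.trace_exp_re_pos _ hHerm
  have hlog := (Real.hasDerivAt_log (ne_of_gt hpos)).comp x hre
  rw [div_eq_inv_mul]
  exact hlog
end

section
/- Derivative of the trace of a matrix exponential: let A : ℝ → Matrix n n ℂ be a function that has derivative A' t at a point t (in the sense of HasDerivAt). Then the function t ↦ Tr[exp(A t)] has derivative Tr[exp(A t) * A' t] at t. (No commutativity between A t and A' t is assumed; the trace collapses the Duhamel formula.) -/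
open Matrix NormedSpace

attribute [local instance] Matrix.linftyOpNormedRing Matrix.linftyOpNormedAlgebra

set_option linter.unusedSectionVars false
set_option maxHeartbeats 1000000

noncomputable instance instSNACGCLMMatrixScalar {n : Type*} [Fintype n] [DecidableEq n] :
    SeminormedAddCommGroup (Matrix n n ℂ →L[ℂ] ℂ) :=
  ContinuousLinearMap.toSeminormedAddCommGroup

noncomputable instance instSNACGCLMMatrixMatrix {n : Type*} [Fintype n] [DecidableEq n] :
    SeminormedAddCommGroup (Matrix n n ℂ →L[ℂ] Matrix n n ℂ) :=
  ContinuousLinearMap.toSeminormedAddCommGroup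

noncomputable instance instCompleteSpaceCLMMatrixScalar {n : Type*} [Fintype n]
    [DecidableEq n] :
    @CompleteSpace (Matrix n n ℂ →L[ℂ] ℂ) instSNACGCLMMatrixScalar.toUniformSpace :=
  haveI : SequentialSpace (Matrix n n ℂ) :=
    (inferInstance : @SequentialSpace (Matrix n n ℂ) PseudoMetricSpace.toUniformSpace.toTopologicalSpace)
  ContinuousLinearMap.instCompleteSpace

section aux

variable {n : Type*} [Fintype n] [DecidableEq n] [Nonempty n]

private noncomputable def traceCLM : Matrix n n ℂ →L[ℂ] ℂ :=
  LinearMap.toContinuousLinearMap (Matrix.traceLinearMap n ℂ ℂ)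

@[simp] private lemma traceCLM_apply (M : Matrix n n ℂ) : traceCLM M = trace M := rfl

private noncomputable def Dpow (k : ℕ) (X : Matrix n n ℂ) : Matrix n n ℂ →L[ℂ] Matrix n n ℂ :=
  ∑ i ∈ Finset.range k, ContinuousLinearMap.mulLeftRight ℂ _ (X ^ i) (X ^ (k - 1 - i))

private lemma Dpow_apply (k : ℕ) (X H : Matrix n n ℂ) :
    Dpow k X H = ∑ i ∈ Finset.range k, X ^ i * H * X ^ (k - 1 - i) := by
  simp only [Dpow]
  exact ContinuousLinearMap.sum_apply _ _ _

private noncomputable def fTerm (k : ℕ) (M : Matrix n n ℂ) : ℂ :=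
  ((k.factorial : ℂ))⁻¹ • trace (M ^ k)

private noncomputable def fTerm' (k : ℕ) (M : Matrix n n ℂ) : Matrix n n ℂ →L[ℂ] ℂ :=
  ((k.factorial : ℂ))⁻¹ • (traceCLM.comp (Dpow k M))

private lemma hasFDerivAt_pow_matrix (k : ℕ) (X : Matrix n n ℂ) :
    HasFDerivAt (fun M : Matrix n n ℂ => M ^ k) (Dpow k X) X := by
  induction k with
  | zero =>
    simp only [Dpow, Finset.range_zero, Finset.sum_empty]
    exact hasFDerivAt_const (1 : Matrix n n ℂ) X
  | succ k ih =>
    have h := ih.mul' (hasFDerivAt_id X)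
    have heq : ((fun y : Matrix n n ℂ => y ^ k) * id) = fun M => M ^ (k+1) := by
      funext M; rw [Pi.mul_apply, pow_succ]; rfl
    rw [heq] at h
    refine h.congr_fderiv (Eq.symm ?_)
    refine ContinuousLinearMap.ext fun H => ?_
    simp only [ContinuousLinearMap.add_apply, ContinuousLinearMap.smul_apply,
      MulOpposite.smul_eq_mul_unop, MulOpposite.unop_op, ContinuousLinearMap.coe_id', id_eq, smul_eq_mul,
      Dpow_apply]
    change _ = X ^ k * H + Dpow k X H * X
    rw [Dpow_apply]
    rw [Nat.add_sub_cancel, Finset.sum_range_succ, Nat.sub_self, pow_zero, mul_one,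
      Finset.sum_mul, add_comm]
    congr 1
    refine Finset.sum_congr rfl fun i hi => ?_
    rw [Finset.mem_range] at hi
    rw [show k - i = k - 1 - i + 1 by omega, pow_succ, ← mul_assoc]

private lemma hasFDerivAt_fTerm (k : ℕ) (x : Matrix n n ℂ) :
    HasFDerivAt (fTerm (n := n) k) (fTerm' k x) x := by
  have h1 : HasFDerivAt (fun M : Matrix n n ℂ => trace (M ^ k))
      (traceCLM.comp (Dpow k x)) x := by
    have := traceCLM.hasFDerivAt.comp x (hasFDerivAt_pow_matrix k x)
    exact this
  exact h1.const_smul ((k.factorial : ℂ))⁻¹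

private lemma norm_Dpow_le (k : ℕ) (X : Matrix n n ℂ) {R : ℝ} (hR1 : 1 ≤ R)
    (hX : ‖X‖ ≤ R) : ‖Dpow k X‖ ≤ k * R ^ (k - 1) := by
  have hR0 : (0:ℝ) ≤ R := le_trans zero_le_one hR1
  calc ‖Dpow k X‖ ≤ ∑ i ∈ Finset.range k,
        ‖ContinuousLinearMap.mulLeftRight ℂ (Matrix n n ℂ) (X ^ i) (X ^ (k - 1 - i))‖ :=
        norm_sum_le _ _
    _ ≤ ∑ i ∈ Finset.range k, R ^ (k - 1) := by
        refine Finset.sum_le_sum fun i hi => ?_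
        rw [Finset.mem_range] at hi
        refine le_trans (ContinuousLinearMap.opNorm_mulLeftRight_apply_apply_le ℂ _ _ _) ?_
        have h1 : ‖X ^ i‖ ≤ R ^ i :=
          le_trans (norm_pow_le X i) (pow_le_pow_left₀ (norm_nonneg X) hX i)
        have h2 : ‖X ^ (k - 1 - i)‖ ≤ R ^ (k - 1 - i) :=
          le_trans (norm_pow_le X _) (pow_le_pow_left₀ (norm_nonneg X) hX _)
        calc ‖X ^ i‖ * ‖X ^ (k - 1 - i)‖ ≤ R ^ i * R ^ (k - 1 - i) :=
              mul_le_mul h1 h2 (norm_nonneg _) (pow_nonneg hR0 i)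
          _ = R ^ (k - 1) := by rw [← pow_add]; congr 1; omega
    _ = k * R ^ (k - 1) := by rw [Finset.sum_const, Finset.card_range, nsmul_eq_mul]

private lemma norm_fTerm'_le (k : ℕ) (x : Matrix n n ℂ) {R : ℝ} (hR1 : 1 ≤ R)
    (hx : ‖x‖ ≤ R) :
    ‖fTerm' k x‖ ≤ ‖(traceCLM : Matrix n n ℂ →L[ℂ] ℂ)‖ * (k * R ^ (k - 1)) / k.factorial := by
  have hnorm : ‖((k.factorial : ℂ))⁻¹‖ = ((k.factorial : ℝ))⁻¹ := by
    rw [norm_inv]; norm_num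
  have h2 : ‖traceCLM.comp (Dpow k x)‖ ≤
      ‖(traceCLM : Matrix n n ℂ →L[ℂ] ℂ)‖ * (k * R ^ (k - 1)) :=
    le_trans (ContinuousLinearMap.opNorm_comp_le _ _)
      (mul_le_mul_of_nonneg_left (norm_Dpow_le k x hR1 hx) (norm_nonneg _))
  have hinv0 : (0:ℝ) ≤ ((k.factorial : ℝ))⁻¹ := by positivity
  calc ‖fTerm' k x‖ ≤ ‖((k.factorial : ℂ))⁻¹‖ * ‖traceCLM.comp (Dpow k x)‖ :=
        ContinuousLinearMap.opNorm_smul_le _ _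
    _ = ((k.factorial : ℝ))⁻¹ * ‖traceCLM.comp (Dpow k x)‖ := by rw [hnorm]
    _ ≤ ((k.factorial : ℝ))⁻¹ * (‖(traceCLM : Matrix n n ℂ →L[ℂ] ℂ)‖ * (k * R ^ (k - 1))) :=
        mul_le_mul_of_nonneg_left h2 hinv0
    _ = ‖(traceCLM : Matrix n n ℂ →L[ℂ] ℂ)‖ * (k * R ^ (k - 1)) / k.factorial := by
        field_simp

private lemma summable_bound {C R : ℝ} (hC0 : 0 ≤ C) (hR1 : 1 ≤ R) :
    Summable fun k : ℕ => C * (k * R ^ (k - 1)) / k.factorial := by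
  have hR0 : (0:ℝ) ≤ R := le_trans zero_le_one hR1
  refine Summable.of_nonneg_of_le (fun k => by positivity)
    (fun k => ?_) (((Real.summable_pow_div_factorial (2 * R)).mul_left C))
  have h1 : (k : ℝ) * R ^ (k - 1) ≤ (2 * R) ^ k := by
    rw [mul_pow]
    have hk : (k : ℝ) ≤ 2 ^ k := by exact_mod_cast (Nat.lt_two_pow_self (n := k)).le
    have hRk : R ^ (k - 1) ≤ R ^ k := pow_le_pow_right₀ hR1 (Nat.sub_le k 1)
    exact mul_le_mul hk hRk (by positivity) (by positivity)
  calc C * (k * R ^ (k - 1)) / k.factorial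
      ≤ C * (2 * R) ^ k / k.factorial := by gcongr
    _ = C * ((2 * R) ^ k / k.factorial) := by ring

private lemma trace_exp_eq_tsum (M : Matrix n n ℂ) :
    trace (exp M) = ∑' k, fTerm k M := by
  have hsum : Summable fun k : ℕ => ((k.factorial : ℂ))⁻¹ • M ^ k :=
    expSeries_summable' (𝕂 := ℂ) M
  have := traceCLM.map_tsum hsum
  rw [exp_eq_tsum ℂ]
  simpa [fTerm] using this

private lemma summable_fTerm (M : Matrix n n ℂ) : Summable fun k => fTerm k M := by
  have hsum : Summable fun k : ℕ => ((k.factorial : ℂ))⁻¹ • M ^ k :=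
    expSeries_summable' (𝕂 := ℂ) M
  have h2 := hsum.map (traceCLM : Matrix n n ℂ →L[ℂ] ℂ).toLinearMap.toAddMonoidHom
    traceCLM.continuous
  refine h2.congr fun k => ?_
  simp [fTerm, Function.comp, _root_.map_smul]

private lemma fTerm'_apply_eq (k : ℕ) (X A' : Matrix n n ℂ) :
    fTerm' k X A' = ((k.factorial : ℂ))⁻¹ * k * trace (X ^ (k - 1) * A') := by
  rw [fTerm']
  simp only [ContinuousLinearMap.smul_apply, ContinuousLinearMap.comp_apply, traceCLM_apply,
    Dpow_apply, smul_eq_mul]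
  rw [trace_sum]
  have h : ∀ i ∈ Finset.range k, trace (X ^ i * A' * X ^ (k - 1 - i)) =
      trace (X ^ (k - 1) * A') := by
    intro i hi
    rw [Finset.mem_range] at hi
    rw [trace_mul_cycle, ← pow_add, show k - 1 - i + i = k - 1 by omega]
  rw [Finset.sum_congr rfl h, Finset.sum_const, Finset.card_range, nsmul_eq_mul]
  ring

private lemma tsum_duhamel (X A' : Matrix n n ℂ)
    (hs : Summable fun k => fTerm' k X A') :
    ∑' k, fTerm' k X A' = trace (exp X * A') := by
  rw [hs.tsum_eq_zero_add]
  have h0 : fTerm' 0 X A' = 0 := by simp [fTerm'_apply_eq]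
  rw [h0, zero_add]
  have hstep : ∀ k : ℕ, fTerm' (k + 1) X A' =
      ((k.factorial : ℂ))⁻¹ • trace (X ^ k * A') := by
    intro k
    rw [fTerm'_apply_eq, Nat.add_sub_cancel, smul_eq_mul, Nat.factorial_succ]
    push_cast
    have hk : ((k : ℂ) + 1) ≠ 0 := Nat.cast_add_one_ne_zero k
    have hfact : ((k.factorial : ℂ)) ≠ 0 := by
      exact_mod_cast Nat.cast_ne_zero.mpr k.factorial_ne_zero
    field_simp
  rw [tsum_congr hstep]
  have hsum : Summable fun k : ℕ => ((k.factorial : ℂ))⁻¹ • X ^ k :=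
    expSeries_summable' (𝕂 := ℂ) X
  set T : Matrix n n ℂ →L[ℂ] ℂ :=
    traceCLM.comp (ContinuousLinearMap.mulLeftRight ℂ (Matrix n n ℂ) 1 A') with hT
  have hTsum := T.map_tsum hsum
  rw [exp_eq_tsum ℂ]
  have hTval : ∀ M : Matrix n n ℂ, T M = trace (M * A') := by
    intro M
    change trace (1 * M * A') = _
    rw [one_mul]
  calc ∑' k : ℕ, ((k.factorial : ℂ))⁻¹ • trace (X ^ k * A')
      = ∑' k : ℕ, T (((k.factorial : ℂ))⁻¹ • X ^ k) := by
        refine tsum_congr fun k => ?_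
        rw [T.map_smul, hTval]
    _ = T (∑' k : ℕ, ((k.factorial : ℂ))⁻¹ • X ^ k) := hTsum.symm
    _ = trace ((∑' k : ℕ, ((k.factorial : ℂ))⁻¹ • X ^ k) * A') := hTval _

end aux

/-- Derivative of the trace of a matrix exponential: the trace collapses the Duhamel
formula, so no commutativity between `A t` and `A' t` is needed. -/
theorem hasDerivAt_trace_exp
    {n : Type*} [Fintype n] [DecidableEq n] [Nonempty n]
    (A : ℝ → Matrix n n ℂ) (A' : Matrix n n ℂ) (t : ℝ)
    (hA : HasDerivAt A A' t) :
    HasDerivAt (fun s : ℝ => trace (exp (A s))) (trace (exp (A t) * A')) t := by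
  classical
  have hR1 : (1:ℝ) ≤ ‖A t‖ + 1 := le_add_of_nonneg_left (norm_nonneg (A t))
  have hu_sum : Summable fun k : ℕ =>
      ‖(traceCLM : Matrix n n ℂ →L[ℂ] ℂ)‖ * (k * (‖A t‖ + 1) ^ (k - 1)) / k.factorial :=
    summable_bound (norm_nonneg _) hR1
  have hbound : ∀ (k : ℕ), ∀ x ∈ Metric.ball (0 : Matrix n n ℂ) (‖A t‖ + 1),
      ‖fTerm' k x‖ ≤ ‖(traceCLM : Matrix n n ℂ →L[ℂ] ℂ)‖ * (k * (‖A t‖ + 1) ^ (k - 1)) /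
        k.factorial := by
    intro k x hx
    rw [mem_ball_zero_iff] at hx
    exact norm_fTerm'_le k x hR1 hx.le
  have hXmem : A t ∈ Metric.ball (0 : Matrix n n ℂ) (‖A t‖ + 1) := by
    rw [mem_ball_zero_iff]; linarith
  have hF : HasFDerivAt (fun M => ∑' k, fTerm k M) (∑' k, fTerm' k (A t)) (A t) :=
    hasFDerivAt_tsum_of_isPreconnected hu_sum Metric.isOpen_ball
      (convex_ball _ _).isPreconnected (fun k x _ => hasFDerivAt_fTerm k x) hbound hXmem
      (summable_fTerm (A t)) hXmem
  have hcomp := (hF.restrictScalars ℝ).comp_hasDerivAt t hA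
  have hfun : ((fun M => ∑' k, fTerm k M) ∘ A) = fun s : ℝ => trace (exp (A s)) :=
    funext fun s => (trace_exp_eq_tsum (A s)).symm
  rw [hfun] at hcomp
  have hsumf' : Summable fun k => fTerm' k (A t) :=
    Summable.of_norm_bounded hu_sum fun k => hbound k (A t) hXmem
  have hsum_val : Summable fun k => fTerm' k (A t) A' := by
    have := hsumf'.map (ContinuousLinearMap.apply ℂ ℂ A').toLinearMap.toAddMonoidHom
      (ContinuousLinearMap.apply ℂ ℂ A').continuous
    exact this
  have happly : (∑' k, fTerm' k (A t)) A' = ∑' k, fTerm' k (A t) A' := by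
    have := (ContinuousLinearMap.apply ℂ ℂ A').map_tsum hsumf'
    exact this
  have hval : ((∑' k, fTerm' k (A t)).restrictScalars ℝ) A' = trace (exp (A t) * A') := by
    have hr : ((∑' k, fTerm' k (A t)).restrictScalars ℝ) A' = (∑' k, fTerm' k (A t)) A' := rfl
    rw [hr, happly, tsum_duhamel (A t) A' hsum_val]
  exact hcomp.congr_deriv hval
end

section
/- Convexity of the logarithmic trace-exponential on Hermitian matrices: for all Hermitian n×n complex matrices A and B and every t ∈ [0,1], ln Tr[exp(t • A + (1−t) • B)] ≤ t · ln Tr[exp(A)] + (1−t) · ln Tr[exp(B)], where the traces are positive real numbers. -/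
open Matrix NormedSpace Finset

namespace LogTraceExpAux

variable {n : Type*} [Fintype n] [DecidableEq n]

/-- Exponential of a Hermitian matrix via its spectral decomposition. -/
lemma exp_hermitian (A : Matrix n n ℂ) (hA : A.IsHermitian) :
    exp A = (hA.eigenvectorUnitary : Matrix n n ℂ) *
      diagonal (fun j => (Real.exp (hA.eigenvalues j) : ℂ)) *
      star (hA.eigenvectorUnitary : Matrix n n ℂ) := by
  have hu : IsUnit ((hA.eigenvectorUnitary : Matrix n n ℂ)) :=
    ⟨Unitary.toUnits hA.eigenvectorUnitary, rfl⟩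
  have hinv : (hA.eigenvectorUnitary : Matrix n n ℂ)⁻¹
      = star (hA.eigenvectorUnitary : Matrix n n ℂ) :=
    Matrix.inv_eq_left_inv (Matrix.mem_unitaryGroup_iff'.mp hA.eigenvectorUnitary.2)
  conv_lhs => rw [hA.spectral_theorem, Unitary.conjStarAlgAut_apply, ← hinv]
  rw [Matrix.exp_conj _ _ hu, Matrix.exp_diagonal, hinv]
  congr 2
  rw [Pi.exp_def]
  funext j
  simp [Function.comp, ← Complex.exp_eq_exp_ℂ, Complex.ofReal_exp]

lemma trace_exp_re (A : Matrix n n ℂ) (hA : A.IsHermitian) :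
    (trace (exp A)).re = ∑ i, Real.exp (hA.eigenvalues i) := by
  rw [exp_hermitian A hA, Matrix.trace_mul_cycle,
    Matrix.mem_unitaryGroup_iff'.mp hA.eigenvectorUnitary.2, Matrix.one_mul,
    Matrix.trace_diagonal, Complex.re_sum]
  exact Finset.sum_congr rfl fun i _ => Complex.ofReal_re _

/-- Key diagonal-entry computation for conjugations by a matrix `W`. -/
lemma diag_conj_re (W : Matrix n n ℂ) (d : n → ℝ) (i : n) :
    ((star W * (diagonal (fun j => (d j : ℂ)) * W)) i i).re
      = ∑ j, Complex.normSq (W j i) * d j := by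
  rw [Matrix.mul_apply, Complex.re_sum]
  refine Finset.sum_congr rfl fun j _ => ?_
  rw [Matrix.diagonal_mul, Matrix.star_apply]
  simp [Complex.mul_re, Complex.mul_im, Complex.normSq_apply]
  ring

/-- **Peierls' inequality**: for Hermitian `A` and unitary `U`, the sum of the exponentials of
the diagonal entries of `Uᴴ A U` is at most the trace of `exp A`. -/
lemma peierls (A : Matrix n n ℂ) (hA : A.IsHermitian) (U : Matrix n n ℂ)
    (hU : U ∈ Matrix.unitaryGroup n ℂ) :
    ∑ i, Real.exp ((star U * A * U) i i).re ≤ (trace (exp A)).re := by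
  set V : Matrix n n ℂ := (hA.eigenvectorUnitary : Matrix n n ℂ) with hV
  set μ : n → ℝ := hA.eigenvalues with hμ
  set W : Matrix n n ℂ := star V * U with hW
  have hV1 : star V * V = 1 := by
    rw [hV]; exact Matrix.mem_unitaryGroup_iff'.mp hA.eigenvectorUnitary.2
  have hV2 : V * star V = 1 := by
    rw [hV]; exact Matrix.mem_unitaryGroup_iff.mp hA.eigenvectorUnitary.2
  have hU1 : star U * U = 1 := Matrix.mem_unitaryGroup_iff'.mp hU
  have hU2 : U * star U = 1 := Matrix.mem_unitaryGroup_iff.mp hU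
  have hWW : star W * W = 1 := by
    rw [hW, Matrix.star_mul, star_star, Matrix.mul_assoc, ← Matrix.mul_assoc V, hV2,
      Matrix.one_mul, hU1]
  have hWW' : W * star W = 1 := by
    rw [hW, Matrix.star_mul, star_star, Matrix.mul_assoc, ← Matrix.mul_assoc U, hU2,
      Matrix.one_mul, hV1]
  -- weights
  have hcol : ∀ i, ∑ j, Complex.normSq (W j i) = 1 := by
    intro i
    have h1 : ((star W * W) i i).re = 1 := by rw [hWW]; simp [Matrix.one_apply]
    rw [Matrix.mul_apply, Complex.re_sum] at h1
    rw [← h1]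
    refine Finset.sum_congr rfl fun j _ => ?_
    rw [Matrix.star_apply]
    simp [Complex.normSq_apply, Complex.mul_re]
  have hrow : ∀ j, ∑ i, Complex.normSq (W j i) = 1 := by
    intro j
    have h1 : ((W * star W) j j).re = 1 := by rw [hWW']; simp [Matrix.one_apply]
    rw [Matrix.mul_apply, Complex.re_sum] at h1
    rw [← h1]
    refine Finset.sum_congr rfl fun i _ => ?_
    rw [Matrix.star_apply]
    simp [Complex.normSq_apply, Complex.mul_re]
  -- conjugation identities
  have hconjA : star U * A * U = star W * (diagonal (fun j => (μ j : ℂ)) * W) := by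
    conv_lhs => rw [hA.spectral_theorem, Unitary.conjStarAlgAut_apply]
    rw [hW, Matrix.star_mul, star_star]
    simp only [Matrix.mul_assoc, hμ, hV]
    rfl
  have hconjE : star U * exp A * U
      = star W * (diagonal (fun j => (Real.exp (μ j) : ℂ)) * W) := by
    rw [exp_hermitian A hA, hW, Matrix.star_mul, star_star]
    simp only [Matrix.mul_assoc, hμ, hV]
  -- Jensen per column
  have jensen : ∀ i, Real.exp ((star U * A * U) i i).re
      ≤ ((star U * exp A * U) i i).re := by
    intro i
    rw [hconjA, hconjE, diag_conj_re, diag_conj_re]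
    have := convexOn_exp.map_sum_le (t := Finset.univ)
      (w := fun j => Complex.normSq (W j i)) (p := fun j => μ j)
      (fun j _ => Complex.normSq_nonneg _) (hcol i) (fun j _ => Set.mem_univ _)
    simpa [smul_eq_mul] using this
  calc ∑ i, Real.exp ((star U * A * U) i i).re
      ≤ ∑ i, ((star U * exp A * U) i i).re := Finset.sum_le_sum fun i _ => jensen i
    _ = (trace (star U * exp A * U)).re := by rw [Matrix.trace, Complex.re_sum]; rfl
    _ = (trace (exp A)).re := by
        rw [Matrix.trace_mul_cycle, hU2, Matrix.one_mul]

/-- A purely real-analytic log-sum-exp convexity estimate. -/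
lemma log_sum_exp_le [Nonempty n] (a b : n → ℝ) (t TA TB : ℝ)
    (ht0 : 0 ≤ t) (ht1 : t ≤ 1) (hTA : 0 < TA) (hTB : 0 < TB)
    (hA : ∑ i, Real.exp (a i) ≤ TA) (hB : ∑ i, Real.exp (b i) ≤ TB) :
    Real.log (∑ i, Real.exp (t * a i + (1 - t) * b i))
      ≤ t * Real.log TA + (1 - t) * Real.log TB := by
  have ht1' : (0 : ℝ) ≤ 1 - t := by linarith
  set SA : ℝ := ∑ i, Real.exp (a i) with hSA
  set SB : ℝ := ∑ i, Real.exp (b i) with hSB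
  have hSApos : 0 < SA := Finset.sum_pos (fun i _ => Real.exp_pos _) Finset.univ_nonempty
  have hSBpos : 0 < SB := Finset.sum_pos (fun i _ => Real.exp_pos _) Finset.univ_nonempty
  have key : ∑ i, Real.exp (t * a i + (1 - t) * b i) ≤ SA ^ t * SB ^ (1 - t) := by
    have step1 : ∀ i, Real.exp (t * a i + (1 - t) * b i)
        ≤ SA ^ t * SB ^ (1 - t) *
          (t * (Real.exp (a i) / SA) + (1 - t) * (Real.exp (b i) / SB)) := by
      intro i
      have hgm := Real.geom_mean_le_arith_mean2_weighted ht0 ht1'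
        (le_of_lt (div_pos (Real.exp_pos (a i)) hSApos))
        (le_of_lt (div_pos (Real.exp_pos (b i)) hSBpos)) (by ring)
      have hprod : Real.exp (t * a i + (1 - t) * b i)
          = SA ^ t * SB ^ (1 - t) *
            ((Real.exp (a i) / SA) ^ t * (Real.exp (b i) / SB) ^ (1 - t)) := by
        rw [Real.exp_add, mul_comm t (a i), mul_comm (1 - t) (b i),
          Real.exp_mul, Real.exp_mul,
          Real.div_rpow (le_of_lt (Real.exp_pos _)) hSApos.le,
          Real.div_rpow (le_of_lt (Real.exp_pos _)) hSBpos.le]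
        have h1 : SA ^ t ≠ 0 := (Real.rpow_pos_of_pos hSApos t).ne'
        have h2 : SB ^ (1 - t) ≠ 0 := (Real.rpow_pos_of_pos hSBpos (1 - t)).ne'
        field_simp
      rw [hprod]
      refine mul_le_mul_of_nonneg_left hgm ?_
      have := Real.rpow_nonneg hSApos.le t
      have := Real.rpow_nonneg hSBpos.le (1 - t)
      positivity
    calc ∑ i, Real.exp (t * a i + (1 - t) * b i)
        ≤ ∑ i, SA ^ t * SB ^ (1 - t) *
            (t * (Real.exp (a i) / SA) + (1 - t) * (Real.exp (b i) / SB)) :=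
          Finset.sum_le_sum fun i _ => step1 i
      _ = SA ^ t * SB ^ (1 - t) *
            (t * (SA / SA) + (1 - t) * (SB / SB)) := by
          rw [← Finset.mul_sum]
          congr 1
          rw [Finset.sum_add_distrib, ← Finset.mul_sum, ← Finset.mul_sum,
            ← Finset.sum_div, ← Finset.sum_div]
      _ = SA ^ t * SB ^ (1 - t) := by
          rw [div_self hSApos.ne', div_self hSBpos.ne']
          ring
  have key2 : ∑ i, Real.exp (t * a i + (1 - t) * b i) ≤ TA ^ t * TB ^ (1 - t) := by
    refine key.trans (mul_le_mul ?_ ?_ ?_ ?_)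
    · exact Real.rpow_le_rpow hSApos.le hA ht0
    · exact Real.rpow_le_rpow hSBpos.le hB ht1'
    · exact Real.rpow_nonneg hSBpos.le (1 - t)
    · exact Real.rpow_nonneg (hSApos.trans_le hA).le t
  have hpos : 0 < ∑ i, Real.exp (t * a i + (1 - t) * b i) :=
    Finset.sum_pos (fun i _ => Real.exp_pos _) Finset.univ_nonempty
  calc Real.log (∑ i, Real.exp (t * a i + (1 - t) * b i))
      ≤ Real.log (TA ^ t * TB ^ (1 - t)) := Real.log_le_log hpos key2
    _ = t * Real.log TA + (1 - t) * Real.log TB := by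
        rw [Real.log_mul (Real.rpow_pos_of_pos hTA t).ne'
          (Real.rpow_pos_of_pos hTB (1 - t)).ne',
          Real.log_rpow hTA, Real.log_rpow hTB]

end LogTraceExpAux

open LogTraceExpAux

/-- Convexity of the logarithmic trace-exponential on Hermitian matrices. -/
theorem log_trace_exp_convex
    {n : Type*} [Fintype n] [DecidableEq n] [Nonempty n]
    (A B : Matrix n n ℂ) (hA : Aᴴ = A) (hB : Bᴴ = B)
    (t : ℝ) (ht : t ∈ Set.Icc (0 : ℝ) 1) :
    Real.log (trace (exp (t • A + (1 - t) • B))).re ≤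
      t * Real.log (trace (exp A)).re + (1 - t) * Real.log (trace (exp B)).re := by
  obtain ⟨ht0, ht1⟩ := ht
  have hA' : A.IsHermitian := hA
  have hB' : B.IsHermitian := hB
  have hsmul : ∀ (r : ℝ) (M : Matrix n n ℂ), r • M = (r : ℂ) • M := by
    intro r M; ext i j; simp [Complex.real_smul]
  have hC : (t • A + (1 - t) • B).IsHermitian := by
    rw [hsmul, hsmul]
    unfold Matrix.IsHermitian
    rw [conjTranspose_add, conjTranspose_smul, conjTranspose_smul, hA, hB,
      Complex.star_def, Complex.conj_ofReal, Complex.conj_ofReal]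
  have hU : (hC.eigenvectorUnitary : Matrix n n ℂ) ∈ Matrix.unitaryGroup n ℂ :=
    hC.eigenvectorUnitary.2
  set U : Matrix n n ℂ := (hC.eigenvectorUnitary : Matrix n n ℂ) with hUdef
  have hlam_eq : ∀ i, hC.eigenvalues i
      = t * ((star U * A * U) i i).re + (1 - t) * ((star U * B * U) i i).re := by
    intro i
    have h1 : ((star U * (t • A + (1 - t) • B) * U) i i).re = hC.eigenvalues i := by
      rw [← Unitary.conjStarAlgAut_star_apply (S := ℂ) hC.eigenvectorUnitary,
        hC.conjStarAlgAut_star_eigenvectorUnitary]; simp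
    rw [← h1]
    have hexpand : star U * (t • A + (1 - t) • B) * U
        = t • (star U * A * U) + (1 - t) • (star U * B * U) := by
      rw [hsmul t, hsmul (1 - t)]
      rw [Matrix.mul_add, Matrix.add_mul, Matrix.mul_smul, Matrix.smul_mul,
        Matrix.mul_smul, Matrix.smul_mul, ← hsmul, ← hsmul]
    rw [hexpand]
    simp [Matrix.add_apply, Matrix.smul_apply, Complex.real_smul, Complex.re_ofReal_mul]
  -- positivity of the traces
  have hTApos : 0 < (trace (exp A)).re := by
    rw [trace_exp_re A hA']
    exact Finset.sum_pos (fun i _ => Real.exp_pos _) Finset.univ_nonempty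
  have hTBpos : 0 < (trace (exp B)).re := by
    rw [trace_exp_re B hB']
    exact Finset.sum_pos (fun i _ => Real.exp_pos _) Finset.univ_nonempty
  have hTC : (trace (exp (t • A + (1 - t) • B))).re
      = ∑ i, Real.exp (t * ((star U * A * U) i i).re + (1 - t) * ((star U * B * U) i i).re) := by
    rw [trace_exp_re _ hC]
    exact Finset.sum_congr rfl fun i _ => by rw [hlam_eq i]
  rw [hTC]
  exact log_sum_exp_le _ _ t _ _ ht0 ht1 hTApos hTBpos
    (peierls A hA' U hU) (peierls B hB' U hU)
end

section
/- Liouville equation with source for the NESOM-2 statistical operator (constant Hamiltonian): let H be a Hermitian n×n complex matrix, ε > 0, and let ρ_q : ℝ → Matrix n n ℂ be continuous and bounded. Define ρ_ε : ℝ → Matrix n n ℂ by ρ_ε(t) = ε • ∫_{−∞}^{t} e^{ε(s−t)} • (exp(−(i(t−s)) • H) * ρ_q(s) * exp((i(t−s)) • H)) ds. Then ρ_ε is differentiable and for every t: ρ_ε'(t) + i • (H * ρ_ε(t) − ρ_ε(t) * H) = ε • (ρ_q(t) − ρ_ε(t)). -/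
open Matrix NormedSpace MeasureTheory

attribute [local instance] Matrix.linftyOpNormedRing Matrix.linftyOpNormedAlgebra

open Set Real

lemma expInt {ε : ℝ} (hε : 0 < ε) (t : ℝ) :
    IntegrableOn (fun s => Real.exp (ε * s)) (Set.Iic t) := by
  rw [← (Measure.measurePreserving_neg (volume : Measure ℝ)).integrableOn_comp_preimage
      (Homeomorph.neg ℝ).measurableEmbedding]
  simp only [Function.comp_def, neg_preimage, neg_Iic]
  rw [integrableOn_Ici_iff_integrableOn_Ioi]
  exact (exp_neg_integrableOn_Ioi (-t) hε).congr_fun (fun x _ => by ring_nf) measurableSet_Ioi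

lemma expHadd {n : Type*} [Fintype n] [DecidableEq n] (H : Matrix n n ℂ) (a b : ℂ) :
    exp ((a + b) • H) = exp (a • H) * exp (b • H) := by
  rw [add_smul]
  exact Matrix.exp_add_of_commute _ _ (((Commute.refl H).smul_left a).smul_right b)

lemma normExpLe {n : Type*} [Fintype n] [DecidableEq n] [Nonempty n]
    (H : Matrix n n ℂ) (hH : Hᴴ = H) (s : ℝ) :
    ‖exp ((Complex.I * (s : ℂ)) • H)‖ ≤ (Fintype.card n : ℝ) := by
  have hmem : exp ((Complex.I * (s : ℂ)) • H) ∈ Matrix.unitaryGroup n ℂ := by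
    rw [Matrix.mem_unitaryGroup_iff']
    have h1 : star (exp ((Complex.I * (s : ℂ)) • H)) = exp ((-(Complex.I * s)) • H) := by
      show (exp ((Complex.I * (s : ℂ)) • H))ᴴ = _
      rw [← Matrix.exp_conjTranspose]
      congr 1
      rw [Matrix.conjTranspose_smul, hH]
      congr 1
      simp [Complex.ext_iff]
    rw [h1, ← expHadd]
    simp
  have hentry : ∀ i j, ‖exp ((Complex.I * (s : ℂ)) • H) i j‖ ≤ 1 :=
    fun i j => entry_norm_bound_of_unitary hmem i j
  rw [Matrix.linfty_opNorm_def]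
  have : ((Finset.univ : Finset n).sup fun i : n => ∑ j : n, ‖exp ((Complex.I * (s:ℂ)) • H) i j‖₊)
      ≤ (Fintype.card n : NNReal) := by
    apply Finset.sup_le
    intro i _
    calc ∑ j : n, ‖exp ((Complex.I * (s:ℂ)) • H) i j‖₊ ≤ ∑ _j : n, 1 :=
          Finset.sum_le_sum (fun j _ => by
            have := hentry i j
            rwa [← NNReal.coe_le_coe, coe_nnnorm, NNReal.coe_one])
      _ = Fintype.card n := by simp
  exact_mod_cast this

lemma normExpLe' {n : Type*} [Fintype n] [DecidableEq n] [Nonempty n]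
    (H : Matrix n n ℂ) (hH : Hᴴ = H) (s : ℝ) :
    ‖exp ((-(Complex.I * (s : ℂ))) • H)‖ ≤ (Fintype.card n : ℝ) := by
  have : (-(Complex.I * (s:ℂ))) = Complex.I * ((-s : ℝ) : ℂ) := by push_cast; ring
  rw [this]
  exact normExpLe H hH (-s)

/-- Liouville equation with source for the NESOM-2 statistical operator, for a
time-independent Hamiltonian `H`: the quasi-invariant `ρ_ε` built from the
quasi-equilibrium operator `ρ_q` satisfies
`ρ_ε' + i [H, ρ_ε] = ε (ρ_q - ρ_ε)`. -/
theorem neso2_liouville_with_source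
    {n : Type*} [Fintype n] [DecidableEq n] [Nonempty n]
    (H : Matrix n n ℂ) (hH : Hᴴ = H)
    (ε : ℝ) (hε : 0 < ε)
    (ρq : ℝ → Matrix n n ℂ) (hqc : Continuous ρq)
    (hqb : ∃ C : ℝ, ∀ s : ℝ, ‖ρq s‖ ≤ C)
    (ρε : ℝ → Matrix n n ℂ)
    (hρε : ∀ t : ℝ, ρε t = ε • ∫ s in Set.Iic t, Real.exp (ε * (s - t)) •
      (exp ((-(Complex.I * ((t : ℂ) - (s : ℂ)))) • H) * ρq s *
        exp ((Complex.I * ((t : ℂ) - (s : ℂ))) • H))) :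
    ∀ t : ℝ, HasDerivAt ρε
      (ε • (ρq t - ρε t) - Complex.I • (H * ρε t - ρε t * H)) t := by
  obtain ⟨C, hC⟩ := hqb
  set N : ℝ := (Fintype.card n : ℝ) with hN
  set g : ℝ → Matrix n n ℂ := fun s => Real.exp (ε * s) •
    (exp ((Complex.I * (s:ℂ)) • H) * ρq s * exp ((-(Complex.I * (s:ℂ))) • H)) with hg
  -- continuity
  have hUc : Continuous fun s : ℝ => exp ((Complex.I * (s:ℂ)) • H) :=
    exp_continuous.comp ((continuous_const.mul Complex.continuous_ofReal).smul continuous_const)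
  have hVc : Continuous fun s : ℝ => exp ((-(Complex.I * (s:ℂ))) • H) :=
    exp_continuous.comp (((continuous_const.mul Complex.continuous_ofReal).neg).smul
      continuous_const)
  have hgc : Continuous g :=
    ((Real.continuous_exp.comp (continuous_const.mul continuous_id))).smul
      ((hUc.mul hqc).mul hVc)
  have hgc' : @Continuous ℝ (Matrix n n ℂ) _ PseudoMetricSpace.toUniformSpace.toTopologicalSpace g :=
    hgc
  -- bound
  have hgb : ∀ s, ‖g s‖ ≤ (N * C * N) * Real.exp (ε * s) := by
    intro s
    have h0 : (0:ℝ) ≤ C := le_trans (norm_nonneg _) (hC 0)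
    rw [hg]
    simp only
    rw [norm_smul, Real.norm_eq_abs, abs_of_pos (Real.exp_pos _), mul_comm]
    have hA := normExpLe H hH s
    have hB := normExpLe' H hH s
    have hq := hC s
    have hN0 : (0:ℝ) ≤ N := le_trans (norm_nonneg _) hA
    gcongr
    calc ‖exp ((Complex.I * (s:ℂ)) • H) * ρq s * exp ((-(Complex.I * (s:ℂ))) • H)‖
        ≤ ‖exp ((Complex.I * (s:ℂ)) • H) * ρq s‖ * ‖exp ((-(Complex.I * (s:ℂ))) • H)‖ :=
          norm_mul_le _ _
      _ ≤ (N * C) * N := by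
          refine mul_le_mul ?_ hB (norm_nonneg _) (mul_nonneg hN0 h0)
          exact le_trans (norm_mul_le _ _)
            (mul_le_mul hA hq (norm_nonneg _) hN0)
  -- integrability
  have hgint : ∀ τ : ℝ, @IntegrableOn ℝ (Matrix n n ℂ) _
      PseudoMetricSpace.toUniformSpace.toTopologicalSpace _ g (Iic τ) volume := by
    intro τ
    apply Integrable.mono' ((expInt hε τ).const_mul (N * C * N))
      hgc'.aestronglyMeasurable.restrict
    exact ae_of_all _ fun s => hgb s
  intro t
  -- FTC
  have hGder : HasDerivAt (fun τ : ℝ => ∫ s in Iic τ, g s) (g t) t := by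
    have heq : (fun τ : ℝ => ∫ s in Iic τ, g s) =
        fun τ => (∫ s in Iic (0:ℝ), g s) + ∫ s in (0:ℝ)..τ, g s := by
      funext τ
      rw [← intervalIntegral.integral_Iic_sub_Iic (hgint 0) (hgint τ)]
      abel
    rw [heq]
    exact (intervalIntegral.integral_hasDerivAt_right (hgc'.intervalIntegrable _ _)
      (hgc'.stronglyMeasurableAtFilter _ _) hgc'.continuousAt).const_add _
  -- representation
  have hrep : ∀ τ : ℝ, ρε τ = (ε * Real.exp (-(ε * τ))) •
      (exp ((-(Complex.I * (τ:ℂ))) • H) * (∫ s in Iic τ, g s) *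
        exp ((Complex.I * (τ:ℂ)) • H)) := by
    intro τ
    rw [hρε τ]
    have hfun2 : (fun s : ℝ => Real.exp (ε * (s - τ)) •
        (exp ((-(Complex.I * ((τ:ℂ) - (s:ℂ)))) • H) * ρq s *
          exp ((Complex.I * ((τ:ℂ) - (s:ℂ))) • H)))
        = fun s => Real.exp (-(ε*τ)) • ((ContinuousLinearMap.mulLeftRight ℝ _
            (exp ((-(Complex.I * (τ:ℂ))) • H)) (exp ((Complex.I * (τ:ℂ)) • H))) (g s)) := by
      funext s
      rw [ContinuousLinearMap.mulLeftRight_apply, hg]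
      simp only
      have e1 : exp ((-(Complex.I * ((τ:ℂ)-(s:ℂ)))) • H) =
          exp ((-(Complex.I * (τ:ℂ))) • H) * exp ((Complex.I * (s:ℂ)) • H) := by
        rw [← expHadd]; congr 2; ring
      have e2 : exp ((Complex.I * ((τ:ℂ)-(s:ℂ))) • H) =
          exp ((-(Complex.I * (s:ℂ))) • H) * exp ((Complex.I * (τ:ℂ)) • H) := by
        rw [← expHadd]; congr 2; ring
      rw [e1, e2, mul_smul_comm, smul_mul_assoc, smul_smul]
      congr 1
      · rw [← Real.exp_add]; congr 1; ring
      · simp only [mul_assoc]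
    rw [hfun2, integral_smul,
      (ContinuousLinearMap.mulLeftRight ℝ (Matrix n n ℂ) _ _).integral_comp_comm (hgint τ),
      ContinuousLinearMap.mulLeftRight_apply, smul_smul]
  -- derivatives of the factors
  have hA : HasDerivAt (fun τ : ℝ => exp ((-(Complex.I * (τ:ℂ))) • H))
      ((-Complex.I) • (exp ((-(Complex.I * (t:ℂ))) • H) * H)) t := by
    have h1 := hasDerivAt_exp_smul_const (𝕂 := ℂ) H (-(Complex.I * (t:ℂ)))
    have h2 : HasDerivAt (fun τ : ℝ => -(Complex.I * (τ:ℂ))) (-Complex.I) t := by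
      simpa [Pi.neg_def] using (Complex.ofRealCLM.hasDerivAt.const_mul Complex.I).neg
    exact HasDerivAt.scomp_of_eq t h1 h2 rfl
  have hB : HasDerivAt (fun τ : ℝ => exp ((Complex.I * (τ:ℂ)) • H))
      (Complex.I • (exp ((Complex.I * (t:ℂ)) • H) * H)) t := by
    have h1 := hasDerivAt_exp_smul_const (𝕂 := ℂ) H (Complex.I * (t:ℂ))
    have h2 : HasDerivAt (fun τ : ℝ => Complex.I * (τ:ℂ)) Complex.I t := by
      simpa using Complex.ofRealCLM.hasDerivAt.const_mul Complex.I
    exact HasDerivAt.scomp_of_eq t h1 h2 rfl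
  have hφ : HasDerivAt (fun τ : ℝ => ε * Real.exp (-(ε * τ)))
      (-(ε * (ε * Real.exp (-(ε * t))))) t := by
    have h2 : HasDerivAt (fun τ : ℝ => -(ε * τ)) (-ε) t := by
      simpa [Pi.neg_def] using ((hasDerivAt_id t).const_mul ε).neg
    have := h2.exp.const_mul ε
    rw [show -(ε * (ε * Real.exp (-(ε * t)))) = ε * (Real.exp (-(ε * t)) * -ε) by ring]
    exact this
  have hP := (hA.mul hGder).mul hB
  have hmain := hφ.smul hP
  have hfun : ρε = fun τ => (ε * Real.exp (-(ε * τ))) •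
      (exp ((-(Complex.I * (τ:ℂ))) • H) * (∫ s in Iic τ, g s) *
        exp ((Complex.I * (τ:ℂ)) • H)) := funext hrep
  rw [hfun]
  refine hmain.congr_deriv ?_
  symm
  -- algebra
  set a := exp ((-(Complex.I * (t:ℂ))) • H) with ha
  set b := exp ((Complex.I * (t:ℂ)) • H) with hb
  set G := ∫ s in Iic t, g s with hG
  have hab : a * b = 1 := by rw [ha, hb, ← expHadd]; simp
  have hHa : a * H = H * a := by
    have : Commute H a := (((Commute.refl H).smul_right _).exp_right)
    exact this.symm.eq
  have hkey : a * g t * b = Real.exp (ε * t) • ρq t := by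
    rw [hg]
    simp only
    rw [mul_smul_comm, smul_mul_assoc]
    congr 1
    simp only [← mul_assoc]
    rw [hab, one_mul, mul_assoc, hab, mul_one]
  have hc : ε * Real.exp (-(ε * t)) * Real.exp (ε * t) = ε := by
    rw [mul_assoc, ← Real.exp_add]; simp
  have hHa' : ∀ y : Matrix n n ℂ, a * (H * y) = H * (a * y) := fun y => by
    rw [← mul_assoc, hHa, mul_assoc]
  simp only
  rw [smul_add (ε * Real.exp (-(ε * t))), add_mul, smul_add, hkey, smul_smul, hc]
  simp only [smul_mul_assoc, mul_smul_comm, mul_assoc, hHa', Pi.mul_apply]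
  module
end

section
/- Evolution identity for the NESOM-2 statistical operator (constant Hamiltonian): let H be a Hermitian n×n complex matrix, ε > 0, let ρ_q : ℝ → Matrix n n ℂ be continuous and bounded, and define ρ_ε(t) = ε • ∫_{−∞}^{t} e^{ε(s−t)} • (exp(−(i(t−s)) • H) * ρ_q(s) * exp((i(t−s)) • H)) ds. Then for all t₀ ≤ t: e^{ε(t−t₀)} • (exp(−(i(t₀−t)) • H) * ρ_ε(t) * exp((i(t₀−t)) • H)) = ρ_ε(t₀) + ε • ∫_{t₀}^{t} e^{ε(s−t₀)} • (exp(−(i(t₀−s)) • H) * ρ_q(s) * exp((i(t₀−s)) • H)) ds. -/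
open Matrix NormedSpace MeasureTheory
open scoped NNReal

attribute [local instance] Matrix.linftyOpNormedRing Matrix.linftyOpNormedAlgebra

/-- Evolution identity for the NESOM-2 statistical operator (constant Hamiltonian):
propagating `ρ_ε(t)` backwards to time `t₀` reproduces `ρ_ε(t₀)` plus a weighted
integral of evolved quasi-equilibrium operators. -/
theorem neso2_evolution_identity
    {n : Type*} [Fintype n] [DecidableEq n] [Nonempty n]
    (H : Matrix n n ℂ) (hH : Hᴴ = H)
    (ε : ℝ) (hε : 0 < ε)
    (ρq : ℝ → Matrix n n ℂ) (hqc : Continuous ρq)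
    (hqb : ∃ C : ℝ, ∀ s : ℝ, ‖ρq s‖ ≤ C)
    (ρε : ℝ → Matrix n n ℂ)
    (hρε : ∀ t : ℝ, ρε t = ε • ∫ s in Set.Iic t, Real.exp (ε * (s - t)) •
      (exp ((-(Complex.I * ((t : ℂ) - (s : ℂ)))) • H) * ρq s *
        exp ((Complex.I * ((t : ℂ) - (s : ℂ))) • H))) :
    ∀ t₀ t : ℝ, t₀ ≤ t →
      Real.exp (ε * (t - t₀)) •
        (exp ((-(Complex.I * ((t₀ : ℂ) - (t : ℂ)))) • H) * ρε t *
          exp ((Complex.I * ((t₀ : ℂ) - (t : ℂ))) • H)) =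
      ρε t₀ + ε • ∫ s in t₀..t, Real.exp (ε * (s - t₀)) •
        (exp ((-(Complex.I * ((t₀ : ℂ) - (s : ℂ)))) • H) * ρq s *
          exp ((Complex.I * ((t₀ : ℂ) - (s : ℂ))) • H)) := by
  obtain ⟨C, hC⟩ := hqb
  -- the one-parameter group
  set g : ℝ → Matrix n n ℂ := fun τ => exp ((Complex.I * (τ : ℂ)) • H) with hg_def
  have hg_mul : ∀ a b : ℝ, g a * g b = g (a + b) := by
    intro a b
    have hcomm : Commute ((Complex.I * (a : ℂ)) • H) ((Complex.I * (b : ℂ)) • H) :=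
      ((Commute.refl H).smul_left _).smul_right _
    show exp ((Complex.I * (a : ℂ)) • H) * exp ((Complex.I * (b : ℂ)) • H)
      = exp ((Complex.I * ((a + b : ℝ) : ℂ)) • H)
    rw [← Matrix.exp_add_of_commute _ _ hcomm, ← add_smul]
    congr 1
    push_cast
    ring
  have hg_zero : g 0 = 1 := by
    simp [hg_def]
  have hg_star : ∀ a : ℝ, (g a)ᴴ = g (-a) := by
    intro a
    show (exp ((Complex.I * (a : ℂ)) • H))ᴴ = exp ((Complex.I * ((-a : ℝ) : ℂ)) • H)
    rw [← Matrix.exp_conjTranspose, Matrix.conjTranspose_smul, hH]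
    congr 1
    simp only [star_mul', Complex.star_def, Complex.conj_I, Complex.conj_ofReal]
    push_cast
    ring
  have hg_unit : ∀ a : ℝ, g a * (g a)ᴴ = 1 := by
    intro a
    rw [hg_star, hg_mul, add_neg_cancel, hg_zero]
  -- uniform norm bound on g
  have hg_entry : ∀ (a : ℝ) (i j : n), ‖g a i j‖ ≤ 1 := by
    intro a i j
    have h1 : (g a * (g a)ᴴ) i i = 1 := by rw [hg_unit]; simp [Matrix.one_apply_eq]
    rw [Matrix.mul_apply] at h1
    simp only [Matrix.conjTranspose_apply, Complex.star_def, Complex.mul_conj] at h1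
    have h2 : ∑ k, Complex.normSq (g a i k) = 1 := by
      have := congrArg Complex.re h1
      simpa using this
    have h3 : Complex.normSq (g a i j) ≤ 1 := by
      rw [← h2]
      exact Finset.single_le_sum (fun k _ => Complex.normSq_nonneg _) (Finset.mem_univ j)
    have h4 : ‖g a i j‖ ^ 2 ≤ 1 := by
      rwa [Complex.sq_norm]
    nlinarith [norm_nonneg (g a i j)]
  have hg_norm : ∀ a : ℝ, ‖g a‖ ≤ (Fintype.card n : ℝ) := by
    intro a
    rw [Matrix.linfty_opNorm_def]
    have : ((Finset.univ : Finset n).sup fun i => ∑ j, ‖g a i j‖₊) ≤ (Fintype.card n : ℝ≥0) := by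
      refine Finset.sup_le fun i _ => ?_
      calc ∑ j, ‖g a i j‖₊ ≤ ∑ _j : n, (1 : ℝ≥0) := by
            refine Finset.sum_le_sum fun j _ => ?_
            have := hg_entry a i j
            exact_mod_cast this
        _ = (Fintype.card n : ℝ≥0) := by simp [Finset.card_univ]
    exact_mod_cast this
  have hg_cont : Continuous g := by
    apply (NormedSpace.exp_continuous (𝔸 := Matrix n n ℂ)).comp
    exact (Continuous.mul continuous_const (Complex.continuous_ofReal)).smul continuous_const
  -- the canonical integrand
  set F : ℝ → ℝ → Matrix n n ℂ := fun a s =>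
    Real.exp (ε * (s - a)) • (g (s - a) * ρq s * g (a - s)) with hF_def
  have hF_eq : ∀ a s : ℝ, Real.exp (ε * (s - a)) •
      (exp ((-(Complex.I * ((a : ℂ) - (s : ℂ)))) • H) * ρq s *
        exp ((Complex.I * ((a : ℂ) - (s : ℂ))) • H)) = F a s := by
    intro a s
    rw [hF_def]
    simp only [hg_def]
    congr 3 <;> · congr 1; push_cast; ring
  have hρε' : ∀ t : ℝ, ρε t = ε • ∫ s in Set.Iic t, F t s := by
    intro t
    rw [hρε t]
    congr 1
    exact integral_congr_ae (Filter.Eventually.of_forall fun s => hF_eq t s)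
  -- integrability
  have hexp_int : ∀ a b : ℝ, IntegrableOn (fun s => Real.exp (ε * (s - a))) (Set.Iic b) := by
    intro a b
    have hval : ∀ y : ℝ, (∫ s in y..b, Real.exp (ε * (s - a))) =
        (Real.exp (ε * (b - a)) - Real.exp (ε * (y - a))) / ε := by
      intro y
      have h1 := intervalIntegral.integral_comp_sub_right (a := y) (b := b)
        (fun u => Real.exp (ε * u)) a
      have h2 := intervalIntegral.integral_comp_mul_left (a := y - a) (b := b - a)
        (fun u => Real.exp u) hε.ne'
      rw [h1, h2, integral_exp, smul_eq_mul]
      rw [mul_sub ε, mul_sub ε]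
      field_simp
    refine integrableOn_Iic_of_intervalIntegral_norm_bounded
      (Real.exp (ε * (b - a)) / ε) b (fun y => ?_) Filter.tendsto_id
      (Filter.Eventually.of_forall fun y => ?_)
    · exact (Real.continuous_exp.comp
        (continuous_const.mul (continuous_id.sub continuous_const))).integrableOn_Ioc
    · simp only [id_eq]
      simp_rw [Real.norm_of_nonneg (Real.exp_pos _).le]
      rw [hval y]
      have := (Real.exp_pos (ε * (y - a))).le
      have hb := Real.exp_pos (ε * (b - a))
      rw [div_le_div_iff_of_pos_right hε]
      linarith
  have hF_cont : ∀ a : ℝ, Continuous (F a) := by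
    intro a
    apply Continuous.fun_smul
    · exact Real.continuous_exp.comp (continuous_const.mul (continuous_id.sub continuous_const))
    · exact ((hg_cont.comp (continuous_id.sub continuous_const)).mul hqc).mul
        (hg_cont.comp (continuous_const.sub continuous_id))
  have hF_int : ∀ a b : ℝ, @IntegrableOn ℝ (Matrix n n ℂ) _
      PseudoMetricSpace.toUniformSpace.toTopologicalSpace SeminormedAddGroup.toContinuousENorm
      (F a) (Set.Iic b) volume := by
    intro a b
    refine Integrable.mono' (((hexp_int a b).norm.const_mul
      ((Fintype.card n : ℝ) * C * (Fintype.card n : ℝ)))) ((show @Continuous _ _ _ PseudoMetricSpace.toUniformSpace.toTopologicalSpace (F a) from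
        hF_cont a).aestronglyMeasurable.restrict)
      (Filter.Eventually.of_forall fun s => ?_)
    rw [hF_def]
    simp only [norm_smul, Real.norm_of_nonneg (Real.exp_pos _).le,
      Real.norm_of_nonneg (Real.exp_pos _).le]
    rw [mul_comm]
    refine mul_le_mul_of_nonneg_right ?_ (Real.exp_pos _).le
    have h1 : ‖g (s - a) * ρq s * g (a - s)‖ ≤ ‖g (s - a)‖ * ‖ρq s‖ * ‖g (a - s)‖ :=
      le_trans (norm_mul_le _ _) (mul_le_mul_of_nonneg_right (norm_mul_le _ _) (norm_nonneg _))
    have hC0 : 0 ≤ C := le_trans (norm_nonneg _) (hC 0)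
    calc ‖g (s - a) * ρq s * g (a - s)‖ ≤ ‖g (s - a)‖ * ‖ρq s‖ * ‖g (a - s)‖ := h1
      _ ≤ (Fintype.card n : ℝ) * C * (Fintype.card n : ℝ) := by
          apply mul_le_mul (mul_le_mul (hg_norm _) (hC s) (norm_nonneg _) (by positivity))
            (hg_norm _) (norm_nonneg _) (by positivity)
  -- main computation
  intro t₀ t ht
  have hL : ∀ s : ℝ, Real.exp (ε * (t - t₀)) •
      (ContinuousLinearMap.mulLeftRight ℂ (Matrix n n ℂ) (g (t - t₀)) (g (t₀ - t))) (F t s)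
      = F t₀ s := by
    intro s
    rw [ContinuousLinearMap.mulLeftRight_apply]
    simp only [hF_def]
    rw [Matrix.mul_smul, Matrix.smul_mul, smul_smul, ← Real.exp_add,
      show ε * (t - t₀) + ε * (s - t) = ε * (s - t₀) by ring]
    congr 1
    rw [show g (t - t₀) * (g (s - t) * ρq s * g (t - s)) * g (t₀ - t)
        = (g (t - t₀) * g (s - t)) * ρq s * (g (t - s) * g (t₀ - t)) by
      simp only [Matrix.mul_assoc], hg_mul, hg_mul,
      show t - t₀ + (s - t) = s - t₀ by ring, show t - s + (t₀ - t) = t₀ - s by ring]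
  calc Real.exp (ε * (t - t₀)) •
        (exp ((-(Complex.I * ((t₀ : ℂ) - (t : ℂ)))) • H) * ρε t *
          exp ((Complex.I * ((t₀ : ℂ) - (t : ℂ))) • H))
      = Real.exp (ε * (t - t₀)) • (g (t - t₀) * ρε t * g (t₀ - t)) := by
        rw [show exp ((-(Complex.I * ((t₀ : ℂ) - (t : ℂ)))) • H) = g (t - t₀) by
            simp only [hg_def]; congr 1; push_cast; ring,
          show exp ((Complex.I * ((t₀ : ℂ) - (t : ℂ))) • H) = g (t₀ - t) by
            simp only [hg_def]; congr 1; push_cast; ring]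
    _ = ε • (Real.exp (ε * (t - t₀)) •
        (ContinuousLinearMap.mulLeftRight ℂ (Matrix n n ℂ) (g (t - t₀)) (g (t₀ - t)))
          (∫ s in Set.Iic t, F t s)) := by
        rw [hρε' t, ContinuousLinearMap.mulLeftRight_apply]
        rw [Matrix.mul_smul, Matrix.smul_mul]
        rw [smul_comm]
    _ = ε • ∫ s in Set.Iic t, F t₀ s := by
        congr 1
        rw [← (ContinuousLinearMap.mulLeftRight ℂ (Matrix n n ℂ) (g (t - t₀))
          (g (t₀ - t))).integral_comp_comm (hF_int t t)]
        rw [← integral_smul]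
        exact integral_congr_ae (Filter.Eventually.of_forall fun s => hL s)
    _ = ρε t₀ + ε • ∫ s in t₀..t, F t₀ s := by
        rw [hρε' t₀, intervalIntegral.integral_of_le ht, ← smul_add,
          ← setIntegral_union (Set.Iic_disjoint_Ioc le_rfl) measurableSet_Ioc
            (hF_int t₀ t₀) ((hF_int t₀ t).mono_set Set.Ioc_subset_Iic_self),
          Set.Iic_union_Ioc_eq_Iic ht]
    _ = ρε t₀ + ε • ∫ s in t₀..t, Real.exp (ε * (s - t₀)) •
        (exp ((-(Complex.I * ((t₀ : ℂ) - (s : ℂ)))) • H) * ρq s *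
          exp ((Complex.I * ((t₀ : ℂ) - (s : ℂ))) • H)) := by
        congr 1
        congr 1
        refine intervalIntegral.integral_congr fun s _ => (hF_eq t₀ s).symm
end

section
/- The differential balance equations follow from the self-consistency balance equations in NESOM-2 (constant Hamiltonian): let H and P be Hermitian n×n complex matrices, ε > 0, and let ρ_ε, ρ_q : ℝ → Matrix n n ℂ with ρ_ε differentiable and satisfying ρ_ε'(t) + i • (H * ρ_ε(t) − ρ_ε(t) * H) = ε • (ρ_q(t) − ρ_ε(t)) for all t. If Tr[ρ_ε(t) * P] = Tr[ρ_q(t) * P] for all t ∈ ℝ, then for every t the function t ↦ Tr[ρ_q(t) * P] is differentiable with derivative Tr[ρ_ε(t) * (i • (H * P − P * H))], i.e. the quasi-equilibrium average of P evolves according to the Heisenberg time derivative of P averaged over ρ_ε. -/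
open Matrix NormedSpace

attribute [local instance] Matrix.linftyOpNormedRing Matrix.linftyOpNormedAlgebra

/-- In NESOM-2 with a constant Hamiltonian, the differential balance equations follow
from the self-consistency balance equations: if `Tr[ρ_ε P] = Tr[ρ_q P]` at all times,
then `d/dt Tr[ρ_q P] = Tr[ρ_ε · i[H, P]]`. -/
theorem differential_balance_of_self_consistency
    {n : Type*} [Fintype n] [DecidableEq n] [Nonempty n]
    (H P : Matrix n n ℂ) (hH : Hᴴ = H) (hP : Pᴴ = P)
    (ε : ℝ) (hε : 0 < ε)
    (ρε ρq : ℝ → Matrix n n ℂ) (ρε' : ℝ → Matrix n n ℂ)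
    (hderiv : ∀ t : ℝ, HasDerivAt ρε (ρε' t) t)
    (hode : ∀ t : ℝ, ρε' t + Complex.I • (H * ρε t - ρε t * H) =
      ε • (ρq t - ρε t))
    (hbal : ∀ t : ℝ, trace (ρε t * P) = trace (ρq t * P)) :
    ∀ t : ℝ, HasDerivAt (fun s : ℝ => trace (ρq s * P))
      (trace (ρε t * (Complex.I • (H * P - P * H)))) t := by
  intro t
  -- the continuous linear map M ↦ trace (M * P)
  let L : Matrix n n ℂ →L[ℂ] ℂ :=
    LinearMap.toContinuousLinearMap
      ((Matrix.traceLinearMap n ℂ ℂ).comp (LinearMap.mulRight ℂ P))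
  have hL : ∀ M : Matrix n n ℂ, L M = trace (M * P) := fun M => rfl
  have key : HasDerivAt (fun s : ℝ => trace (ρε s * P)) (trace (ρε' t * P)) t := by
    have := (L.restrictScalars ℝ).hasFDerivAt.comp_hasDerivAt t (hderiv t)
    exact this
  have heq : (fun s : ℝ => trace (ρq s * P)) = fun s : ℝ => trace (ρε s * P) := by
    funext s; exact (hbal s).symm
  rw [heq]
  -- identify the derivative value
  have hval : trace (ρε' t * P) = trace (ρε t * (Complex.I • (H * P - P * H))) := by
    have h := hode t
    have hρ : ρε' t = ε • (ρq t - ρε t) - Complex.I • (H * ρε t - ρε t * H) := by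
      rw [← h]; abel
    have hb := hbal t
    rw [hρ]
    simp only [sub_mul, smul_mul_assoc, trace_sub, trace_smul, mul_sub, sub_mul,
      Matrix.mul_smul, trace_sub, Matrix.mul_assoc]
    simp only [hb, Matrix.mul_assoc, smul_eq_mul]
    rw [trace_mul_comm H (ρε t * P), Matrix.mul_assoc, sub_self, smul_zero]
    ring
  rwa [hval] at key
end

section
/- Positive-definiteness of the Kubo–Duhamel auto-correlator: for any Hermitian n×n complex matrix S and any n×n complex matrix A, the integral ∫₀¹ Tr[exp(−(1−λ) • S) * A * exp(−λ • S) * Aᴴ] dλ is a nonnegative real number, and it equals 0 if and only if A = 0. -/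
open Matrix NormedSpace intervalIntegral

section aux

variable {n : Type*} [Fintype n] [DecidableEq n] [Nonempty n]

private lemma trace_mul_conjTranspose_eq' (M : Matrix n n ℂ) :
    trace (M * Mᴴ) = ((∑ i, ∑ j, Complex.normSq (M i j) : ℝ) : ℂ) := by
  simp only [trace, diag, mul_apply, conjTranspose_apply, RCLike.star_def, Complex.mul_conj]
  push_cast
  rfl

private lemma sum_normSq_eq_zero' {M : Matrix n n ℂ}
    (h : ∑ i, ∑ j, Complex.normSq (M i j) = 0) : M = 0 := by
  ext i j
  have h1 : ∀ i ∈ Finset.univ, (0:ℝ) ≤ ∑ j, Complex.normSq (M i j) :=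
    fun i _ => Finset.sum_nonneg fun j _ => Complex.normSq_nonneg _
  have h2 := (Finset.sum_eq_zero_iff_of_nonneg h1).mp h i (Finset.mem_univ i)
  have h3 := (Finset.sum_eq_zero_iff_of_nonneg
    (fun j _ => Complex.normSq_nonneg _)).mp h2 j (Finset.mem_univ j)
  simpa using Complex.normSq_eq_zero.mp h3

private lemma matrix_exp_continuous' :
    Continuous (exp : Matrix n n ℂ → Matrix n n ℂ) := by
  letI : SeminormedRing (Matrix n n ℂ) := Matrix.linftyOpSemiNormedRing
  letI : NormedRing (Matrix n n ℂ) := Matrix.linftyOpNormedRing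
  letI : NormedAlgebra ℂ (Matrix n n ℂ) := Matrix.linftyOpNormedAlgebra
  letI : NormedAlgebra ℚ (Matrix n n ℂ) := Matrix.linftyOpNormedAlgebra
  exact exp_continuous

end aux

/-- Positive-definiteness of the Kubo–Duhamel auto-correlator: it is a nonnegative
real number, vanishing exactly when `A = 0`. -/
theorem kubo_duhamel_autocorrelator_pos_def
    {n : Type*} [Fintype n] [DecidableEq n] [Nonempty n]
    (S : Matrix n n ℂ) (hS : Sᴴ = S) (A : Matrix n n ℂ) :
    (∫ lam in (0:ℝ)..1,
        trace (exp (-((1 - lam) • S)) * A * exp (-(lam • S)) * Aᴴ)).im = 0 ∧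
    0 ≤ (∫ lam in (0:ℝ)..1,
        trace (exp (-((1 - lam) • S)) * A * exp (-(lam • S)) * Aᴴ)).re ∧
    ((∫ lam in (0:ℝ)..1,
        trace (exp (-((1 - lam) • S)) * A * exp (-(lam • S)) * Aᴴ)) = 0 ↔
      A = 0) := by
  -- the "half" exponentials
  set E : ℝ → Matrix n n ℂ := fun lam => exp (-(((1 - lam)/2) • S)) with hE
  set F : ℝ → Matrix n n ℂ := fun lam => exp (-((lam/2) • S)) with hF
  set B : ℝ → Matrix n n ℂ := fun lam => E lam * A * F lam with hBdef
  set f : ℝ → ℝ := fun lam => ∑ i, ∑ j, Complex.normSq (B lam i j) with hfdef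
  have hE2 : ∀ lam : ℝ, E lam * E lam = exp (-((1 - lam) • S)) := by
    intro lam
    show exp (-(((1 - lam)/2) • S)) * exp (-(((1 - lam)/2) • S)) = _
    rw [← Matrix.exp_add_of_commute _ _ (Commute.refl _)]
    congr 1
    rw [← neg_add, ← add_smul]
    norm_num
  have hF2 : ∀ lam : ℝ, F lam * F lam = exp (-(lam • S)) := by
    intro lam
    show exp (-((lam/2) • S)) * exp (-((lam/2) • S)) = _
    rw [← Matrix.exp_add_of_commute _ _ (Commute.refl _)]
    congr 1
    rw [← neg_add, ← add_smul]
    norm_num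
  have hEH : ∀ lam : ℝ, (E lam)ᴴ = E lam := by
    intro lam
    show (exp (-(((1 - lam)/2) • S)))ᴴ = _
    rw [← Matrix.exp_conjTranspose]
    congr 1
    simp [hS]
  have hFH : ∀ lam : ℝ, (F lam)ᴴ = F lam := by
    intro lam
    show (exp (-((lam/2) • S)))ᴴ = _
    rw [← Matrix.exp_conjTranspose]
    congr 1
    simp [hS]
  -- the integrand equals the real quantity f
  have key : ∀ lam : ℝ,
      trace (exp (-((1 - lam) • S)) * A * exp (-(lam • S)) * Aᴴ) = ((f lam : ℝ) : ℂ) := by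
    intro lam
    rw [hfdef, ← trace_mul_conjTranspose_eq' (B lam), hBdef]
    have h1 : exp (-((1 - lam) • S)) * A * exp (-(lam • S)) * Aᴴ
        = E lam * (E lam * (A * (F lam * (F lam * Aᴴ)))) := by
      rw [← hE2, ← hF2]; simp only [Matrix.mul_assoc]
    have h2 : (E lam * A * F lam) * (E lam * A * F lam)ᴴ
        = E lam * ((A * (F lam * (F lam * Aᴴ))) * E lam) := by
      rw [conjTranspose_mul, conjTranspose_mul, hEH, hFH]
      simp only [Matrix.mul_assoc]
    rw [h1, h2, trace_mul_comm, Matrix.mul_assoc]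
  -- continuity and nonnegativity of f
  have hScont : ∀ c d : ℝ, Continuous fun lam : ℝ => exp (-((c * lam + d) • S)) := by
    intro c d
    exact matrix_exp_continuous'.comp <|
      (((continuous_const.mul continuous_id).add continuous_const).smul continuous_const).neg
  have hBcont : Continuous B := by
    have h1 : Continuous E := by
      have := hScont (-(1/2) : ℝ) (1/2)
      convert this using 2 with lam
      show exp (-(((1 - lam)/2) • S)) = _
      congr 2
      ring
    have h2 : Continuous F := by
      have := hScont (1/2 : ℝ) 0
      convert this using 2 with lam
      show exp (-((lam/2) • S)) = _
      congr 2
      ring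
    exact (h1.mul continuous_const).mul h2
  have hfcont : Continuous f := by
    apply continuous_finset_sum _ fun i _ => continuous_finset_sum _ fun j _ => ?_
    exact Complex.continuous_normSq.comp (hBcont.matrix_elem i j)
  have hfnonneg : ∀ lam : ℝ, 0 ≤ f lam :=
    fun lam => Finset.sum_nonneg fun i _ => Finset.sum_nonneg fun j _ => Complex.normSq_nonneg _
  -- the integral as a real number
  have hint : (∫ lam in (0:ℝ)..1,
      trace (exp (-((1 - lam) • S)) * A * exp (-(lam • S)) * Aᴴ))
      = ((∫ lam in (0:ℝ)..1, f lam : ℝ) : ℂ) := by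
    rw [← intervalIntegral.integral_ofReal]
    exact intervalIntegral.integral_congr fun lam _ => key lam
  refine ⟨by rw [hint]; simp, by rw [hint]; simpa using
    intervalIntegral.integral_nonneg (by norm_num) (fun u _ => hfnonneg u), ?_⟩
  rw [hint]
  constructor
  · intro h
    by_contra hA
    -- A ≠ 0 forces f positive everywhere
    have hBne : ∀ lam : ℝ, B lam ≠ 0 := by
      intro lam hB0
      apply hA
      have e1 : exp ((((1 - lam)/2)) • S) * exp (-(((1 - lam)/2) • S)) = 1 := by
        rw [← Matrix.exp_add_of_commute _ _ (Commute.refl ((((1 - lam)/2)) • S)).neg_right, add_neg_cancel,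
          exp_zero]
      have e2 : exp (-((lam/2) • S)) * exp ((lam/2) • S) = 1 := by
        rw [← Matrix.exp_add_of_commute _ _ (Commute.refl ((lam/2) • S)).neg_left, neg_add_cancel,
          exp_zero]
      have hAeq : exp ((((1 - lam)/2)) • S) * B lam * exp ((lam/2) • S) = A := by
        show exp ((((1 - lam)/2)) • S) *
              (exp (-(((1 - lam)/2) • S)) * A * exp (-((lam/2) • S))) *
              exp ((lam/2) • S) = A
        calc exp ((((1 - lam)/2)) • S) *
              (exp (-(((1 - lam)/2) • S)) * A * exp (-((lam/2) • S))) *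
              exp ((lam/2) • S)
            = (exp ((((1 - lam)/2)) • S) * exp (-(((1 - lam)/2) • S))) * A *
              (exp (-((lam/2) • S)) * exp ((lam/2) • S)) := by
              simp only [Matrix.mul_assoc]
          _ = A := by rw [e1, e2, one_mul, Matrix.mul_one]
      rw [hB0, Matrix.mul_zero, Matrix.zero_mul] at hAeq
      exact hAeq.symm
    have hfpos : ∀ lam : ℝ, 0 < f lam := by
      intro lam
      rcases lt_or_eq_of_le (hfnonneg lam) with h' | h'
      · exact h'
      · exact absurd (sum_normSq_eq_zero' h'.symm) (hBne lam)
    have hpos : 0 < ∫ lam in (0:ℝ)..1, f lam :=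
      intervalIntegral.intervalIntegral_pos_of_pos_on (hfcont.intervalIntegrable 0 1)
        (fun x _ => hfpos x) one_pos
    rw [Complex.ofReal_eq_zero] at h
    exact absurd h hpos.ne'
  · intro h
    subst h
    have : f = fun _ => 0 := by
      funext lam
      simp [hfdef, hBdef, Matrix.mul_zero, Matrix.zero_mul]
    rw [this]
    simp
end

section
/- Lower gradient bound for the generating functional (finite form): let S̃ and Q be Hermitian n×n complex matrices and suppose Tr[exp(−S̃)] ≤ 1. Then −ln Tr[exp(−(S̃ + Q))] ≥ Tr[exp(−(S̃ + Q)) * Q] / Tr[exp(−(S̃ + Q))], where all traces are real and Tr exp(−(S̃+Q)) > 0. (Taking Q = ∑ₙ fₙ Pₙ, this is the inequality Ψ_ε(t; f) ≥ ∑ₙ fₙ ∂Ψ_ε(t; f)/∂fₙ.) -/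
open Matrix NormedSpace

section Helpers
variable {n : Type*} [Fintype n] [DecidableEq n]

lemma exp_spectral {A : Matrix n n ℂ} (hA : A.IsHermitian) :
    exp A = (hA.eigenvectorUnitary : Matrix n n ℂ) *
      diagonal (fun i => (Real.exp (hA.eigenvalues i) : ℂ)) *
      star (hA.eigenvectorUnitary : Matrix n n ℂ) := by
  have hU : IsUnit (hA.eigenvectorUnitary : Matrix n n ℂ) :=
    (Matrix.isUnit_iff_isUnit_det _).mpr (UnitaryGroup.det_isUnit hA.eigenvectorUnitary)
  have hinv : (hA.eigenvectorUnitary : Matrix n n ℂ)⁻¹ =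
      star (hA.eigenvectorUnitary : Matrix n n ℂ) :=
    (inv_eq_left_inv ((mem_unitaryGroup_iff').mp hA.eigenvectorUnitary.2))
  conv_lhs => rw [hA.spectral_theorem, Unitary.conjStarAlgAut_apply, ← hinv]
  rw [Matrix.exp_conj _ _ hU, hinv, exp_diagonal]
  congr 1
  congr 1
  ext i
  simp [Pi.exp_def, ← Complex.exp_eq_exp_ℂ, Function.comp, Complex.ofReal_exp]

lemma trace_conj_conj (U V : Matrix n n ℂ) (d e : n → ℂ) :
    trace (U * diagonal d * star U * (V * diagonal e * star V)) =
      ∑ i, ∑ j, d i * e j *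
        ((star U * V) i j * star ((star U * V) i j)) := by
  have h1 : U * diagonal d * star U * (V * diagonal e * star V)
      = U * (diagonal d * (star U * V) * diagonal e * star V) := by noncomm_ring
  rw [h1, trace_mul_comm, mul_assoc]
  have h2 : star V * U = star (star U * V) := by
    rw [StarMul.star_mul, star_star]
  rw [h2]
  set W := star U * V with hW
  simp only [Matrix.trace, Matrix.diag, Matrix.mul_apply, Matrix.diagonal_apply,
    Matrix.star_apply, ite_mul, zero_mul, Finset.sum_ite_eq, Finset.mem_univ, if_true]
  refine Finset.sum_congr rfl fun i _ => Finset.sum_congr rfl fun j _ => ?_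
  rw [Finset.sum_eq_single j (fun b _ hb => by simp [hb]) (by simp)]
  simp
  ring

lemma trace_exp_mul_hermitian {B C : Matrix n n ℂ} (hB : B.IsHermitian) (hC : C.IsHermitian) :
    (trace (exp B * C)).re = ∑ i, ∑ j, Real.exp (hB.eigenvalues i) * hC.eigenvalues j *
      Complex.normSq ((star (hB.eigenvectorUnitary : Matrix n n ℂ) *
        (hC.eigenvectorUnitary : Matrix n n ℂ)) i j) := by
  conv_lhs => rw [exp_spectral hB, hC.spectral_theorem, Unitary.conjStarAlgAut_apply]
  rw [trace_conj_conj]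
  rw [Complex.re_sum]
  refine Finset.sum_congr rfl fun i _ => ?_
  rw [Complex.re_sum]
  refine Finset.sum_congr rfl fun j _ => ?_
  simp [Complex.star_def, Complex.mul_conj, Function.comp, Complex.exp_ofReal_re]

lemma trace_exp_hermitian {B : Matrix n n ℂ} (hB : B.IsHermitian) :
    (trace (exp B)).re = ∑ i, Real.exp (hB.eigenvalues i) := by
  rw [exp_spectral hB, trace_mul_comm, ← mul_assoc,
    (mem_unitaryGroup_iff').mp hB.eigenvectorUnitary.2, one_mul, trace_diagonal]
  rw [Complex.re_sum]
  simp [Pi.exp_def, ← Complex.exp_eq_exp_ℂ, Complex.exp_ofReal_re]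

lemma unitary_row_sum (W : Matrix n n ℂ) (hW : W ∈ Matrix.unitaryGroup n ℂ) (i : n) :
    ∑ j, Complex.normSq (W i j) = 1 := by
  have h2 := congrArg (fun M : Matrix n n ℂ => M i i) ((mem_unitaryGroup_iff).mp hW)
  simp only [Matrix.mul_apply, Matrix.star_apply, Complex.star_def, Complex.mul_conj,
    Matrix.one_apply_eq] at h2
  exact_mod_cast h2

lemma unitary_col_sum (W : Matrix n n ℂ) (hW : W ∈ Matrix.unitaryGroup n ℂ) (j : n) :
    ∑ i, Complex.normSq (W i j) = 1 := by
  have h2 := congrArg (fun M : Matrix n n ℂ => M j j) ((mem_unitaryGroup_iff').mp hW)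
  simp only [Matrix.mul_apply, Matrix.star_apply, Complex.star_def, Complex.conj_mul',
    Matrix.one_apply_eq] at h2
  have h3 : (↑(∑ i, Complex.normSq (W i j)) : ℂ) = 1 := by
    push_cast
    rw [← h2]
    exact Finset.sum_congr rfl fun i _ => by norm_cast; exact Complex.normSq_eq_norm_sq _
  exact_mod_cast h3

lemma W_mem {B C : Matrix n n ℂ} (hB : B.IsHermitian) (hC : C.IsHermitian) :
    star (hB.eigenvectorUnitary : Matrix n n ℂ) * (hC.eigenvectorUnitary : Matrix n n ℂ)
      ∈ Matrix.unitaryGroup n ℂ := by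
  have := (hB.eigenvectorUnitary⁻¹ * hC.eigenvectorUnitary).2
  simpa using this

lemma trace_exp_mul_self {B : Matrix n n ℂ} (hB : B.IsHermitian) :
    (trace (exp B * B)).re = ∑ i, Real.exp (hB.eigenvalues i) * hB.eigenvalues i := by
  rw [trace_exp_mul_hermitian hB hB, (mem_unitaryGroup_iff').mp hB.eigenvectorUnitary.2]
  refine Finset.sum_congr rfl fun i _ => ?_
  rw [Finset.sum_eq_single i (fun b _ hb => by simp [Matrix.one_apply, Ne.symm hb]) (by simp)]
  simp [Matrix.one_apply]

lemma klein {B C : Matrix n n ℂ} (hB : B.IsHermitian) (hC : C.IsHermitian) (s : ℝ) :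
    Real.exp (-s) * ((trace (exp B * C)).re - (trace (exp B * B)).re
        + s * (trace (exp B)).re)
      ≤ (trace (exp C)).re - Real.exp (-s) * (trace (exp B)).re := by
  set b := hB.eigenvalues with hb
  set c := hC.eigenvalues with hc
  set W := star (hB.eigenvectorUnitary : Matrix n n ℂ) *
    (hC.eigenvectorUnitary : Matrix n n ℂ) with hWdef
  set p : n → n → ℝ := fun i j => Complex.normSq (W i j) with hpdef
  have hp0 : ∀ i j, 0 ≤ p i j := fun i j => Complex.normSq_nonneg _
  have hrow : ∀ i, ∑ j, p i j = 1 := unitary_row_sum W (W_mem hB hC)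
  have hcol : ∀ j, ∑ i, p i j = 1 := unitary_col_sum W (W_mem hB hC)
  have h1 : (trace (exp B * C)).re = ∑ i, ∑ j, Real.exp (b i) * c j * p i j :=
    trace_exp_mul_hermitian hB hC
  have h2 : (trace (exp B * B)).re = ∑ i, ∑ j, Real.exp (b i) * b i * p i j := by
    rw [trace_exp_mul_self hB]
    exact Finset.sum_congr rfl fun i _ => by rw [← Finset.mul_sum, hrow i, mul_one]
  have h3 : (trace (exp B)).re = ∑ i, ∑ j, Real.exp (b i) * p i j := by
    rw [trace_exp_hermitian hB]
    exact Finset.sum_congr rfl fun i _ => by rw [← Finset.mul_sum, hrow i, mul_one]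
  have h4 : (trace (exp C)).re = ∑ i, ∑ j, Real.exp (c j) * p i j := by
    rw [trace_exp_hermitian hC, Finset.sum_comm (γ := n)]
    exact Finset.sum_congr rfl fun j _ => by rw [← Finset.mul_sum, hcol j, mul_one]
  rw [← sub_nonneg, h1, h2, h3, h4]
  have merged : ∑ i, ∑ j, Real.exp (c j) * p i j -
      Real.exp (-s) * ∑ i, ∑ j, Real.exp (b i) * p i j -
      Real.exp (-s) * (∑ i, ∑ j, Real.exp (b i) * c j * p i j -
        ∑ i, ∑ j, Real.exp (b i) * b i * p i j +
        s * ∑ i, ∑ j, Real.exp (b i) * p i j) =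
      ∑ i, ∑ j, (Real.exp (c j) * p i j - Real.exp (-s) * (Real.exp (b i) * p i j) -
        Real.exp (-s) * (Real.exp (b i) * c j * p i j - Real.exp (b i) * b i * p i j +
          s * (Real.exp (b i) * p i j))) := by
    simp only [Finset.mul_sum, ← Finset.sum_sub_distrib, ← Finset.sum_add_distrib]
  rw [merged]
  refine Finset.sum_nonneg fun i _ => Finset.sum_nonneg fun j _ => ?_
  have key := Real.add_one_le_exp (c j - b i + s)
  have h5 : (c j - b i + s + 1) * Real.exp (b i - s) ≤
      Real.exp (c j - b i + s) * Real.exp (b i - s) :=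
    mul_le_mul_of_nonneg_right key (Real.exp_pos _).le
  have e1 : Real.exp (c j - b i + s) * Real.exp (b i - s) = Real.exp (c j) := by
    rw [← Real.exp_add]; ring_nf
  have e2 : Real.exp (b i - s) = Real.exp (b i) * Real.exp (-s) := by
    rw [← Real.exp_add]; ring_nf
  rw [e1, e2] at h5
  nlinarith [mul_le_mul_of_nonneg_left h5 (hp0 i j)]

end Helpers

/-- Lower gradient bound for the generating functional (finite form):
if `Tr exp (-S̃) ≤ 1`, then `Ψ(f) = -ln Tr exp (-(S̃ + Q))` dominates the
"gradient term" `Tr[exp (-(S̃ + Q)) Q] / Tr exp (-(S̃ + Q))`. -/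
theorem generating_functional_lower_bound
    {n : Type*} [Fintype n] [DecidableEq n] [Nonempty n]
    (Stilde Q : Matrix n n ℂ) (hS : Stildeᴴ = Stilde) (hQ : Qᴴ = Q)
    (hnorm : (trace (exp (-Stilde))).re ≤ 1) :
    0 < (trace (exp (-(Stilde + Q)))).re ∧
    (trace (exp (-(Stilde + Q)) * Q)).im = 0 ∧
    (trace (exp (-(Stilde + Q)) * Q)).re / (trace (exp (-(Stilde + Q)))).re ≤
      -Real.log (trace (exp (-(Stilde + Q)))).re := by
  have hB : (-(Stilde + Q)).IsHermitian := by
    unfold Matrix.IsHermitian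
    rw [conjTranspose_neg, conjTranspose_add, hS, hQ]
  have hC : (-Stilde).IsHermitian := by
    unfold Matrix.IsHermitian
    rw [conjTranspose_neg, hS]
  set Z := (trace (exp (-(Stilde + Q)))).re with hZdef
  have hZpos : 0 < Z := by
    rw [hZdef, trace_exp_hermitian hB]
    exact Finset.sum_pos (fun i _ => Real.exp_pos _) Finset.univ_nonempty
  refine ⟨hZpos, ?_, ?_⟩
  · have hherm : (exp (-(Stilde + Q))).IsHermitian := hB.exp
    have hstar : star (trace (exp (-(Stilde + Q)) * Q)) =
        trace (exp (-(Stilde + Q)) * Q) := by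
      rw [← Matrix.trace_conjTranspose, conjTranspose_mul, hQ, hherm, trace_mul_comm]
    have := Complex.conj_eq_iff_im.mp hstar
    exact this
  · have hk := klein hB hC (Real.log Z)
    have hexp : Real.exp (-Real.log Z) = Z⁻¹ := by
      rw [Real.exp_neg, Real.exp_log hZpos]
    have hsplit : trace (exp (-(Stilde + Q)) * Q) =
        trace (exp (-(Stilde + Q)) * (-Stilde)) -
        trace (exp (-(Stilde + Q)) * (-(Stilde + Q))) := by
      have harg : -Stilde - -(Stilde + Q) = Q := by abel
      rw [← trace_sub, ← mul_sub, harg]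
    have hre : (trace (exp (-(Stilde + Q)) * Q)).re =
        (trace (exp (-(Stilde + Q)) * (-Stilde))).re -
        (trace (exp (-(Stilde + Q)) * (-(Stilde + Q)))).re := by
      rw [hsplit, Complex.sub_re]
    rw [hexp, ← hZdef] at hk
    rw [div_le_iff₀ hZpos]
    have hZne : Z ≠ 0 := ne_of_gt hZpos
    have : Z⁻¹ * ((trace (exp (-(Stilde + Q)) * Q)).re + Real.log Z * Z) ≤
        (trace (exp (-Stilde))).re - Z⁻¹ * Z := by
      rw [hre]; exact hk
    rw [inv_mul_cancel₀ hZne] at this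
    have h6 : Z⁻¹ * ((trace (exp (-(Stilde + Q)) * Q)).re + Real.log Z * Z) ≤ 0 := by
      linarith
    have h7 : (trace (exp (-(Stilde + Q)) * Q)).re + Real.log Z * Z ≤ 0 := by
      by_contra hcon
      push_neg at hcon
      nlinarith [inv_pos.mpr hZpos]
    linarith
end

section
/- Second derivative of the log-partition function equals the Kubo–Duhamel variance: let S and P be Hermitian n×n complex matrices; set Z = Tr[exp(−S)] (a positive real), ⟨P⟩ = Tr[exp(−S) * P] / Z (a real number), and ΔP = P − ⟨P⟩ • 1. Then the function g(x) = ln Tr[exp(−(S + x • P))] is twice differentiable at 0 and g''(0) = Z⁻¹ · ∫₀¹ Tr[exp(−(1−λ) • S) * ΔP * exp(−λ • S) * ΔP] dλ, which is a nonnegative real number. -/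
open Matrix NormedSpace intervalIntegral

section aux
set_option linter.unusedSectionVars false
variable {n : Type*} [Fintype n] [DecidableEq n]

attribute [local instance] Matrix.linftyOpNormedRing Matrix.linftyOpNormedAlgebra

lemma hasDerivAt_exp_left (M : Matrix n n ℂ) (s : ℝ) :
    HasDerivAt (fun u : ℝ => exp (u • M)) (exp (s • M) * M) s := by
  exact hasDerivAt_exp_smul_const M s

lemma cont_exp_smul (M : Matrix n n ℂ) : Continuous (fun s : ℝ => exp (s • M)) :=
  exp_continuous.comp (continuous_id.smul continuous_const)

lemma cont_exp_one_sub_smul (M : Matrix n n ℂ) :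
    Continuous (fun s : ℝ => exp ((1 - s) • M)) :=
  exp_continuous.comp ((continuous_const.sub continuous_id).smul continuous_const)

/-- Duhamel's formula. -/
lemma duhamel (A B : Matrix n n ℂ) :
    exp (A + B) - exp A
      = ∫ s in (0:ℝ)..1, exp (s • (A + B)) * B * exp ((1 - s) • A) := by
  have key : ∀ s : ℝ, HasDerivAt (fun u : ℝ => exp (u • (A + B)) * exp ((1 - u) • A))
      (exp (s • (A + B)) * B * exp ((1 - s) • A)) s := by
    intro s
    have h1 := hasDerivAt_exp_left (A + B) s
    have h2 : HasDerivAt (fun u : ℝ => exp ((1 - u) • A))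
        ((-1 : ℝ) • (exp ((1 - s) • A) * A)) s := by
      have hg : HasDerivAt (fun u : ℝ => 1 - u) (-1) s := by
        simpa using (hasDerivAt_id s).const_sub 1
      exact (hasDerivAt_exp_left A (1 - s)).scomp s hg
    have := h1.mul h2
    refine this.congr_deriv ?_
    symm
    have hc : Commute A (exp ((1 - s) • A)) :=
      (((Commute.refl A).smul_right ((1:ℝ) - s))).exp_right
    simp only [neg_one_smul, mul_neg, ← mul_assoc]
    rw [mul_assoc (exp (s • (A+B))) (exp ((1-s)•A)) A, ← hc.eq, ← mul_assoc]
    noncomm_ring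
  have hcont : Continuous fun s : ℝ => exp (s • (A + B)) * B * exp ((1 - s) • A) :=
    ((cont_exp_smul (A + B)).mul continuous_const).mul (cont_exp_one_sub_smul A)
  have := intervalIntegral.integral_eq_sub_of_hasDerivAt
    (fun s _ => key s) (hcont.intervalIntegrable 0 1)
  rw [this]
  simp [exp_zero]

/-- Derivative of `x ↦ exp (A + x • B)`. -/
lemma hasDerivAt_exp_affine (A B : Matrix n n ℂ) (x₀ : ℝ) :
    HasDerivAt (fun x : ℝ => exp (A + x • B))
      (∫ s in (0:ℝ)..1,
        exp (s • (A + x₀ • B)) * B * exp ((1 - s) • (A + x₀ • B))) x₀ := by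
  set M₀ := A + x₀ • B with hM₀
  set I : ℝ → Matrix n n ℂ := fun x =>
    ∫ s in (0:ℝ)..1, exp (s • (A + x • B)) * B * exp ((1 - s) • M₀) with hI
  have hEx : ∀ x : ℝ, exp (A + x • B) - exp M₀ = (x - x₀) • I x := by
    intro x
    have h1 : A + x • B = M₀ + (x - x₀) • B := by
      rw [hM₀, sub_smul]; abel
    have h2 := duhamel M₀ ((x - x₀) • B)
    rw [h1, h2, ← intervalIntegral.integral_smul]
    congr 1
    ext s
    rw [← h1, mul_smul_comm, smul_mul_assoc]
  have hIcont : Continuous I := by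
    have hunc : Continuous (Function.uncurry fun (x : ℝ) (s : ℝ) =>
        exp (s • (A + x • B)) * B * exp ((1 - s) • M₀)) := by
      show Continuous fun p : ℝ × ℝ =>
        exp (p.2 • (A + p.1 • B)) * B * exp ((1 - p.2) • M₀)
      exact ((exp_continuous.comp (continuous_snd.smul
          (continuous_const.add (continuous_fst.smul continuous_const)))).mul
          continuous_const).mul
        (exp_continuous.comp ((continuous_const.sub continuous_snd).smul continuous_const))
    exact intervalIntegral.continuous_parametric_intervalIntegral_of_continuous' hunc 0 1
  refine hasDerivAt_iff_tendsto_slope.2 ?_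
  have hslope : ∀ x ∈ ({x₀}ᶜ : Set ℝ), I x = slope (fun x : ℝ => exp (A + x • B)) x₀ x := by
    intro x hx
    rw [slope_def_module, hEx x, smul_smul, inv_mul_cancel₀ (sub_ne_zero.2 hx), one_smul]
  have hIx₀ : I x₀ = ∫ s in (0:ℝ)..1,
      exp (s • (A + x₀ • B)) * B * exp ((1 - s) • (A + x₀ • B)) := rfl
  rw [← hIx₀]
  exact ((hIcont.continuousAt).tendsto.mono_left nhdsWithin_le_nhds).congr'
    (eventually_nhdsWithin_of_forall hslope)

/-- trace of the derivative, against a fixed matrix `C`. -/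
lemma hasDerivAt_trace_exp_mul (A B C : Matrix n n ℂ) (x₀ : ℝ) :
    HasDerivAt (fun x : ℝ => trace (exp (A + x • B) * C))
      (∫ s in (0:ℝ)..1,
        trace (exp (s • (A + x₀ • B)) * B * exp ((1 - s) • (A + x₀ • B)) * C)) x₀ := by
  let L : Matrix n n ℂ →L[ℝ] ℂ := LinearMap.toContinuousLinearMap
    ((((Matrix.traceLinearMap n ℂ ℂ).comp (LinearMap.mulRight ℂ C))).restrictScalars ℝ)
  have hL : ∀ M : Matrix n n ℂ, L M = trace (M * C) := fun M => rfl
  have hE := hasDerivAt_exp_affine A B x₀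
  have hD := L.hasFDerivAt.comp_hasDerivAt x₀ hE
  have hG : Continuous fun s : ℝ =>
      exp (s • (A + x₀ • B)) * B * exp ((1 - s) • (A + x₀ • B)) :=
    ((cont_exp_smul _).mul continuous_const).mul (cont_exp_one_sub_smul _)
  have hswap := L.intervalIntegral_comp_comm (hG.intervalIntegrable (μ := MeasureTheory.volume) 0 1)
  simp only [Function.comp_def, hL] at hD hswap
  rw [← hswap] at hD
  exact hD

lemma exp_smul_add_half (t : ℝ) (M : Matrix n n ℂ) :
    exp ((t/2) • M) * exp ((t/2) • M) = exp (t • M) := by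
  rw [← Matrix.exp_add_of_commute _ _ (((Commute.refl M).smul_left _).smul_right _),
    ← add_smul]
  norm_num

lemma exp_smul_mul_exp_one_sub (s : ℝ) (M : Matrix n n ℂ) :
    exp (s • M) * exp ((1 - s) • M) = exp M := by
  rw [← Matrix.exp_add_of_commute _ _ (((Commute.refl M).smul_left _).smul_right _),
    ← add_smul]
  norm_num

lemma exp_one_sub_mul_exp_smul (s : ℝ) (M : Matrix n n ℂ) :
    exp ((1 - s) • M) * exp (s • M) = exp M := by
  rw [← Matrix.exp_add_of_commute _ _ (((Commute.refl M).smul_left _).smul_right _),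
    ← add_smul]
  norm_num

/-- first derivative of the partition function. -/
lemma hasDerivAt_trace_exp_s17 (A B : Matrix n n ℂ) (x₀ : ℝ) :
    HasDerivAt (fun x : ℝ => trace (exp (A + x • B)))
      (trace (exp (A + x₀ • B) * B)) x₀ := by
  have h := hasDerivAt_trace_exp_mul A B 1 x₀
  simp only [Matrix.mul_one] at h
  have hpt : ∀ s : ℝ, trace (exp (s • (A + x₀ • B)) * B * exp ((1 - s) • (A + x₀ • B)))
      = trace (exp (A + x₀ • B) * B) := by
    intro s
    rw [trace_mul_cycle, exp_one_sub_mul_exp_smul]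
  rw [intervalIntegral.integral_congr (g := fun _ : ℝ => trace (exp (A + x₀ • B) * B))
    (fun s _ => hpt s)] at h
  simpa using h


lemma real_smul_matrix (t : ℝ) (M : Matrix n n ℂ) : t • M = (t:ℂ) • M := by
  ext i j; simp [Complex.real_smul]

lemma conjTranspose_real_smul (t : ℝ) (M : Matrix n n ℂ) (hM : Mᴴ = M) :
    (t • M)ᴴ = t • M := by
  rw [real_smul_matrix, conjTranspose_smul, Complex.star_def, Complex.conj_ofReal, hM]

lemma exp_herm (t : ℝ) {M : Matrix n n ℂ} (hM : Mᴴ = M) :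
    (exp (t • M))ᴴ = exp (t • M) := by
  rw [← Matrix.exp_conjTranspose, conjTranspose_real_smul t M hM]

lemma trace_herm_mul_herm_im {W Q : Matrix n n ℂ} (hW : Wᴴ = W) (hQ : Qᴴ = Q) :
    (trace (W * Q)).im = 0 := by
  have : star (trace (W * Q)) = trace (W * Q) := by
    rw [← Matrix.trace_conjTranspose, Matrix.conjTranspose_mul, hW, hQ, trace_mul_comm]
  exact Complex.conj_eq_iff_im.mp this

lemma trace_herm4_im {X Y Q : Matrix n n ℂ} (hX : Xᴴ = X) (hY : Yᴴ = Y) (hQ : Qᴴ = Q) :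
    (trace (X * Q * Y * Q)).im = 0 := by
  have : star (trace (X * Q * Y * Q)) = trace (X * Q * Y * Q) := by
    rw [← Matrix.trace_conjTranspose]
    simp only [Matrix.conjTranspose_mul, hX, hY, hQ]
    rw [show Q * (Y * (Q * X)) = (Q * Y * Q) * X by noncomm_ring,
      trace_mul_comm, ← Matrix.mul_assoc, ← Matrix.mul_assoc]
  exact Complex.conj_eq_iff_im.mp this

lemma trace_conjTranspose_mul_self (M : Matrix n n ℂ) :
    trace (Mᴴ * M) = ((∑ i, ∑ j, Complex.normSq (M j i) : ℝ) : ℂ) := by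
  simp only [Matrix.trace, Matrix.diag, Matrix.mul_apply, Matrix.conjTranspose_apply]
  push_cast
  congr 1; ext i; congr 1; ext j
  rw [Complex.star_def, Complex.normSq_eq_conj_mul_self]

lemma trace_ctms_re_nonneg (M : Matrix n n ℂ) : 0 ≤ (trace (Mᴴ * M)).re := by
  rw [trace_conjTranspose_mul_self]
  simp only [Complex.ofReal_re]
  exact Finset.sum_nonneg fun i _ => Finset.sum_nonneg fun j _ => Complex.normSq_nonneg _

lemma trace_ctms_im (M : Matrix n n ℂ) : (trace (Mᴴ * M)).im = 0 := by
  rw [trace_conjTranspose_mul_self]; simp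

lemma trace_ctms_re_pos {M : Matrix n n ℂ} (hM : M ≠ 0) : 0 < (trace (Mᴴ * M)).re := by
  rw [trace_conjTranspose_mul_self]
  simp only [Complex.ofReal_re]
  obtain ⟨j, i, hij⟩ : ∃ j i, M j i ≠ 0 := by
    by_contra h; push_neg at h; exact hM (by ext a b; simpa using h a b)
  have hpos : 0 < Complex.normSq (M j i) := Complex.normSq_pos.2 hij
  refine Finset.sum_pos' (fun i' _ => Finset.sum_nonneg fun j' _ => Complex.normSq_nonneg _) ?_
  refine ⟨i, Finset.mem_univ i, Finset.sum_pos' (fun j' _ => Complex.normSq_nonneg _) ?_⟩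
  exact ⟨j, Finset.mem_univ j, hpos⟩


lemma exp_herm' {M : Matrix n n ℂ} (hM : Mᴴ = M) : (exp M)ᴴ = exp M := by
  rw [← Matrix.exp_conjTranspose, hM]

lemma trace_herm_im {M : Matrix n n ℂ} (hM : Mᴴ = M) : (trace M).im = 0 := by
  have : star (trace M) = trace M := by rw [← Matrix.trace_conjTranspose, hM]
  exact Complex.conj_eq_iff_im.mp this

lemma trace_exp_herm_re_pos [Nonempty n] {M : Matrix n n ℂ} (hM : Mᴴ = M) :
    0 < (trace (exp M)).re := by
  set N := exp ((1/2 : ℝ) • M) with hN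
  have hNherm : Nᴴ = N := exp_herm _ hM
  have hNN : N * N = exp M := by
    have h := exp_smul_add_half 1 M
    rw [one_smul] at h
    rw [hN]
    convert h using 3 <;> norm_num
  have hNne : N ≠ 0 := (Matrix.isUnit_exp _).ne_zero
  have htr : trace (exp M) = trace (Nᴴ * N) := by rw [hNherm, hNN]
  rw [htr]
  exact trace_ctms_re_pos hNne

lemma kubo_pointwise (A P : Matrix n n ℂ) (a : ℝ) (lam : ℝ) :
    trace (exp ((1-lam) • A) * (P - a • 1) * exp (lam • A) * (P - a • 1))
      = trace (exp ((1-lam) • A) * P * exp (lam • A) * P)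
        - 2 * (a:ℂ) * trace (exp A * P) + (a:ℂ)^2 * trace (exp A) := by
  set X := exp ((1-lam) • A) with hX
  set Y := exp (lam • A) with hY
  have hXY : X * Y = exp A := exp_one_sub_mul_exp_smul lam A
  have hYX : Y * X = exp A := exp_smul_mul_exp_one_sub lam A
  have hsm : (a • (1 : Matrix n n ℂ)) = (a:ℂ) • (1 : Matrix n n ℂ) := real_smul_matrix a 1
  rw [hsm]
  set c : ℂ := (a:ℂ) with hc
  have e0 : X * (P - c • 1) * Y * (P - c • 1)
      = X*P*Y*P - c•(X*P*Y) - c•(X*Y*P) + (c*c)•(X*Y) := by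
    simp only [Matrix.mul_sub, Matrix.sub_mul, mul_smul_comm, smul_mul_assoc,
      Matrix.mul_one, smul_smul, smul_sub]
    abel
  rw [e0]
  simp only [Matrix.trace_add, Matrix.trace_sub, Matrix.trace_smul, smul_eq_mul]
  have h1 : trace (X * P * Y) = trace (exp A * P) := by
    rw [trace_mul_cycle, hYX]
  have h2 : trace (X * Y * P) = trace (exp A * P) := by rw [hXY]
  rw [h1, h2, hXY]
  ring

lemma kubo_nonneg (A Q : Matrix n n ℂ) (hA : Aᴴ = A) (hQ : Qᴴ = Q) (lam : ℝ) :
    0 ≤ (trace (exp ((1-lam) • A) * Q * exp (lam • A) * Q)).re := by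
  set U := exp (((1-lam)/2) • A) with hU
  set V := exp ((lam/2) • A) with hV
  have hUU : U * U = exp ((1-lam) • A) := exp_smul_add_half (1-lam) A
  have hVV : V * V = exp (lam • A) := exp_smul_add_half lam A
  have hUh : Uᴴ = U := exp_herm _ hA
  have hVh : Vᴴ = V := exp_herm _ hA
  have key : trace (exp ((1-lam) • A) * Q * exp (lam • A) * Q)
      = trace ((V * Q * U)ᴴ * (V * Q * U)) := by
    rw [← hUU, ← hVV]
    have hct : (V * Q * U)ᴴ = U * (Q * V) := by
      simp only [Matrix.conjTranspose_mul, hUh, hVh, hQ, Matrix.mul_assoc]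
    rw [hct]
    have e1 : U * U * Q * (V * V) * Q = U * (U * Q * (V * (V * Q))) := by noncomm_ring
    have e2 : U * (Q * V) * (V * Q * U) = U * Q * (V * (V * Q)) * U := by noncomm_ring
    rw [e1, e2, trace_mul_comm]
  rw [key]
  exact trace_ctms_re_nonneg _

theorem second_deriv_log_partition_eq_kubo_duhamel_variance'
    [Nonempty n]
    (S P : Matrix n n ℂ) (hS : Sᴴ = S) (hP : Pᴴ = P)
    (Z : ℝ) (hZ : Z = (trace (exp (-S))).re)
    (avg : ℝ) (havg : avg = (trace (exp (-S) * P)).re / Z)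
    (ΔP : Matrix n n ℂ) (hΔP : ΔP = P - avg • (1 : Matrix n n ℂ))
    (g : ℝ → ℝ) (hg : g = fun x : ℝ => Real.log (trace (exp (-(S + x • P)))).re)
    (K : ℂ) (hK : K = ∫ lam in (0:ℝ)..1,
      trace (exp (-((1 - lam) • S)) * ΔP * exp (-(lam • S)) * ΔP)) :
    (∀ x : ℝ, DifferentiableAt ℝ g x) ∧
    K.im = 0 ∧
    HasDerivAt (deriv g) (Z⁻¹ * K.re) 0 ∧
    0 ≤ Z⁻¹ * K.re := by
  have hAherm : (-S)ᴴ = -S := by rw [conjTranspose_neg, hS]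
  have hBherm : (-P)ᴴ = -P := by rw [conjTranspose_neg, hP]
  set A : Matrix n n ℂ := -S with hA
  set B : Matrix n n ℂ := -P with hB
  have h_eq : ∀ x : ℝ, -(S + x • P) = A + x • B := by
    intro x; rw [neg_add, ← smul_neg, ← hA, ← hB]
  have hH : ∀ x : ℝ, (A + x • B)ᴴ = A + x • B := by
    intro x
    rw [conjTranspose_add, hAherm, conjTranspose_real_smul x B hBherm]
  have hΔPh : ΔPᴴ = ΔP := by
    rw [hΔP, conjTranspose_sub, hP, conjTranspose_real_smul avg 1 conjTranspose_one]
  set f₁ : ℝ → ℝ := fun x => (trace (exp (A + x • B))).re with hf₁def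
  set ψ : ℝ → ℝ := fun x => (trace (exp (A + x • B) * P)).re with hψdef
  have hfpos : ∀ x : ℝ, 0 < f₁ x := fun x => trace_exp_herm_re_pos (hH x)
  have hgf : g = fun x => Real.log (f₁ x) := by
    rw [hg]; funext x; rw [h_eq x]
  -- first derivative of f₁
  have hf₁ : ∀ x : ℝ, HasDerivAt f₁ (-(ψ x)) x := by
    intro x
    have h := hasDerivAt_trace_exp_s17 A B x
    have hre := Complex.reCLM.hasFDerivAt.comp_hasDerivAt x h
    have hval : Complex.reCLM (trace (exp (A + x • B) * B)) = -(ψ x) := by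
      rw [hB, Matrix.mul_neg, Matrix.trace_neg, ← hB]
      simp [hψdef]
    rw [hval] at hre
    exact hre
  have hg' : ∀ x : ℝ, HasDerivAt g ((f₁ x)⁻¹ * -(ψ x)) x := by
    intro x
    rw [hgf]
    exact (Real.hasDerivAt_log (hfpos x).ne').comp x (hf₁ x)
  have part1 : ∀ x : ℝ, DifferentiableAt ℝ g x := fun x => (hg' x).differentiableAt
  have hderiv : deriv g = fun x => (f₁ x)⁻¹ * -(ψ x) := funext fun x => (hg' x).deriv
  have h0AB : A + (0:ℝ) • B = A := by rw [zero_smul, add_zero]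
  have hZ' : f₁ 0 = Z := by rw [hf₁def]; simp only [h0AB]; rw [hZ, hA]
  have hZpos : 0 < Z := hZ' ▸ hfpos 0
  have hψ0 : ψ 0 = avg * Z := by
    have : ψ 0 = (trace (exp A * P)).re := by rw [hψdef]; simp only [h0AB]
    rw [this, havg, hA]
    field_simp
  -- the second-derivative integral Q
  set Q : ℂ := ∫ s in (0:ℝ)..1, trace (exp (s • A) * P * exp ((1-s) • A) * P) with hQdef
  have hQc : Continuous fun s : ℝ => trace (exp (s • A) * P * exp ((1-s) • A) * P) :=
    ((((cont_exp_smul A).mul continuous_const).mul (cont_exp_one_sub_smul A)).mul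
      continuous_const).matrix_trace
  have hψ' : HasDerivAt ψ (-Q.re) 0 := by
    have h := hasDerivAt_trace_exp_mul A B P 0
    simp only [zero_smul, add_zero] at h
    have hptw : ∀ s : ℝ, trace (exp (s • A) * B * exp ((1-s) • A) * P)
        = -trace (exp (s • A) * P * exp ((1-s) • A) * P) := by
      intro s
      rw [hB, Matrix.mul_neg, Matrix.neg_mul, Matrix.neg_mul, Matrix.trace_neg]
    rw [intervalIntegral.integral_congr
      (g := fun s : ℝ => -trace (exp (s • A) * P * exp ((1-s) • A) * P))
      (fun s _ => hptw s), intervalIntegral.integral_neg] at h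
    have hre := Complex.reCLM.hasFDerivAt.comp_hasDerivAt 0 h
    have hval : Complex.reCLM (-Q) = -Q.re := by simp
    rw [hval] at hre
    exact hre
  -- K in terms of Q
  set t0 : ℂ := trace (exp A * P) with ht0def
  set z0 : ℂ := trace (exp A) with hz0def
  have ht0 : t0 = ((avg * Z : ℝ) : ℂ) := by
    apply Complex.ext
    · have : t0.re = ψ 0 := by rw [hψdef]; simp only [h0AB]; rfl
      rw [this, hψ0]; simp
    · rw [ht0def]
      have := trace_herm_mul_herm_im (exp_herm' hAherm) hP
      simpa using this
  have hz0 : z0 = ((Z : ℝ) : ℂ) := by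
    apply Complex.ext
    · rw [hz0def, hZ, hA]; simp; rfl
    · rw [hz0def]
      have := trace_herm_im (exp_herm' hAherm)
      simpa using this
  have hKint : ∀ lam : ℝ, trace (exp (-((1 - lam) • S)) * ΔP * exp (-(lam • S)) * ΔP)
      = trace (exp ((1-lam) • A) * ΔP * exp (lam • A) * ΔP) := by
    intro lam
    rw [hA, smul_neg, smul_neg]
  have hq_eq : ∀ lam : ℝ, trace (exp ((1-lam) • A) * P * exp (lam • A) * P)
      = trace (exp (lam • A) * P * exp ((1-lam) • A) * P) := by
    intro lam
    rw [Matrix.mul_assoc (exp ((1-lam) • A) * P), trace_mul_comm,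
      ← Matrix.mul_assoc]
  have hKQ : K = Q - ((avg^2 * Z : ℝ) : ℂ) := by
    rw [hK]
    rw [intervalIntegral.integral_congr (g := fun lam : ℝ =>
      trace (exp (lam • A) * P * exp ((1-lam) • A) * P)
        - 2 * (avg:ℂ) * t0 + (avg:ℂ)^2 * z0) (fun lam _ => by
      rw [hKint lam, hΔP, kubo_pointwise A P avg lam, hq_eq lam, ht0def, hz0def])]
    rw [intervalIntegral.integral_add (show IntervalIntegrable (fun s : ℝ =>
          trace (exp (s • A) * P * exp ((1-s) • A) * P) - 2 * (avg:ℂ) * t0) _ 0 1 from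
        ((hQc.sub continuous_const).intervalIntegrable
        (μ := MeasureTheory.volume) 0 1))
        (intervalIntegrable_const),
      intervalIntegral.integral_sub (hQc.intervalIntegrable (μ := MeasureTheory.volume) 0 1)
        intervalIntegrable_const]
    simp only [intervalIntegral.integral_const, sub_zero, one_smul, smul_eq_mul]
    rw [← hQdef, ht0, hz0]
    push_cast
    ring
  have hQim : Q.im = 0 := by
    have hswap := Complex.imCLM.intervalIntegral_comp_comm
      (hQc.intervalIntegrable (μ := MeasureTheory.volume) 0 1)
    have hptw : ∀ s : ℝ, Complex.imCLM (trace (exp (s • A) * P * exp ((1-s) • A) * P))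
        = 0 := by
      intro s
      have := trace_herm4_im (exp_herm s hAherm) (exp_herm (1-s) hAherm) hP
      simpa using this
    rw [intervalIntegral.integral_congr (g := fun _ : ℝ => (0:ℝ)) (fun s _ => hptw s)] at hswap
    simp only [intervalIntegral.integral_zero] at hswap
    rw [hQdef]
    exact hswap.symm
  have part2 : K.im = 0 := by
    rw [hKQ, Complex.sub_im, hQim, Complex.ofReal_im, sub_zero]
  have hKre : K.re = Q.re - avg^2 * Z := by
    rw [hKQ, Complex.sub_re, Complex.ofReal_re]
  -- part 3
  have part3 : HasDerivAt (deriv g) (Z⁻¹ * K.re) 0 := by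
    rw [hderiv]
    have hinv := (hf₁ 0).inv (hfpos 0).ne'
    have hmul := hinv.mul hψ'.neg
    simp only [Pi.inv_apply, Pi.neg_apply] at hmul
    refine hmul.congr_deriv ?_
    symm
    rw [hZ', hψ0, hKre]
    have hZne : Z ≠ 0 := hZpos.ne'
    field_simp
    ring
  -- part 4
  have hKre_int : K.re = ∫ lam in (0:ℝ)..1,
      (trace (exp ((1-lam) • A) * ΔP * exp (lam • A) * ΔP)).re := by
    have hc : Continuous fun lam : ℝ =>
        trace (exp ((1-lam) • A) * ΔP * exp (lam • A) * ΔP) :=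
      ((((cont_exp_one_sub_smul A).mul continuous_const).mul (cont_exp_smul A)).mul
        continuous_const).matrix_trace
    have hswap := Complex.reCLM.intervalIntegral_comp_comm
      (hc.intervalIntegrable (μ := MeasureTheory.volume) 0 1)
    rw [hK, intervalIntegral.integral_congr (g := fun lam : ℝ =>
      trace (exp ((1-lam) • A) * ΔP * exp (lam • A) * ΔP)) (fun lam _ => hKint lam)]
    exact hswap.symm
  have part4 : 0 ≤ Z⁻¹ * K.re := by
    apply mul_nonneg (inv_nonneg.2 hZpos.le)
    rw [hKre_int]
    apply intervalIntegral.integral_nonneg (by norm_num)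
    intro lam _
    exact kubo_nonneg A ΔP hAherm hΔPh lam
  exact ⟨part1, part2, part3, part4⟩

end aux

/-- The second derivative of the log-partition function `g x = ln Tr exp (-(S + x • P))`
at `0` equals the (nonnegative) Kubo–Duhamel variance of the fluctuation
`ΔP = P - ⟨P⟩ • 1`. -/
theorem second_deriv_log_partition_eq_kubo_duhamel_variance
    {n : Type*} [Fintype n] [DecidableEq n] [Nonempty n]
    (S P : Matrix n n ℂ) (hS : Sᴴ = S) (hP : Pᴴ = P)
    (Z : ℝ) (hZ : Z = (trace (exp (-S))).re)
    (avg : ℝ) (havg : avg = (trace (exp (-S) * P)).re / Z)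
    (ΔP : Matrix n n ℂ) (hΔP : ΔP = P - avg • (1 : Matrix n n ℂ))
    (g : ℝ → ℝ) (hg : g = fun x : ℝ => Real.log (trace (exp (-(S + x • P)))).re)
    (K : ℂ) (hK : K = ∫ lam in (0:ℝ)..1,
      trace (exp (-((1 - lam) • S)) * ΔP * exp (-(lam • S)) * ΔP)) :
    (∀ x : ℝ, DifferentiableAt ℝ g x) ∧
    K.im = 0 ∧
    HasDerivAt (deriv g) (Z⁻¹ * K.re) 0 ∧
    0 ≤ Z⁻¹ * K.re :=
  second_deriv_log_partition_eq_kubo_duhamel_variance' S P hS hP Z hZ avg havg ΔP hΔP g hg K hK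
end
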